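/- arXiv:2108.00451 — 12 statements merged into one kernel-verified Lean document; each statement's English description precedes it below -/
import Mathlib

section
/- For every β > 1 and every n ≥ 1, the number N_n(β) of words in the language L_n(X_β) of the β-shift satisfies β^n ≤ N_n(β) ≤ (β/(β−1))·β^n. -/
/-- The β-transformation `T_β(x) = βx - ⌊βx⌋`. -/
noncomputable def betaMap (β : ℝ) (x : ℝ) : ℝ := β * x - ⌊β * x⌋

/-- The language `L_n(X_β)` of the β-shift: words arising from β-expansions of reals in `[0,1)`. -/
def betaLang (β : ℝ) (n : ℕ) : Set (Fin n → ℤ) :=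
  {u | ∃ r : ℝ, 0 ≤ r ∧ r < 1 ∧ ∀ i : Fin n, u i = ⌊β * (betaMap β)^[(i : ℕ)] r⌋}

namespace BP

variable {β : ℝ}

lemma bm_eq (x : ℝ) : betaMap β x = Int.fract (β * x) := rfl

lemma bm_mem (x : ℝ) : betaMap β x ∈ Set.Ico (0:ℝ) 1 :=
  ⟨Int.fract_nonneg _, Int.fract_lt_one _⟩

lemma iter_mem {r : ℝ} (hr : r ∈ Set.Ico (0:ℝ) 1) (n : ℕ) :
    (betaMap β)^[n] r ∈ Set.Ico (0:ℝ) 1 := by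
  cases n with
  | zero => exact hr
  | succ m => rw [Function.iterate_succ_apply']; exact bm_mem _

noncomputable def dig (β : ℝ) (i : ℕ) (r : ℝ) : ℤ := ⌊β * (betaMap β)^[i] r⌋

noncomputable def wd (β : ℝ) (n : ℕ) (r : ℝ) : Fin n → ℤ := fun i => dig β (i : ℕ) r

lemma iter_succ' (n : ℕ) (r : ℝ) :
    (betaMap β)^[n+1] r = β * (betaMap β)^[n] r - dig β n r := by
  rw [Function.iterate_succ_apply']; rfl

lemma dig_nonneg (hβ : 1 < β) {r : ℝ} (hr : r ∈ Set.Ico (0:ℝ) 1) (i : ℕ) :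
    0 ≤ dig β i r := by
  have h := (iter_mem (β := β) hr i).1
  exact Int.floor_nonneg.2 (mul_nonneg (by linarith) h)

lemma dig_lt (hβ : 1 < β) {r : ℝ} (hr : r ∈ Set.Ico (0:ℝ) 1) (i : ℕ) :
    (dig β i r : ℝ) < β := by
  have h := (iter_mem (β := β) hr i).2
  calc (dig β i r : ℝ) ≤ β * (betaMap β)^[i] r := Int.floor_le _
    _ < β * 1 := by
        apply mul_lt_mul_of_pos_left h (by linarith)
    _ = β := mul_one β

lemma expand (hβ : 1 < β) (r : ℝ) (n : ℕ) :
    r = (∑ i ∈ Finset.range n, (dig β i r : ℝ)/β^(i+1)) + (betaMap β)^[n] r / β^n := by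
  have hb0 : (0:ℝ) < β := by linarith
  induction n with
  | zero => simp
  | succ m ih =>
    rw [Finset.sum_range_succ, iter_succ']
    have h1 : β ^ (m+1) ≠ 0 := by positivity
    have h2 : β ^ m ≠ 0 := by positivity
    have key : (dig β m r : ℝ)/β^(m+1) + (β * (betaMap β)^[m] r - dig β m r)/β^(m+1)
        = (betaMap β)^[m] r / β^m := by
      rw [← add_div]
      rw [div_eq_div_iff h1 h2]
      ring
    linarith [ih, key]



lemma shift (hβ : 1 < β) {r : ℝ} (hr : r ∈ Set.Ico (0:ℝ) 1) :
    ∀ n : ℕ, ∀ s : ℝ, 0 ≤ s → s ≤ (betaMap β)^[n] r →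
      (∀ i < n, dig β i (r + (s - (betaMap β)^[n] r)/β^n) = dig β i r) ∧
      (betaMap β)^[n] (r + (s - (betaMap β)^[n] r)/β^n) = s := by
  have hb0 : (0:ℝ) < β := by linarith
  intro n
  induction n with
  | zero =>
    intro s hs0 hs
    constructor
    · intro i hi; omega
    · simp
  | succ m ih =>
    intro s hs0 hs
    set T := (betaMap β)^[m] r with hT
    have hd : (betaMap β)^[m+1] r = β * T - dig β m r := iter_succ' m r
    have hd0 : (0:ℤ) ≤ dig β m r := dig_nonneg hβ hr m
    set t : ℝ := (s + dig β m r)/β with ht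
    have ht0 : 0 ≤ t := by
      apply div_nonneg _ (le_of_lt hb0)
      have : (0:ℝ) ≤ (dig β m r : ℝ) := by exact_mod_cast hd0
      linarith
    have htT : t ≤ T := by
      rw [ht, div_le_iff₀ hb0]
      rw [hd] at hs
      linarith
    obtain ⟨hdig, hiter⟩ := ih t ht0 htT
    have hrw : r + (t - T)/β^m = r + (s - (betaMap β)^[m+1] r)/β^(m+1) := by
      rw [hd, ht]
      have h1 : (β:ℝ)^m ≠ 0 := by positivity
      have h2 : (β:ℝ)^(m+1) ≠ 0 := by positivity
      field_simp
      ring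
    set r' := r + (s - (betaMap β)^[m+1] r)/β^(m+1) with hr'
    rw [hrw] at hdig hiter
    have hs1 : s < 1 := by
      have := (iter_mem (β := β) hr (m+1)).2
      linarith
    have hbt : β * t = s + (dig β m r : ℝ) := by
      rw [ht]; field_simp
    have hdm : dig β m r' = dig β m r := by
      unfold dig
      rw [hiter, hbt]
      rw [Int.floor_add_intCast]
      have h0 : ⌊s⌋ = 0 := Int.floor_eq_zero_iff.2 ⟨hs0, hs1⟩
      rw [h0, zero_add]
      rfl
    constructor
    · intro i hi
      rcases Nat.lt_succ_iff_lt_or_eq.1 hi with h | h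
      · exact hdig i h
      · subst h; exact hdm
    · rw [iter_succ' m r', hiter, hdm, hbt]
      push_cast
      ring


lemma mem_lang_iff {n : ℕ} {u : Fin n → ℤ} :
    u ∈ betaLang β n ↔ ∃ r ∈ Set.Ico (0:ℝ) 1, u = wd β n r := by
  constructor
  · rintro ⟨r, h0, h1, h⟩
    exact ⟨r, ⟨h0, h1⟩, funext fun i => h i⟩
  · rintro ⟨r, ⟨h0, h1⟩, h⟩
    exact ⟨r, h0, h1, fun i => by rw [h]; rfl⟩

lemma wd_mem {n : ℕ} {r : ℝ} (hr : r ∈ Set.Ico (0:ℝ) 1) : wd β n r ∈ betaLang β n :=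
  mem_lang_iff.2 ⟨r, hr, rfl⟩

lemma lang_finite (hβ : 1 < β) (n : ℕ) : (betaLang β n).Finite := by
  apply Set.Finite.subset (Set.Finite.pi (fun _ : Fin n => Set.finite_Icc (0:ℤ) ⌈β⌉))
  rintro u hu
  obtain ⟨r, hr, rfl⟩ := mem_lang_iff.1 hu
  intro i _
  refine ⟨dig_nonneg hβ hr i, ?_⟩
  have := dig_lt hβ hr (i : ℕ)
  have : (dig β (i:ℕ) r : ℝ) < (⌈β⌉ : ℝ) := lt_of_lt_of_le this (Int.le_ceil β)
  exact le_of_lt (by exact_mod_cast this)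

noncomputable def langFinite (hβ : 1 < β) (n : ℕ) : Fintype (betaLang β n) :=
  (lang_finite hβ n).fintype

/-- value of a word -/
noncomputable def vl (β : ℝ) {n : ℕ} (u : Fin n → ℤ) : ℝ :=
  ∑ i : Fin n, (u i : ℝ)/β^((i:ℕ)+1)

lemma vl_wd (hβ : 1 < β) (n : ℕ) (r : ℝ) :
    vl β (wd β n r) = r - (betaMap β)^[n] r / β^n := by
  have := expand hβ r n
  rw [vl]
  simp only [wd]
  rw [Fin.sum_univ_eq_sum_range (fun i => (dig β i r : ℝ)/β^(i+1))]
  linarith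

lemma vl_nonneg (hβ : 1 < β) {n : ℕ} {r : ℝ} (hr : r ∈ Set.Ico (0:ℝ) 1) :
    0 ≤ vl β (wd β n r) := by
  apply Finset.sum_nonneg
  intro i _
  apply div_nonneg _ (by positivity)
  exact_mod_cast dig_nonneg hβ hr i

lemma close (hβ : 1 < β) {n : ℕ} {r r' : ℝ} (hr : r ∈ Set.Ico (0:ℝ) 1)
    (hr' : r' ∈ Set.Ico (0:ℝ) 1) (h : wd β n r = wd β n r') :
    |r - r'| < 1/β^n := by
  have h1 := vl_wd hβ n r
  have h2 := vl_wd hβ n r'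
  rw [h] at h1
  have hIr := iter_mem (β := β) hr n
  have hIr' := iter_mem (β := β) hr' n
  have hbp : (0:ℝ) < β^n := by positivity
  rw [abs_lt]
  have hd : r - r' = ((betaMap β)^[n] r - (betaMap β)^[n] r') / β^n := by
    field_simp at h1 h2 ⊢
    linarith
  rw [hd]
  have e1 : -(1/β^n) = (-1)/β^n := by ring
  constructor
  · rw [e1, div_lt_div_iff₀ hbp hbp]
    have := hIr.1; have := hIr'.2; nlinarith
  · rw [div_lt_div_iff₀ hbp hbp]
    have := hIr.2; have := hIr'.1; nlinarith

lemma lower (hβ : 1 < β) (n : ℕ) : β ^ n ≤ (Nat.card (betaLang β n) : ℝ) := by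
  have hbp : (0:ℝ) < β^n := by positivity
  haveI : Finite (betaLang β n) := (lang_finite hβ n).to_subtype
  set K : ℕ := (⌈β ^ n⌉).toNat with hK
  have hKc : (K : ℝ) = (⌈β ^ n⌉ : ℝ) := by
    rw [hK]; exact_mod_cast Int.toNat_of_nonneg (Int.ceil_nonneg (le_of_lt hbp))
  have hmem : ∀ k : Fin K, ((k : ℝ)/β^n) ∈ Set.Ico (0:ℝ) 1 := by
    intro k
    constructor
    · positivity
    · rw [div_lt_one hbp]
      have hk : (k : ℝ) ≤ (K : ℝ) - 1 := by
        have := k.2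
        have : ((k:ℕ) : ℝ) + 1 ≤ (K : ℝ) := by exact_mod_cast Nat.succ_le_of_lt this
        linarith
      have : ((⌈β ^ n⌉ : ℝ)) - 1 < β ^ n := by
        have := Int.ceil_lt_add_one (β ^ n); linarith
      rw [hKc] at hk; linarith
  set f : Fin K → betaLang β n := fun k => ⟨wd β n ((k:ℝ)/β^n), wd_mem (hmem k)⟩ with hf
  have hinj : Function.Injective f := by
    intro k k' h
    have hw : wd β n ((k:ℝ)/β^n) = wd β n ((k':ℝ)/β^n) := congrArg Subtype.val h
    have := close hβ (hmem k) (hmem k') hw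
    have hlt : |((k:ℝ) - k')| < 1 := by
      have heq : (k:ℝ)/β^n - (k':ℝ)/β^n = ((k:ℝ) - k')/β^n := by ring
      rw [heq, abs_div, abs_of_pos hbp, div_lt_div_iff₀ hbp hbp, one_mul] at this
      calc |((k:ℝ) - k')| = |((k:ℝ) - k')| := rfl
        _ < 1 := by nlinarith [abs_nonneg ((k:ℝ) - k')]
    rcases abs_lt.1 hlt with ⟨ha, hb⟩
    have h1 : ((k:ℕ):ℝ) < ((k':ℕ):ℝ) + 1 := by linarith
    have h2 : ((k':ℕ):ℝ) < ((k:ℕ):ℝ) + 1 := by linarith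
    have h1' : (k:ℕ) < (k':ℕ) + 1 := by exact_mod_cast h1
    have h2' : (k':ℕ) < (k:ℕ) + 1 := by exact_mod_cast h2
    exact Fin.ext (by omega)
  have hfin : Nat.card (Fin K) = K := by simp
  have hcard : K ≤ Nat.card (betaLang β n) := by
    rw [← hfin]
    exact Nat.card_le_card_of_injective f hinj
  calc β ^ n ≤ (⌈β ^ n⌉ : ℝ) := Int.le_ceil _
    _ = (K : ℝ) := hKc.symm
    _ ≤ _ := by exact_mod_cast hcard


lemma upper_step (hβ : 1 < β) (n : ℕ) :
    Nat.card (betaLang β (n+1)) ≤ Nat.card (betaLang β n) + ((⌈β^(n+1)⌉).toNat - 1) := by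
  have hb0 : (0:ℝ) < β := by linarith
  have hbp : (0:ℝ) < β^n := by positivity
  have hbp1 : (0:ℝ) < β^(n+1) := by positivity
  haveI : Finite (betaLang β n) := (lang_finite hβ n).to_subtype
  haveI : Finite (betaLang β (n+1)) := (lang_finite hβ (n+1)).to_subtype
  set L : ℕ := (⌈β^(n+1)⌉).toNat - 1 with hL
  -- choose witnesses
  have hch : ∀ w : betaLang β (n+1), ∃ r, r ∈ Set.Ico (0:ℝ) 1 ∧ (w : Fin (n+1) → ℤ) = wd β (n+1) r :=
    fun w => by
      obtain ⟨r, hr, h⟩ := mem_lang_iff.1 w.2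
      exact ⟨r, hr, h⟩
  choose rw_ hrmem hrwd using hch
  -- digit data
  set A : betaLang β (n+1) → ℤ := fun w => dig β n (rw_ w) with hA
  have hA0 : ∀ w, 0 ≤ A w := fun w => dig_nonneg hβ (hrmem w) n
  have hAle : ∀ w, (A w : ℝ) ≤ β * (betaMap β)^[n] (rw_ w) := fun w => Int.floor_le _
  -- the word w decomposes as (prefix, last digit)
  have hw_eq : ∀ w : betaLang β (n+1), ∀ i : Fin (n+1),
      (w : Fin (n+1) → ℤ) i = dig β (i : ℕ) (rw_ w) := by
    intro w i; rw [hrwd w]; rfl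
  have hdet : ∀ w₁ w₂ : betaLang β (n+1), wd β n (rw_ w₁) = wd β n (rw_ w₂) →
      A w₁ = A w₂ → w₁ = w₂ := by
    intro w₁ w₂ hpre ha
    apply Subtype.ext
    funext i
    rw [hw_eq w₁ i, hw_eq w₂ i]
    rcases Nat.lt_succ_iff_lt_or_eq.1 i.2 with h | h
    · exact congrFun hpre ⟨i, h⟩
    · simp only [h]; exact ha
  -- the special point for words with positive last digit
  set p : betaLang β (n+1) → ℝ := fun w => vl β (wd β n (rw_ w)) + (A w : ℝ)/β^(n+1) with hp
  -- shift facts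
  have hshift : ∀ w : betaLang β (n+1), ∀ s : ℝ, 0 ≤ s → s ≤ (A w : ℝ)/β →
      wd β n (vl β (wd β n (rw_ w)) + s/β^n) = wd β n (rw_ w) ∧
      (betaMap β)^[n] (vl β (wd β n (rw_ w)) + s/β^n) = s := by
    intro w s hs0 hs
    have hsT : s ≤ (betaMap β)^[n] (rw_ w) := by
      have := hAle w
      have h2 : (A w : ℝ)/β ≤ (betaMap β)^[n] (rw_ w) := by
        rw [div_le_iff₀ hb0]; linarith
      linarith
    obtain ⟨h1, h2⟩ := shift hβ (hrmem w) n s hs0 hsT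
    have hpt : rw_ w + (s - (betaMap β)^[n] (rw_ w))/β^n
        = vl β (wd β n (rw_ w)) + s/β^n := by
      rw [vl_wd hβ n (rw_ w)]; ring
    rw [hpt] at h1 h2
    refine ⟨funext fun i => ?_, h2⟩
    exact h1 i i.2
  -- p expressed via witness
  have hp_alt : ∀ w, p w = vl β (wd β n (rw_ w)) + ((A w : ℝ)/β)/β^n := by
    intro w
    rw [hp]
    dsimp only
    rw [div_div, ← pow_succ']
  -- p is in [1/β^(n+1), 1) when A w ≥ 1
  have hp_lb : ∀ w, 1 ≤ A w → 1/β^(n+1) ≤ p w := by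
    intro w haw
    have h1 : (1:ℝ) ≤ (A w : ℝ) := by exact_mod_cast haw
    have h2 := vl_nonneg hβ (n := n) (hrmem w)
    have h3 : 1/β^(n+1) ≤ (A w : ℝ)/β^(n+1) := by gcongr
    rw [hp]; dsimp only; linarith
  have hAdivβ : ∀ w, (A w : ℝ)/β ≤ (betaMap β)^[n] (rw_ w) := by
    intro w
    rw [div_le_iff₀ hb0]
    linarith [hAle w]
  have hp_ub : ∀ w, p w < 1 := by
    intro w
    have heq : p w = rw_ w + ((A w:ℝ)/β - (betaMap β)^[n] (rw_ w))/β^n := by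
      rw [hp_alt w, vl_wd hβ n (rw_ w)]; ring
    rw [heq]
    have h2 : ((A w:ℝ)/β - (betaMap β)^[n] (rw_ w))/β^n ≤ 0 :=
      div_nonpos_iff.2 (Or.inr ⟨by linarith [hAdivβ w], le_of_lt hbp⟩)
    linarith [(hrmem w).2]
  -- the word of p itself
  have hwd_p : ∀ w, 0 ≤ A w → wd β n (p w) = wd β n (rw_ w) := by
    intro w haw
    have h0 : (0:ℝ) ≤ (A w : ℝ)/β := by positivity
    obtain ⟨h1, _⟩ := hshift w ((A w : ℝ)/β) h0 (le_refl _)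
    rw [← hp_alt w] at h1
    exact h1
  -- separation
  have main : ∀ w₁ w₂ : betaLang β (n+1), 1 ≤ A w₁ → 1 ≤ A w₂ → w₁ ≠ w₂ →
      p w₁ ≤ p w₂ → 1/β^(n+1) ≤ p w₂ - p w₁ := by
    intro w₁ w₂ ha1 ha2 hne hle
    by_cases hpre : wd β n (rw_ w₁) = wd β n (rw_ w₂)
    · -- same prefix, different last digit
      have hAne : A w₁ ≠ A w₂ := fun h => hne (hdet w₁ w₂ hpre h)
      have hvleq : vl β (wd β n (rw_ w₁)) = vl β (wd β n (rw_ w₂)) := by rw [hpre]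
      have hd : p w₂ - p w₁ = ((A w₂ : ℝ) - (A w₁ : ℝ))/β^(n+1) := by
        rw [hp]; dsimp only; rw [hvleq]; ring
      have hAle' : A w₁ ≤ A w₂ := by
        by_contra hcon
        push_neg at hcon
        have : ((A w₂ : ℝ) - (A w₁ : ℝ)) < 0 := by
          have : (A w₂ : ℝ) < (A w₁ : ℝ) := by exact_mod_cast hcon
          linarith
        have : p w₂ - p w₁ < 0 := by
          rw [hd]; exact div_neg_of_neg_of_pos this hbp1
        linarith
      have hge1 : (1:ℝ) ≤ (A w₂ : ℝ) - (A w₁ : ℝ) := by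
        have hz : A w₁ + 1 ≤ A w₂ := by omega
        have : (A w₁ : ℝ) + 1 ≤ (A w₂ : ℝ) := by exact_mod_cast hz
        linarith
      rw [hd]
      gcongr
    · -- different prefixes
      by_contra hcon
      push_neg at hcon
      set δ := p w₂ - p w₁ with hδ
      have hδ0 : 0 ≤ δ := by linarith
      have hδlt : δ < 1/β^(n+1) := by linarith
      set s' := (A w₂ : ℝ)/β - δ * β^n with hs'
      have hs'0 : 0 ≤ s' := by
        have h1 : δ * β^n < (1/β^(n+1)) * β^n := by
          rcases eq_or_lt_of_le hδ0 with h | h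
          · rw [← h]; simp; positivity
          · exact mul_lt_mul_of_pos_right hδlt hbp
        have h2 : (1/β^(n+1)) * β^n = 1/β := by
          rw [pow_succ]; field_simp
        have h3 : (1:ℝ)/β ≤ (A w₂ : ℝ)/β := by
          gcongr
          exact_mod_cast ha2
        rw [hs']; linarith
      have hs'le : s' ≤ (A w₂ : ℝ)/β := by
        rw [hs']
        have : 0 ≤ δ * β^n := mul_nonneg hδ0 (le_of_lt hbp)
        linarith
      obtain ⟨hword, _⟩ := hshift w₂ s' hs'0 hs'le
      have hpt : vl β (wd β n (rw_ w₂)) + s'/β^n = p w₁ := by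
        have hβn : (β:ℝ)^n ≠ 0 := ne_of_gt hbp
        have h' : vl β (wd β n (rw_ w₂)) + s'/β^n = p w₂ - δ := by
          rw [hp_alt w₂, hs']
          field_simp
          ring
        rw [h', hδ]
        ring
      rw [hpt] at hword
      have h1 := hwd_p w₁ (by omega)
      rw [h1] at hword
      exact hpre hword
  have hsep : ∀ w₁ w₂ : betaLang β (n+1), 1 ≤ A w₁ → 1 ≤ A w₂ → w₁ ≠ w₂ →
      ⌊p w₁ * β^(n+1)⌋ ≠ ⌊p w₂ * β^(n+1)⌋ := by
    intro w₁ w₂ ha1 ha2 hne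
    rcases le_total (p w₁) (p w₂) with h | h
    · have := main w₁ w₂ ha1 ha2 hne h
      have hx : p w₁ * β^(n+1) + 1 ≤ p w₂ * β^(n+1) := by
        have h2 : (1/β^(n+1)) * β^(n+1) = 1 := by field_simp
        have h3 := mul_le_mul_of_nonneg_right this (le_of_lt hbp1)
        rw [h2] at h3
        have h4 : (p w₂ - p w₁)*β^(n+1) = p w₂ * β^(n+1) - p w₁ * β^(n+1) := by ring
        linarith
      have : ⌊p w₁ * β^(n+1)⌋ + 1 ≤ ⌊p w₂ * β^(n+1)⌋ := by
        have := Int.floor_le_floor hx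
        rw [Int.floor_add_one] at this
        omega
      omega
    · have := main w₂ w₁ ha2 ha1 (Ne.symm hne) h
      have hx : p w₂ * β^(n+1) + 1 ≤ p w₁ * β^(n+1) := by
        have h2 : (1/β^(n+1)) * β^(n+1) = 1 := by field_simp
        have h3 := mul_le_mul_of_nonneg_right this (le_of_lt hbp1)
        rw [h2] at h3
        have h4 : (p w₁ - p w₂)*β^(n+1) = p w₁ * β^(n+1) - p w₂ * β^(n+1) := by ring
        linarith
      have : ⌊p w₂ * β^(n+1)⌋ + 1 ≤ ⌊p w₁ * β^(n+1)⌋ := by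
        have := Int.floor_le_floor hx
        rw [Int.floor_add_one] at this
        omega
      omega
  -- floor bounds
  have hceil2 : (2:ℤ) ≤ ⌈β^(n+1)⌉ := by
    have h1 : (1:ℝ) < β^(n+1) := by
      have e : β^(n+1) = β^n*β := pow_succ β n
      have h1 : (1:ℝ) ≤ β^n := one_le_pow₀ (le_of_lt hβ)
      nlinarith
    have := Int.lt_ceil.2 (show ((1:ℤ):ℝ) < β^(n+1) by exact_mod_cast h1)
    omega
  have hfloor_bds : ∀ w, 1 ≤ A w →
      1 ≤ ⌊p w * β^(n+1)⌋ ∧ ⌊p w * β^(n+1)⌋ < ⌈β^(n+1)⌉ := by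
    intro w haw
    constructor
    · apply Int.le_floor.2
      push_cast
      have := hp_lb w haw
      calc (1:ℝ) = (1/β^(n+1)) * β^(n+1) := by field_simp
        _ ≤ p w * β^(n+1) := by gcongr
    · apply Int.floor_lt.2
      calc p w * β^(n+1) < 1 * β^(n+1) := by
            exact mul_lt_mul_of_pos_right (hp_ub w) hbp1
        _ = β^(n+1) := one_mul _
        _ ≤ (⌈β^(n+1)⌉ : ℝ) := Int.le_ceil _
  -- the injection
  set F : betaLang β (n+1) → (betaLang β n) ⊕ (Fin L) := fun w =>
    if h : A w ≤ 0 then Sum.inl ⟨wd β n (rw_ w), wd_mem (hrmem w)⟩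
    else Sum.inr ⟨(⌊p w * β^(n+1)⌋ - 1).toNat, by
      have haw : 1 ≤ A w := by omega
      obtain ⟨hl, hu⟩ := hfloor_bds w haw
      rw [hL]
      omega⟩ with hF
  have hFinj : Function.Injective F := by
    intro w₁ w₂ heq
    by_cases h1 : A w₁ ≤ 0 <;> by_cases h2 : A w₂ ≤ 0
    · rw [hF] at heq
      simp only [dif_pos h1, dif_pos h2, Sum.inl.injEq, Subtype.mk.injEq] at heq
      apply hdet w₁ w₂ heq
      have := hA0 w₁; have := hA0 w₂; omega
    · rw [hF] at heq; simp only [dif_pos h1, dif_neg h2] at heq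
      exact (Sum.inl_ne_inr heq).elim
    · rw [hF] at heq; simp only [dif_neg h1, dif_pos h2] at heq
      exact (Sum.inr_ne_inl heq).elim
    · rw [hF] at heq
      simp only [dif_neg h1, dif_neg h2, Sum.inr.injEq, Fin.mk.injEq] at heq
      by_contra hne
      have ha1 : 1 ≤ A w₁ := by omega
      have ha2 : 1 ≤ A w₂ := by omega
      have hfl := hsep w₁ w₂ ha1 ha2 hne
      obtain ⟨hl1, _⟩ := hfloor_bds w₁ ha1
      obtain ⟨hl2, _⟩ := hfloor_bds w₂ ha2
      omega
  -- conclude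
  haveI : Finite ((betaLang β n) ⊕ (Fin L)) := by infer_instance
  have := Nat.card_le_card_of_injective F hFinj
  rw [Nat.card_sum] at this
  simpa using this

lemma card_zero (hβ : 1 < β) : Nat.card (betaLang β 0) = 1 := by
  haveI : Subsingleton (betaLang β 0) :=
    ⟨fun a b => Subtype.ext (funext fun i => i.elim0)⟩
  haveI : Nonempty (betaLang β 0) :=
    ⟨⟨fun i => i.elim0, ⟨0, le_refl 0, by norm_num, fun i => i.elim0⟩⟩⟩
  exact Nat.card_eq_one_iff_unique.2 ⟨inferInstance, inferInstance⟩

lemma upper (hβ : 1 < β) (n : ℕ) :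
    (Nat.card (betaLang β n) : ℝ) ≤ (β^(n+1) - 1)/(β - 1) := by
  have hb1 : (0:ℝ) < β - 1 := by linarith
  induction n with
  | zero =>
    rw [card_zero hβ]
    rw [le_div_iff₀ hb1]
    norm_num
  | succ m ih =>
    have hstep := upper_step hβ m
    have hceil2 : (2:ℤ) ≤ ⌈β^(m+1)⌉ := by
      have h1 : (1:ℝ) < β^(m+1) := by
        have e : β^(m+1) = β^m*β := pow_succ β m
        have h1 : (1:ℝ) ≤ β^m := one_le_pow₀ (le_of_lt hβ)
        nlinarith
      have := Int.lt_ceil.2 (show ((1:ℤ):ℝ) < β^(m+1) by exact_mod_cast h1)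
      omega
    have hcast : ((⌈β^(m+1)⌉.toNat - 1 : ℕ) : ℝ) ≤ β^(m+1) := by
      have h1 : ((⌈β^(m+1)⌉.toNat - 1 : ℕ) : ℤ) = ⌈β^(m+1)⌉ - 1 := by omega
      have h2 : ((⌈β^(m+1)⌉ : ℝ)) - 1 ≤ β^(m+1) := by
        have := Int.ceil_lt_add_one (β^(m+1))
        linarith
      calc ((⌈β^(m+1)⌉.toNat - 1 : ℕ) : ℝ) = ((⌈β^(m+1)⌉ : ℝ)) - 1 := by
            exact_mod_cast congrArg (Int.cast : ℤ → ℝ) h1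
        _ ≤ β^(m+1) := h2
    have hstep' : (Nat.card (betaLang β (m+1)) : ℝ)
        ≤ (Nat.card (betaLang β m) : ℝ) + ((⌈β^(m+1)⌉.toNat - 1 : ℕ) : ℝ) := by
      exact_mod_cast hstep
    have : (Nat.card (betaLang β (m+1)) : ℝ) ≤ (β^(m+1) - 1)/(β - 1) + β^(m+1) := by
      linarith
    calc (Nat.card (betaLang β (m+1)) : ℝ) ≤ (β^(m+1) - 1)/(β - 1) + β^(m+1) := this
      _ = (β^(m+1) - 1 + β^(m+1)*(β-1))/(β - 1) := by field_simp
      _ = (β^(m+1+1) - 1)/(β - 1) := by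
          rw [pow_succ β (m+1)]; ring_nf
end BP

/-- the number of words of length `n` in the β-shift language satisfies
`β^n ≤ N_n(β) ≤ (β/(β-1))·β^n`. -/
theorem stmt_1 (β : ℝ) (hβ : 1 < β) (n : ℕ) (hn : 1 ≤ n) :
    β ^ n ≤ (Nat.card (betaLang β n) : ℝ) ∧
    (Nat.card (betaLang β n) : ℝ) ≤ (β / (β - 1)) * β ^ n := by
  have hb1 : (0:ℝ) < β - 1 := by linarith
  refine ⟨BP.lower hβ n, ?_⟩
  have h1 := BP.upper hβ n
  have h2 : (β^(n+1) - 1)/(β - 1) ≤ β^(n+1)/(β - 1) := by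
    gcongr <;> linarith
  have h3 : β^(n+1)/(β - 1) = (β / (β - 1)) * β ^ n := by
    rw [pow_succ]
    field_simp
  linarith
end

section
/- For every β > 1 and every n ≥ 1 there exists δ > 0 such that for every β' ∈ [β, β + δ) one has ⌊β' · T_{β'}^{j−1}(1)⌋ = ⌊β · T_β^{j−1}(1)⌋ for all j = 1, …, n; that is, the first n letters of the maximal word w^β of the β-shift are locally constant from the right as a function of β. -/
lemma betaMap_eq_fract (β x : ℝ) : betaMap β x = Int.fract (β * x) := rfl

lemma iter_mem (β : ℝ) (m : ℕ) :
    0 ≤ (betaMap β)^[m] (1 : ℝ) ∧ (betaMap β)^[m] (1 : ℝ) ≤ 1 := by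
  induction m with
  | zero => simp
  | succ k ih =>
    rw [Function.iterate_succ_apply', betaMap_eq_fract]
    exact ⟨Int.fract_nonneg _, (Int.fract_lt_one _).le⟩

lemma floor_sandwich (a b : ℝ) (h1 : a ≤ b) (h2 : b < (⌊a⌋ : ℝ) + 1) : ⌊b⌋ = ⌊a⌋ := by
  rw [Int.floor_eq_iff]
  exact ⟨le_trans (Int.floor_le a) h1, h2⟩

lemma arith_step (B δ e T β β' Bk : ℝ) (hB : 2 ≤ B) (hδ : 0 ≤ δ)
    (hβ'B : β' ≤ B) (hd : β' - β ≤ δ)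
    (hT0 : 0 ≤ T) (hT1 : T ≤ 1) (he0 : 0 ≤ e) (he1 : e ≤ δ * (Bk - 1))
    (hBk : 1 ≤ Bk) :
    β' * e + (β' - β) * T ≤ δ * (B * Bk - 1) := by
  nlinarith [mul_le_mul hβ'B he1 he0 (by linarith : (0:ℝ) ≤ B),
    mul_le_mul hd hT1 hT0 hδ, mul_nonneg hδ (by linarith : (0:ℝ) ≤ Bk - 1)]

/-- the first `n` letters of the maximal word `w^β_j = ⌊β·T_β^{j-1}(1)⌋`
of the β-shift are locally constant from the right as a function of `β`. -/
theorem stmt_2 (β : ℝ) (hβ : 1 < β) (n : ℕ) (hn : 1 ≤ n) :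
    ∃ δ : ℝ, 0 < δ ∧ ∀ β' : ℝ, β ≤ β' → β' < β + δ →
      ∀ j : ℕ, 1 ≤ j → j ≤ n →
        ⌊β' * (betaMap β')^[j - 1] (1 : ℝ)⌋ = ⌊β * (betaMap β)^[j - 1] (1 : ℝ)⌋ := by
  set B : ℝ := β + 1 with hBdef
  have hB2 : (2 : ℝ) ≤ B := by linarith
  have hB0 : (0 : ℝ) < B := by linarith
  have hBn0 : (0 : ℝ) < B ^ n := pow_pos hB0 n
  have hne : (Finset.range n).Nonempty := Finset.nonempty_range_iff.mpr (by omega)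
  set ε : ℝ := Finset.inf' (Finset.range n) hne
      (fun m => (⌊β * (betaMap β)^[m] (1 : ℝ)⌋ : ℝ) + 1 - β * (betaMap β)^[m] (1 : ℝ))
    with hεdef
  have hεpos : 0 < ε := by
    rw [hεdef, Finset.lt_inf'_iff]
    intro m _
    have := Int.lt_floor_add_one (β * (betaMap β)^[m] (1 : ℝ))
    linarith
  have hεle : ∀ m, m < n →
      ε ≤ (⌊β * (betaMap β)^[m] (1 : ℝ)⌋ : ℝ) + 1 - β * (betaMap β)^[m] (1 : ℝ) := by
    intro m hm
    exact Finset.inf'_le _ (Finset.mem_range.mpr hm)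
  refine ⟨min 1 (ε / (2 * B ^ n)), lt_min one_pos (by positivity), ?_⟩
  set δ : ℝ := min 1 (ε / (2 * B ^ n)) with hδdef
  have hδpos : 0 < δ := lt_min one_pos (by positivity)
  have hδ1 : δ ≤ 1 := min_le_left _ _
  have hδε : δ * B ^ n ≤ ε / 2 := by
    calc δ * B ^ n ≤ ε / (2 * B ^ n) * B ^ n :=
          mul_le_mul_of_nonneg_right (min_le_right _ _) hBn0.le
      _ = ε / 2 := by field_simp
  intro β' hb hb'
  have hβ'B : β' ≤ B := by linarith
  have hβ'0 : (0 : ℝ) ≤ β' := by linarith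
  have hd : β' - β ≤ δ := by linarith
  -- main induction
  have main : ∀ m, m < n →
      (0 ≤ (betaMap β')^[m] (1 : ℝ) - (betaMap β)^[m] (1 : ℝ) ∧
        (betaMap β')^[m] (1 : ℝ) - (betaMap β)^[m] (1 : ℝ) ≤ δ * (B ^ m - 1)) ∧
      ⌊β' * (betaMap β')^[m] (1 : ℝ)⌋ = ⌊β * (betaMap β)^[m] (1 : ℝ)⌋ := by
    have key : ∀ m, m < n →
        (0 ≤ (betaMap β')^[m] (1 : ℝ) - (betaMap β)^[m] (1 : ℝ) ∧
          (betaMap β')^[m] (1 : ℝ) - (betaMap β)^[m] (1 : ℝ) ≤ δ * (B ^ m - 1)) →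
        ⌊β' * (betaMap β')^[m] (1 : ℝ)⌋ = ⌊β * (betaMap β)^[m] (1 : ℝ)⌋ := by
      intro m hm ⟨he0, he1⟩
      set Tm := (betaMap β)^[m] (1 : ℝ) with hTmdef
      set Tm' := (betaMap β')^[m] (1 : ℝ) with hTm'def
      have hTm := iter_mem β m
      rw [← hTmdef] at hTm
      have hlow : β * Tm ≤ β' * Tm' :=
        calc β * Tm ≤ β' * Tm := mul_le_mul_of_nonneg_right hb hTm.1
          _ ≤ β' * Tm' := mul_le_mul_of_nonneg_left (by linarith) hβ'0
      have hBk : (1 : ℝ) ≤ B ^ m := one_le_pow₀ (by linarith : (1:ℝ) ≤ B)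
      have hup : β' * Tm' - β * Tm ≤ δ * (B * B ^ m - 1) := by
        have h1 : β' * Tm' - β * Tm = β' * (Tm' - Tm) + (β' - β) * Tm := by ring
        rw [h1]
        exact arith_step B δ (Tm' - Tm) Tm β β' (B ^ m) hB2 hδpos.le hβ'B hd
          hTm.1 hTm.2 he0 he1 hBk
      have hpow : B * B ^ m ≤ B ^ n := by
        rw [← pow_succ']
        exact pow_le_pow_right₀ (by linarith) (by omega)
      have hfin : β' * Tm' < (⌊β * Tm⌋ : ℝ) + 1 := by
        have h6 := hεle m hm
        rw [← hTmdef] at h6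
        have h5 : δ * (B * B ^ m - 1) ≤ δ * B ^ n :=
          mul_le_mul_of_nonneg_left (by linarith) hδpos.le
        linarith [hδε, hεpos]
      exact floor_sandwich _ _ hlow hfin
    intro m
    induction m with
    | zero =>
      intro h0
      have hE : (0:ℝ) ≤ (betaMap β')^[0] (1 : ℝ) - (betaMap β)^[0] (1 : ℝ) ∧
          (betaMap β')^[0] (1 : ℝ) - (betaMap β)^[0] (1 : ℝ) ≤ δ * (B ^ 0 - 1) := by
        simp
      exact ⟨hE, key 0 h0 hE⟩
    | succ k ih =>
      intro hk1
      have hk : k < n := by omega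
      obtain ⟨⟨he0, he1⟩, hF⟩ := ih hk
      set Tm := (betaMap β)^[k] (1 : ℝ) with hTmdef
      set Tm' := (betaMap β')^[k] (1 : ℝ) with hTm'def
      have hTm := iter_mem β k
      rw [← hTmdef] at hTm
      have hBk : (1 : ℝ) ≤ B ^ k := one_le_pow₀ (by linarith : (1:ℝ) ≤ B)
      have hnext : (betaMap β')^[k+1] (1 : ℝ) - (betaMap β)^[k+1] (1 : ℝ)
          = β' * Tm' - β * Tm := by
        rw [Function.iterate_succ_apply', Function.iterate_succ_apply']
        show (β' * Tm' - (⌊β' * Tm'⌋ : ℝ)) - (β * Tm - (⌊β * Tm⌋ : ℝ)) = _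
        rw [hF]; ring
      have hE : 0 ≤ (betaMap β')^[k+1] (1 : ℝ) - (betaMap β)^[k+1] (1 : ℝ) ∧
          (betaMap β')^[k+1] (1 : ℝ) - (betaMap β)^[k+1] (1 : ℝ) ≤ δ * (B ^ (k+1) - 1) := by
        rw [hnext]
        constructor
        · have hlow : β * Tm ≤ β' * Tm' :=
            calc β * Tm ≤ β' * Tm := mul_le_mul_of_nonneg_right hb hTm.1
              _ ≤ β' * Tm' := mul_le_mul_of_nonneg_left (by linarith) hβ'0
          linarith
        · have h1 : β' * Tm' - β * Tm = β' * (Tm' - Tm) + (β' - β) * Tm := by ring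
          rw [h1, pow_succ, mul_comm (B ^ k) B]
          exact arith_step B δ (Tm' - Tm) Tm β β' (B ^ k) hB2 hδpos.le hβ'B hd
            hTm.1 hTm.2 he0 he1 hBk
      exact ⟨hE, key (k+1) hk1 hE⟩
  intro j hj1 hjn
  have : j - 1 < n := by omega
  exact (main (j - 1) this).2
end

section
/- Fix γ ∈ ℝ. A word (y_0, …, y_{n−1}) ∈ ℤ^n occurs as a factor of y^γ (i.e., there exists k ∈ ℤ with y_i = (y^γ)_{k+i} for i = 0, …, n−1) if and only if it is a Sturmian word of slope γ, i.e., there exists a ∈ [0,1) such that y_i = ⌊(i+1)γ + a⌋ − ⌊iγ + a⌋ for i = 0, …, n−1. Moreover, in that case the weight y_0 + … + y_{n−1} equals either ⌊nγ⌋ or ⌈nγ⌉. -/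
/-- The bi-infinite Sturmian sequence of slope `γ`: `(y^γ)_i = ⌊(i+1)γ⌋ - ⌊iγ⌋`. -/
noncomputable def sturmSeq (γ : ℝ) : ℤ → ℤ := fun i => ⌊((i : ℝ) + 1) * γ⌋ - ⌊(i : ℝ) * γ⌋

/-- A finite word is a Sturmian word of slope `γ` if it is given by
`y_i = ⌊(i+1)γ + a⌋ - ⌊iγ + a⌋` for some intercept `a ∈ [0,1)`. -/
def IsSturmianWord (γ : ℝ) {n : ℕ} (y : Fin n → ℤ) : Prop :=
  ∃ a : ℝ, 0 ≤ a ∧ a < 1 ∧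
    ∀ i : Fin n, y i = ⌊((i : ℕ) + 1 : ℝ) * γ + a⌋ - ⌊((i : ℕ) : ℝ) * γ + a⌋

lemma key_fract (γ : ℝ) (k : ℤ) (m : ℕ) :
    ⌊(m : ℝ) * γ + Int.fract ((k : ℝ) * γ)⌋ = ⌊((k : ℝ) + m) * γ⌋ - ⌊(k : ℝ) * γ⌋ := by
  have h : ((k : ℝ) + m) * γ = ((m : ℝ) * γ + Int.fract ((k : ℝ) * γ)) + (⌊(k : ℝ) * γ⌋ : ℤ) := by
    rw [Int.fract]; ring
  rw [h, Int.floor_add_intCast]; ring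

/-- a word occurs as a factor of `y^γ` iff it is a Sturmian word of slope `γ`;
and in that case its weight equals `⌊nγ⌋` or `⌈nγ⌉`. -/
theorem stmt_4 (γ : ℝ) (n : ℕ) (y : Fin n → ℤ) :
    ((∃ k : ℤ, ∀ i : Fin n, y i = sturmSeq γ (k + (i : ℕ))) ↔ IsSturmianWord γ y) ∧
    (IsSturmianWord γ y →
      (∑ i, y i = ⌊(n : ℝ) * γ⌋ ∨ ∑ i, y i = ⌈(n : ℝ) * γ⌉)) := by
  constructor
  · constructor
    · rintro ⟨k, hk⟩
      refine ⟨Int.fract ((k : ℝ) * γ), Int.fract_nonneg _, Int.fract_lt_one _, ?_⟩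
      intro i
      have h1 := key_fract γ k (i + 1)
      have h2 := key_fract γ k (i : ℕ)
      have hy := hk i
      unfold sturmSeq at hy
      push_cast at h1 h2 hy ⊢
      rw [hy]
      have e1 : ((k : ℝ) + ((i : ℕ) : ℝ) + 1) * γ = ((k : ℝ) + (((i : ℕ) : ℝ) + 1)) * γ := by ring
      rw [e1]
      omega
    · rintro ⟨a, ha0, ha1, hy⟩
      obtain ⟨i₀, hi₀mem, hmax⟩ := Finset.exists_max_image (Finset.range (n + 1))
        (fun m : ℕ => (⌊(m : ℝ) * γ + a⌋ : ℝ) - (m : ℝ) * γ) ⟨0, by simp⟩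
      set L : ℝ := (⌊(i₀ : ℝ) * γ + a⌋ : ℝ) - (i₀ : ℝ) * γ with hL
      have hLa : L ≤ a := by
        have := Int.floor_le ((i₀ : ℝ) * γ + a)
        simp only [hL]; linarith
      have key : ∀ m : ℕ, m ≤ n → ⌊(m : ℝ) * γ + L⌋ = ⌊(m : ℝ) * γ + a⌋ := by
        intro m hm
        have hle := hmax m (Finset.mem_range.mpr (by omega))
        have h1 : (⌊(m : ℝ) * γ + a⌋ : ℝ) ≤ (m : ℝ) * γ + L := by linarith
        have h2 : (m : ℝ) * γ + L < (⌊(m : ℝ) * γ + a⌋ : ℝ) + 1 := by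
          have := Int.lt_floor_add_one ((m : ℝ) * γ + a)
          linarith
        exact Int.floor_eq_iff.mpr ⟨h1, h2⟩
      refine ⟨-(i₀ : ℤ), ?_⟩
      intro i
      have key2 : ∀ m : ℕ, m ≤ n →
          ⌊((-(i₀ : ℤ) : ℝ) + m) * γ⌋ = ⌊(m : ℝ) * γ + a⌋ - ⌊(i₀ : ℝ) * γ + a⌋ := by
        intro m hm
        have harg : ((-(i₀ : ℤ) : ℝ) + m) * γ = ((m : ℝ) * γ + L) + (-⌊(i₀ : ℝ) * γ + a⌋ : ℤ) := by
          simp only [hL]; push_cast; ring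
        rw [harg, Int.floor_add_intCast, key m hm]; ring
      have h1 := key2 (i + 1) (by omega)
      have h2 := key2 (i : ℕ) (by omega)
      have hy := hy i
      unfold sturmSeq
      push_cast at h1 h2 hy ⊢
      rw [hy]
      have e1 : ((-(i₀ : ℝ)) + ((i : ℕ) : ℝ) + 1) * γ = ((-(i₀ : ℝ)) + (((i : ℕ) : ℝ) + 1)) * γ := by
        ring
      rw [e1]
      omega
  · rintro ⟨a, ha0, ha1, hy⟩
    have ha : ⌊a⌋ = 0 := Int.floor_eq_zero_iff.mpr ⟨ha0, ha1⟩
    set f : ℕ → ℤ := fun m => ⌊(m : ℝ) * γ + a⌋ with hf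
    have htel : ∑ i, y i = ⌊(n : ℝ) * γ + a⌋ := by
      have step : ∀ i : Fin n, y i = f ((i : ℕ) + 1) - f (i : ℕ) := by
        intro i
        rw [hy i]
        simp only [hf]
        push_cast
        ring_nf
      calc ∑ i, y i = ∑ i : Fin n, (f ((i : ℕ) + 1) - f (i : ℕ)) :=
              Finset.sum_congr rfl (fun i _ => step i)
        _ = ∑ m ∈ Finset.range n, (f (m + 1) - f m) :=
              Fin.sum_univ_eq_sum_range (fun m => f (m + 1) - f m) n
        _ = f n - f 0 := Finset.sum_range_sub f n
        _ = ⌊(n : ℝ) * γ + a⌋ := by simp [hf, ha]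
    rw [htel]
    have hlow : ⌊(n : ℝ) * γ⌋ ≤ ⌊(n : ℝ) * γ + a⌋ := Int.floor_le_floor (by linarith)
    rcases eq_or_lt_of_le hlow with h | h
    · left; omega
    · right
      have hub : ⌊(n : ℝ) * γ + a⌋ < ⌈(n : ℝ) * γ⌉ + 1 := by
        rw [Int.floor_lt]
        have := Int.le_ceil ((n : ℝ) * γ)
        push_cast
        linarith
      have hcf : ⌈(n : ℝ) * γ⌉ ≤ ⌊(n : ℝ) * γ⌋ + 1 := Int.ceil_le_floor_add_one _
      omega
end

section
/- Fix γ ∈ ℝ. A sequence y = (y_i)_{i∈ℤ} ∈ ℤ^ℤ belongs to Y_γ if and only if either (a) there exists a ∈ [0,1) such that y_i = ⌊γ(i+1) + a⌋ − ⌊γ i + a⌋ for every i ∈ ℤ, or (b) there exists a ∈ (0,1] such that y_i = ⌈γ(i+1) + a⌉ − ⌈γ i + a⌉ for every i ∈ ℤ. -/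
/-- The Sturmian system `Y_γ`: the closure (product topology, `ℤ` discrete) of the
shift-orbit of `y^γ`. -/
noncomputable def sturmSystem (γ : ℝ) : Set (ℤ → ℤ) :=
  closure {z : ℤ → ℤ | ∃ n : ℤ, z = fun i => sturmSeq γ (i + n)}

open Filter Topology Set


namespace SturmAux

noncomputable def flSeq (γ a : ℝ) : ℤ → ℤ := fun i => ⌊γ * ((i:ℝ)+1) + a⌋ - ⌊γ * (i:ℝ) + a⌋
noncomputable def ceSeq (γ a : ℝ) : ℤ → ℤ := fun i => ⌈γ * ((i:ℝ)+1) + a⌉ - ⌈γ * (i:ℝ) + a⌉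

lemma floor_eq_of_le_of_lt {x y : ℝ} (h1 : x ≤ y) (h2 : y < ⌊x⌋ + 1) : ⌊y⌋ = ⌊x⌋ :=
  Int.floor_eq_iff.mpr ⟨le_trans (Int.floor_le x) h1, h2⟩

lemma ceil_eq_of_lt_of_le {x y : ℝ} (h1 : y ≤ x) (h2 : (⌈x⌉:ℝ) - 1 < y) : ⌈y⌉ = ⌈x⌉ :=
  Int.ceil_eq_iff.mpr ⟨h2, le_trans h1 (Int.le_ceil x)⟩

lemma ceil_eq_floor_add_one {x : ℝ} (hx : ∀ m : ℤ, x ≠ (m:ℝ)) : ⌈x⌉ = ⌊x⌋ + 1 := by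
  have h1 : (⌊x⌋:ℝ) < x := lt_of_le_of_ne (Int.floor_le x) fun h => hx ⌊x⌋ h.symm
  refine Int.ceil_eq_iff.mpr ⟨by push_cast; linarith, ?_⟩
  push_cast
  linarith [Int.lt_floor_add_one x]

lemma eventually_floor_eq {a : ℝ} {b : ℕ → ℝ} (hb : Tendsto b atTop (𝓝 a))
    (hge : ∀ k, a ≤ b k) (x : ℝ) : ∀ᶠ k in atTop, ⌊x + b k⌋ = ⌊x + a⌋ := by
  have hδ : x + a < ⌊x + a⌋ + 1 := Int.lt_floor_add_one _
  have h2 : ∀ᶠ k in atTop, b k < (⌊x + a⌋:ℝ) + 1 - x :=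
    hb.eventually (eventually_lt_nhds (by linarith))
  filter_upwards [h2] with k hk
  exact floor_eq_of_le_of_lt (by linarith [hge k]) (by push_cast; linarith)

lemma eventually_ceil_eq {a : ℝ} {b : ℕ → ℝ} (hb : Tendsto b atTop (𝓝 a))
    (hle : ∀ k, b k ≤ a) (x : ℝ) : ∀ᶠ k in atTop, ⌈x + b k⌉ = ⌈x + a⌉ := by
  have hδ : (⌈x + a⌉:ℝ) < x + a + 1 := Int.ceil_lt_add_one _
  have h2 : ∀ᶠ k in atTop, (⌈x + a⌉:ℝ) - 1 - x < b k :=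
    hb.eventually (eventually_gt_nhds (by linarith))
  filter_upwards [h2] with k hk
  exact ceil_eq_of_lt_of_le (by linarith [hle k]) (by linarith)

lemma tendsto_seq_iff {w : ℕ → ℤ → ℤ} {z : ℤ → ℤ} :
    Tendsto w atTop (𝓝 z) ↔ ∀ i, ∀ᶠ k in atTop, w k i = z i := by
  rw [tendsto_pi_nhds]
  refine forall_congr' fun i => ?_
  rw [nhds_discrete, tendsto_pure]

lemma shift_eq (γ : ℝ) (n : ℤ) :
    (fun i => sturmSeq γ (i + n)) = flSeq γ (Int.fract ((n:ℝ) * γ)) := by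
  have key : ∀ x : ℝ, ⌊(x + (n:ℝ)) * γ⌋ = ⌊γ * x + Int.fract ((n:ℝ) * γ)⌋ + ⌊(n:ℝ) * γ⌋ := by
    intro x
    have h2 : (⌊(n:ℝ)*γ⌋:ℝ) + Int.fract ((n:ℝ)*γ) = (n:ℝ)*γ := Int.floor_add_fract _
    have : (x + (n:ℝ)) * γ = (γ * x + Int.fract ((n:ℝ) * γ)) + (⌊(n:ℝ)*γ⌋ : ℤ) := by
      linear_combination -h2
    rw [this, Int.floor_add_intCast]
  funext i
  simp only [sturmSeq, flSeq]
  have e1 : ((i + n : ℤ):ℝ) + 1 = ((i:ℝ) + 1) + (n:ℝ) := by push_cast; ring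
  have e2 : ((i + n : ℤ):ℝ) = (i:ℝ) + (n:ℝ) := by push_cast; ring
  rw [e1, e2, key, key]
  ring

end SturmAux

namespace SturmAux

/-- The subgroup `ℤ + ℤγ` of `ℝ`. -/
def grp (γ : ℝ) : AddSubgroup ℝ where
  carrier := {x | ∃ m n : ℤ, x = (m:ℝ) + (n:ℝ) * γ}
  zero_mem' := ⟨0, 0, by simp⟩
  add_mem' := by
    rintro x y ⟨m, n, rfl⟩ ⟨m', n', rfl⟩
    exact ⟨m + m', n + n', by push_cast; ring⟩
  neg_mem' := by
    rintro x ⟨m, n, rfl⟩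
    exact ⟨-m, -n, by push_cast; ring⟩

lemma grp_dense {γ : ℝ} (hγ : Irrational γ) : Dense (grp γ : Set ℝ) := by
  rcases AddSubgroup.dense_or_cyclic (grp γ) with h | ⟨a, ha⟩
  · exact h
  · exfalso
    have h1 : (1:ℝ) ∈ grp γ := ⟨1, 0, by simp⟩
    have h2 : γ ∈ grp γ := ⟨0, 1, by simp⟩
    rw [ha, AddSubgroup.mem_closure_singleton] at h1 h2
    obtain ⟨m, hm⟩ := h1
    obtain ⟨k, hk⟩ := h2
    rw [zsmul_eq_mul] at hm hk
    have hm0 : (m:ℝ) ≠ 0 := by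
      intro h
      rw [h, zero_mul] at hm
      exact one_ne_zero hm.symm
    have : γ = (((k:ℚ) / (m:ℚ) : ℚ) : ℝ) := by
      push_cast
      rw [← hk]
      field_simp
      linear_combination (k:ℝ) * hm
    exact Rat.not_irrational _ (this ▸ hγ)

lemma exists_fract_mem {γ : ℝ} (hγ : Irrational γ) {l u : ℝ} (h0 : 0 ≤ l) (hlu : l < u)
    (h1 : u ≤ 1) : ∃ n : ℤ, l < Int.fract ((n:ℝ) * γ) ∧ Int.fract ((n:ℝ) * γ) < u := by
  obtain ⟨x, hxg, hx⟩ := (grp_dense hγ).exists_mem_open isOpen_Ioo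
    (Set.nonempty_Ioo.mpr hlu)
  obtain ⟨m, n, rfl⟩ := hxg
  have hfr : Int.fract ((n:ℝ) * γ) = (m:ℝ) + (n:ℝ) * γ := by
    rw [← Int.fract_intCast_add m ((n:ℝ) * γ)]
    exact Int.fract_eq_self.mpr ⟨le_trans h0 hx.1.le, lt_of_lt_of_le hx.2 h1⟩
  exact ⟨n, by rw [hfr]; exact hx.1, by rw [hfr]; exact hx.2⟩

end SturmAux

namespace SturmAux

lemma fract_le_of_int {q : ℤ} (hq : 0 < q) {x : ℝ} (hx : ∃ m : ℤ, (q:ℝ) * x = (m:ℝ)) :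
    (q:ℝ) * Int.fract x ≤ (q:ℝ) - 1 := by
  obtain ⟨m, hm⟩ := hx
  have hqR : (0:ℝ) < q := by exact_mod_cast hq
  have h1 : (q:ℝ) * Int.fract x = ((m - q * ⌊x⌋ : ℤ) : ℝ) := by
    push_cast
    rw [Int.fract]
    linarith [hm]
  have h2 : ((m - q * ⌊x⌋ : ℤ) : ℝ) < (q:ℝ) := by
    rw [← h1]
    have := Int.fract_lt_one x
    nlinarith [Int.fract_lt_one x]
  have h3 : (m - q * ⌊x⌋ : ℤ) < q := by exact_mod_cast h2
  have h4 : (m - q * ⌊x⌋ : ℤ) ≤ q - 1 := by omega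
  rw [h1]
  exact_mod_cast h4

lemma fract_ge_of_int {q : ℤ} (hq : 0 < q) {x : ℝ} (hx : ∃ m : ℤ, (q:ℝ) * x = (m:ℝ))
    (hni : ∀ m : ℤ, x ≠ (m:ℝ)) : 1 ≤ (q:ℝ) * Int.fract x := by
  obtain ⟨m, hm⟩ := hx
  have hqR : (0:ℝ) < q := by exact_mod_cast hq
  have h1 : (q:ℝ) * Int.fract x = ((m - q * ⌊x⌋ : ℤ) : ℝ) := by
    push_cast
    rw [Int.fract]
    linarith [hm]
  have hfr : 0 < Int.fract x := by
    rcases lt_or_eq_of_le (Int.fract_nonneg x) with h | h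
    · exact h
    · exfalso
      have : x = ((⌊x⌋ : ℤ) : ℝ) := by
        rw [Int.fract] at h ; linarith
      exact hni ⌊x⌋ this
  have h2 : (0:ℝ) < ((m - q * ⌊x⌋ : ℤ) : ℝ) := by rw [← h1]; positivity
  have h3 : (0:ℤ) < m - q * ⌊x⌋ := by exact_mod_cast h2
  have h4 : (1:ℤ) ≤ m - q * ⌊x⌋ := h3
  rw [h1]
  exact_mod_cast h4

lemma rat_floor_const {q : ℤ} (hq : 0 < q) {x t : ℝ} (hx : ∃ m : ℤ, (q:ℝ) * x = (m:ℝ))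
    (ht0 : 0 ≤ t) (ht1 : t * (q:ℝ) < 1) : ⌊x + t⌋ = ⌊x⌋ := by
  have hqR : (0:ℝ) < q := by exact_mod_cast hq
  have hle := fract_le_of_int hq hx
  refine floor_eq_of_le_of_lt (by linarith) ?_
  have hxf : x = (⌊x⌋:ℝ) + Int.fract x := by rw [Int.fract]; ring
  have : (q:ℝ) * (Int.fract x + t) < (q:ℝ) := by nlinarith
  have h5 : Int.fract x + t < 1 := by nlinarith
  push_cast
  linarith [hxf]

lemma rat_ceil_const {q : ℤ} (hq : 0 < q) {x t : ℝ} (hx : ∃ m : ℤ, (q:ℝ) * x = (m:ℝ))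
    (ht0 : 0 ≤ t) (ht1 : t * (q:ℝ) < 1) : ⌈x - t⌉ = ⌈x⌉ := by
  have hqR : (0:ℝ) < q := by exact_mod_cast hq
  obtain ⟨m, hm⟩ := hx
  -- s = ⌈x⌉ - x ∈ [0,1), q * s ∈ ℤ, so q * s ≤ q - 1
  have hs0 : 0 ≤ (⌈x⌉:ℝ) - x := by linarith [Int.le_ceil x]
  have hs1 : (⌈x⌉:ℝ) - x < 1 := by linarith [Int.ceil_lt_add_one x]
  have h1 : (q:ℝ) * ((⌈x⌉:ℝ) - x) = ((q * ⌈x⌉ - m : ℤ) : ℝ) := by push_cast; linarith [hm]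
  have h2 : ((q * ⌈x⌉ - m : ℤ) : ℝ) < (q:ℝ) := by rw [← h1]; nlinarith
  have h3 : (q * ⌈x⌉ - m : ℤ) ≤ q - 1 := by
    have : (q * ⌈x⌉ - m : ℤ) < q := by exact_mod_cast h2
    omega
  have h4 : (q:ℝ) * ((⌈x⌉:ℝ) - x) ≤ (q:ℝ) - 1 := by
    rw [h1]; exact_mod_cast h3
  refine ceil_eq_of_lt_of_le (by linarith) ?_
  nlinarith

lemma rat_ceil_eq_floor {q : ℤ} (hq : 0 < q) {x : ℝ} (hx : ∃ m : ℤ, (q:ℝ) * x = (m:ℝ)) :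
    (⌈x⌉ : ℤ) = ⌊x + ((q:ℝ) - 1)/(q:ℝ)⌋ := by
  have hqR : (0:ℝ) < q := by exact_mod_cast hq
  have hq1 : (1:ℝ) ≤ (q:ℝ) := by exact_mod_cast hq
  by_cases hint : ∃ m : ℤ, x = (m:ℝ)
  · obtain ⟨m, rfl⟩ := hint
    rw [Int.ceil_intCast]
    symm
    rw [Int.floor_eq_iff]
    constructor
    · push_cast
      have : 0 ≤ ((q:ℝ) - 1)/(q:ℝ) := div_nonneg (by linarith) hqR.le
      linarith
    · push_cast
      have : ((q:ℝ) - 1)/(q:ℝ) < 1 := by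
        rw [div_lt_one hqR]; linarith
      linarith
  · push_neg at hint
    rw [ceil_eq_floor_add_one hint]
    symm
    rw [Int.floor_eq_iff]
    have hge := fract_ge_of_int hq hx hint
    have hle := fract_le_of_int hq hx
    have hxf : x = (⌊x⌋:ℝ) + Int.fract x := by rw [Int.fract]; ring
    constructor
    · push_cast
      have : 1/(q:ℝ) ≤ Int.fract x := by
        rw [div_le_iff₀ hqR]; linarith
      have h2 : ((q:ℝ) - 1)/(q:ℝ) = 1 - 1/(q:ℝ) := by field_simp
      rw [h2]
      linarith
    · push_cast
      have : ((q:ℝ) - 1)/(q:ℝ) < 1 := by rw [div_lt_one hqR]; linarith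
      linarith [Int.fract_lt_one x]

lemma exists_fract_eq {p q : ℤ} (hq : 0 < q) (hco : IsCoprime p q) {k : ℤ} (hk0 : 0 ≤ k)
    (hkq : k < q) : ∃ n : ℤ, Int.fract ((n:ℝ) * ((p:ℝ)/(q:ℝ))) = (k:ℝ)/(q:ℝ) := by
  obtain ⟨u, v, huv⟩ := hco
  have hqR : (0:ℝ) < q := by exact_mod_cast hq
  refine ⟨k * u, ?_⟩
  have huvR : (u:ℝ) * (p:ℝ) + (v:ℝ) * (q:ℝ) = 1 := by exact_mod_cast huv
  have key : ((k * u : ℤ):ℝ) * ((p:ℝ)/(q:ℝ)) = ((-(k * v) : ℤ):ℝ) + (k:ℝ)/(q:ℝ) := by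
    field_simp
    push_cast
    linear_combination (k:ℝ) * huvR
  rw [key, Int.fract_intCast_add, Int.fract_eq_self.mpr ⟨by positivity, ?_⟩]
  rw [div_lt_one hqR]
  exact_mod_cast hkq

end SturmAux

namespace SturmAux

lemma rat_floor_mem {γ : ℝ} {p q : ℤ} (hq : 0 < q) (hco : IsCoprime p q)
    (hγ : γ = (p:ℝ)/(q:ℝ)) {a : ℝ} (h0 : 0 ≤ a) (h1 : a < 1) :
    ∃ n : ℤ, ∀ i : ℤ, ⌊γ * (i:ℝ) + a⌋ = ⌊γ * (i:ℝ) + Int.fract ((n:ℝ) * γ)⌋ := by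
  have hqR : (0:ℝ) < q := by exact_mod_cast hq
  set k : ℤ := ⌊(q:ℝ) * a⌋ with hk
  have hfl := Int.floor_le ((q:ℝ) * a)
  have hfl2 := Int.lt_floor_add_one ((q:ℝ) * a)
  have hk0 : 0 ≤ k := Int.floor_nonneg.mpr (by positivity)
  have hkq : k < q := by
    have hkR : (k:ℝ) < (q:ℝ) := by nlinarith
    exact_mod_cast hkR
  obtain ⟨n, hn⟩ := exists_fract_eq hq hco hk0 hkq
  refine ⟨n, fun i => ?_⟩
  rw [hγ, hn]
  have hx : ∃ m : ℤ, (q:ℝ) * ((p:ℝ)/(q:ℝ) * (i:ℝ) + (k:ℝ)/(q:ℝ)) = (m:ℝ) :=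
    ⟨p * i + k, by push_cast; field_simp⟩
  have ht0 : 0 ≤ a - (k:ℝ)/(q:ℝ) := by
    rw [sub_nonneg, div_le_iff₀ hqR]
    linarith
  have ht1 : (a - (k:ℝ)/(q:ℝ)) * (q:ℝ) < 1 := by
    have hd : ((k:ℝ)/(q:ℝ)) * (q:ℝ) = (k:ℝ) := by field_simp
    nlinarith
  have hres := rat_floor_const hq hx ht0 ht1
  have harg : (p:ℝ)/(q:ℝ) * (i:ℝ) + (k:ℝ)/(q:ℝ) + (a - (k:ℝ)/(q:ℝ))
      = (p:ℝ)/(q:ℝ) * (i:ℝ) + a := by ring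
  rw [harg] at hres
  exact hres

lemma rat_ceil_mem {γ : ℝ} {p q : ℤ} (hq : 0 < q) (hco : IsCoprime p q)
    (hγ : γ = (p:ℝ)/(q:ℝ)) {a : ℝ} (h0 : 0 < a) (h1 : a ≤ 1) :
    ∃ n : ℤ, ∀ i : ℤ, ⌈γ * (i:ℝ) + a⌉ = ⌊γ * (i:ℝ) + Int.fract ((n:ℝ) * γ)⌋ + 1 := by
  have hqR : (0:ℝ) < q := by exact_mod_cast hq
  set k : ℤ := ⌈(q:ℝ) * a⌉ with hk
  have hcl := Int.le_ceil ((q:ℝ) * a)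
  have hcl2 := Int.ceil_lt_add_one ((q:ℝ) * a)
  have hk1 : 1 ≤ k := by
    have : (0:ℝ) < (q:ℝ) * a := by positivity
    exact Int.ceil_pos.mpr this
  have hkq : k ≤ q := by
    have : (q:ℝ) * a ≤ ((q:ℤ):ℝ) := by push_cast; nlinarith
    exact Int.ceil_le.mpr this
  obtain ⟨n, hn⟩ := exists_fract_eq hq hco (by omega : (0:ℤ) ≤ k - 1) (by omega : k - 1 < q)
  refine ⟨n, fun i => ?_⟩
  rw [hγ, hn]
  have hx : ∃ m : ℤ, (q:ℝ) * ((p:ℝ)/(q:ℝ) * (i:ℝ) + (k:ℝ)/(q:ℝ)) = (m:ℝ) :=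
    ⟨p * i + k, by push_cast; field_simp⟩
  have ht0 : 0 ≤ (k:ℝ)/(q:ℝ) - a := by
    rw [sub_nonneg, le_div_iff₀ hqR]
    linarith
  have ht1 : ((k:ℝ)/(q:ℝ) - a) * (q:ℝ) < 1 := by
    have hd : ((k:ℝ)/(q:ℝ)) * (q:ℝ) = (k:ℝ) := by field_simp
    nlinarith
  have hres := rat_ceil_const hq hx ht0 ht1
  have harg : (p:ℝ)/(q:ℝ) * (i:ℝ) + (k:ℝ)/(q:ℝ) - ((k:ℝ)/(q:ℝ) - a)
      = (p:ℝ)/(q:ℝ) * (i:ℝ) + a := by ring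
  rw [harg] at hres
  rw [hres, rat_ceil_eq_floor hq hx]
  have harg2 : (p:ℝ)/(q:ℝ) * (i:ℝ) + (k:ℝ)/(q:ℝ) + ((q:ℝ) - 1)/(q:ℝ)
      = ((p:ℝ)/(q:ℝ) * (i:ℝ) + ((k - 1 : ℤ):ℝ)/(q:ℝ)) + 1 := by
    push_cast
    field_simp
    ring
  rw [harg2, Int.floor_add_one]

end SturmAux

namespace SturmAux

lemma level_finite {a : ℝ} {c : ℕ → ℝ} (hc : Tendsto c atTop (𝓝 a)) {v : ℝ} (hv : v ≠ a) :
    {k | c k = v}.Finite := by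
  by_contra hinf
  rw [← Set.not_infinite, not_not] at hinf
  obtain ⟨ρ, hρ, hval⟩ := Filter.extraction_of_frequently_atTop
    (Nat.frequently_atTop_iff_infinite.mpr hinf)
  have t1 : Tendsto (c ∘ ρ) atTop (𝓝 a) := hc.comp hρ.tendsto_atTop
  have t2 : Tendsto (c ∘ ρ) atTop (𝓝 v) := by
    have : (c ∘ ρ) = fun _ => v := funext hval
    rw [this]; exact tendsto_const_nhds
  exact hv (tendsto_nhds_unique t2 t1)

lemma bad_finite {a : ℝ} {c : ℕ → ℝ} (hc : Tendsto c atTop (𝓝 a)) (hlt : ∀ k, c k < a)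
    (hmem : ∀ k, 0 ≤ c k ∧ c k < 1) (x : ℝ) :
    {k | ∃ m : ℤ, x + c k = (m:ℝ)}.Finite := by
  rcases Set.eq_empty_or_nonempty {k | ∃ m : ℤ, x + c k = (m:ℝ)} with h | ⟨k0, m0, hm0⟩
  · rw [h]; exact Set.finite_empty
  · refine Set.Finite.subset (level_finite hc (ne_of_lt (hlt k0))) ?_
    rintro k ⟨m, hm⟩
    have hd : c k - c k0 = ((m - m0 : ℤ):ℝ) := by push_cast; linarith
    have hb1 := (hmem k).1; have hb2 := (hmem k).2
    have hb3 := (hmem k0).1; have hb4 := (hmem k0).2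
    have h1 : ((m - m0 : ℤ):ℝ) < 1 := by rw [← hd]; linarith
    have h2 : (-1:ℝ) < ((m - m0 : ℤ):ℝ) := by rw [← hd]; linarith
    have : m - m0 = 0 := by
      have h1' : (m - m0 : ℤ) < 1 := by exact_mod_cast h1
      have h2' : (-1:ℤ) < (m - m0 : ℤ) := by exact_mod_cast h2
      omega
    have : c k = c k0 := by
      have : ((m - m0 : ℤ):ℝ) = 0 := by rw [this]; simp
      linarith [hd, this]
    exact this

lemma eventually_not_bad {a : ℝ} {c : ℕ → ℝ} (hc : Tendsto c atTop (𝓝 a)) (hlt : ∀ k, c k < a)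
    (hmem : ∀ k, 0 ≤ c k ∧ c k < 1) (x : ℝ) :
    ∀ᶠ k in atTop, ∀ m : ℤ, x + c k ≠ (m:ℝ) := by
  have := (bad_finite hc hlt hmem x).eventually_cofinite_notMem
  rw [Nat.cofinite_eq_atTop] at this
  filter_upwards [this] with k hk m hm
  exact hk ⟨m, hm⟩

lemma mem_sturm_of_floor {γ : ℝ} {y : ℤ → ℤ} {a : ℝ} (h0 : 0 ≤ a) (h1 : a < 1)
    (hy : ∀ i : ℤ, y i = ⌊γ * ((i : ℝ) + 1) + a⌋ - ⌊γ * (i : ℝ) + a⌋) :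
    y ∈ sturmSystem γ := by
  have hyf : y = flSeq γ a := funext fun i => hy i
  by_cases hirr : Irrational γ
  · -- choose b k = fract (n k * γ) in (a, min (a + 1/(k+1)) 1)
    have hsel : ∀ k : ℕ, ∃ n : ℤ, a < Int.fract ((n:ℝ) * γ) ∧
        Int.fract ((n:ℝ) * γ) < a + 1/((k:ℝ)+1) := by
      intro k
      have hpos : (0:ℝ) < 1/((k:ℝ)+1) := by positivity
      obtain ⟨n, hn1, hn2⟩ := exists_fract_mem hirr (l := a) (u := min (a + 1/((k:ℝ)+1)) 1)
        h0 (lt_min (by linarith) h1) (min_le_right _ _)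
      exact ⟨n, hn1, lt_of_lt_of_le hn2 (min_le_left _ _)⟩
    choose nn hbl hbu using hsel
    set b : ℕ → ℝ := fun k => Int.fract ((nn k : ℝ) * γ) with hb
    have hbt : Tendsto b atTop (𝓝 a) := by
      have hup : Tendsto (fun k : ℕ => a + 1/((k:ℝ)+1)) atTop (𝓝 a) := by
        have := tendsto_one_div_add_atTop_nhds_zero_nat (𝕜 := ℝ)
        simpa using tendsto_const_nhds.add this
      exact tendsto_of_tendsto_of_tendsto_of_le_of_le tendsto_const_nhds hup
        (fun k => (hbl k).le) (fun k => (hbu k).le)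
    rw [hyf]
    refine mem_closure_of_tendsto (f := fun k => flSeq γ (b k)) (b := atTop) ?_ ?_
    · rw [tendsto_seq_iff]
      intro i
      have e1 := eventually_floor_eq hbt (fun k => (hbl k).le) (γ * ((i:ℝ) + 1))
      have e2 := eventually_floor_eq hbt (fun k => (hbl k).le) (γ * (i:ℝ))
      filter_upwards [e1, e2] with k h1 h2
      simp only [flSeq, h1, h2]
    · filter_upwards with k
      exact ⟨nn k, (shift_eq γ (nn k)).symm⟩
  · -- rational case
    obtain ⟨r, hr⟩ := not_not.mp (fun h => hirr h)
    have hq : (0:ℤ) < (r.den : ℤ) := by exact_mod_cast r.pos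
    have hco : IsCoprime (r.num) ((r.den : ℤ)) := by
      rw [Int.isCoprime_iff_gcd_eq_one]
      exact r.reduced
    have hγ : γ = (r.num : ℝ) / ((r.den : ℤ) : ℝ) := by
      rw [← hr, Rat.cast_def]; norm_num
    obtain ⟨n, hn⟩ := rat_floor_mem hq hco hγ h0 h1
    apply subset_closure
    refine ⟨n, ?_⟩
    rw [shift_eq, hyf]
    funext i
    simp only [flSeq]
    have hone : γ * ((i:ℝ) + 1) = γ * (((i+1 : ℤ)):ℝ) := by push_cast; ring
    rw [hone, hn (i+1), hn i, ← hone]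

lemma mem_sturm_of_ceil {γ : ℝ} {y : ℤ → ℤ} {a : ℝ} (h0 : 0 < a) (h1 : a ≤ 1)
    (hy : ∀ i : ℤ, y i = ⌈γ * ((i : ℝ) + 1) + a⌉ - ⌈γ * (i : ℝ) + a⌉) :
    y ∈ sturmSystem γ := by
  have hyf : y = ceSeq γ a := funext fun i => hy i
  by_cases hirr : Irrational γ
  · have hsel : ∀ k : ℕ, ∃ n : ℤ, max (a - 1/((k:ℝ)+1)) 0 < Int.fract ((n:ℝ) * γ) ∧
        Int.fract ((n:ℝ) * γ) < a := by
      intro k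
      have hpos : (0:ℝ) < 1/((k:ℝ)+1) := by positivity
      exact exists_fract_mem hirr (le_max_right _ _)
        (max_lt (by linarith) h0) h1
    choose nn hbl hbu using hsel
    set b : ℕ → ℝ := fun k => Int.fract ((nn k : ℝ) * γ) with hb
    have hbm : ∀ k, 0 ≤ b k ∧ b k < 1 := fun k => ⟨Int.fract_nonneg _, Int.fract_lt_one _⟩
    have hbt : Tendsto b atTop (𝓝 a) := by
      have hlow : Tendsto (fun k : ℕ => a - 1/((k:ℝ)+1)) atTop (𝓝 a) := by
        have := tendsto_one_div_add_atTop_nhds_zero_nat (𝕜 := ℝ)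
        simpa using tendsto_const_nhds.sub this
      refine tendsto_of_tendsto_of_tendsto_of_le_of_le hlow tendsto_const_nhds
        (fun k => le_trans (le_max_left _ _) (hbl k).le) (fun k => (hbu k).le)
    rw [hyf]
    refine mem_closure_of_tendsto (f := fun k => flSeq γ (b k)) (b := atTop) ?_ ?_
    · rw [tendsto_seq_iff]
      intro i
      have e1 := eventually_ceil_eq hbt (fun k => (hbu k).le) (γ * ((i:ℝ) + 1))
      have e2 := eventually_ceil_eq hbt (fun k => (hbu k).le) (γ * (i:ℝ))
      have e3 := eventually_not_bad hbt hbu hbm (γ * ((i:ℝ) + 1))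
      have e4 := eventually_not_bad hbt hbu hbm (γ * (i:ℝ))
      filter_upwards [e1, e2, e3, e4] with k h1 h2 h3 h4
      simp only [flSeq, ceSeq]
      rw [← h1, ← h2, ceil_eq_floor_add_one h3, ceil_eq_floor_add_one h4]
      ring
    · filter_upwards with k
      exact ⟨nn k, (shift_eq γ (nn k)).symm⟩
  · obtain ⟨r, hr⟩ := not_not.mp (fun h => hirr h)
    have hq : (0:ℤ) < (r.den : ℤ) := by exact_mod_cast r.pos
    have hco : IsCoprime (r.num) ((r.den : ℤ)) := by
      rw [Int.isCoprime_iff_gcd_eq_one]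
      exact r.reduced
    have hγ : γ = (r.num : ℝ) / ((r.den : ℤ) : ℝ) := by
      rw [← hr, Rat.cast_def]; norm_num
    obtain ⟨n, hn⟩ := rat_ceil_mem hq hco hγ h0 h1
    apply subset_closure
    refine ⟨n, ?_⟩
    rw [shift_eq, hyf]
    funext i
    simp only [flSeq, ceSeq]
    have hone : γ * ((i:ℝ) + 1) = γ * (((i+1 : ℤ)):ℝ) := by push_cast; ring
    rw [hone, hn (i+1), hn i, ← hone]
    ring

end SturmAux

namespace SturmAux

lemma forward {γ : ℝ} {y : ℤ → ℤ} (h : y ∈ sturmSystem γ) :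
    (∃ a : ℝ, 0 ≤ a ∧ a < 1 ∧ ∀ i : ℤ, y i = flSeq γ a i) ∨
    (∃ a : ℝ, 0 < a ∧ a ≤ 1 ∧ ∀ i : ℤ, y i = ceSeq γ a i) := by
  obtain ⟨w, hwS, hw⟩ := mem_closure_iff_seq_limit.mp h
  choose nn hnn using hwS
  set b : ℕ → ℝ := fun k => Int.fract ((nn k : ℝ) * γ) with hbdef
  have hwb : ∀ k, w k = flSeq γ (b k) := fun k => by rw [hnn k, shift_eq]
  have hbm : ∀ k, b k ∈ Set.Icc (0:ℝ) 1 := fun k => ⟨Int.fract_nonneg _, (Int.fract_lt_one _).le⟩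
  have hblt1 : ∀ k, b k < 1 := fun k => Int.fract_lt_one _
  obtain ⟨a, haI, φ, hφ, hba⟩ := isCompact_Icc.tendsto_subseq hbm
  have hwy : Tendsto (fun k => w (φ k)) atTop (𝓝 y) := hw.comp hφ.tendsto_atTop
  by_cases h1 : ∃ᶠ k in atTop, a ≤ b (φ k)
  · obtain ⟨ψ, hψ, hge⟩ := Filter.extraction_of_frequently_atTop h1
    have hba2 : Tendsto (fun k => b (φ (ψ k))) atTop (𝓝 a) := hba.comp hψ.tendsto_atTop
    have hwy2 : Tendsto (fun k => w (φ (ψ k))) atTop (𝓝 y) := hwy.comp hψ.tendsto_atTop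
    left
    have ha1 : a < 1 := by
      obtain ⟨k, hk⟩ := h1.exists
      exact lt_of_le_of_lt hk (hblt1 _)
    refine ⟨a, haI.1, ha1, fun i => ?_⟩
    have e1 := eventually_floor_eq hba2 hge (γ * ((i:ℝ)+1))
    have e2 := eventually_floor_eq hba2 hge (γ * (i:ℝ))
    have e3 : ∀ᶠ k in atTop, w (φ (ψ k)) i = y i := (tendsto_seq_iff.mp hwy2) i
    obtain ⟨k, hk1, hk2, hk3⟩ := (e1.and (e2.and e3)).exists
    rw [← hk3, hwb]
    simp only [flSeq]
    rw [hk1, hk2]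
  · have h2 : ∀ᶠ k in atTop, b (φ k) < a := by
      rw [Filter.not_frequently] at h1
      filter_upwards [h1] with k hk
      exact lt_of_not_ge hk
    obtain ⟨K, hK⟩ := eventually_atTop.mp h2
    set c : ℕ → ℝ := fun k => b (φ (k + K)) with hcdef
    have hclt : ∀ k, c k < a := fun k => hK _ (Nat.le_add_left K k)
    have hct : Tendsto c atTop (𝓝 a) := hba.comp (tendsto_add_atTop_nat K)
    have hvy : Tendsto (fun k => w (φ (k + K))) atTop (𝓝 y) :=
      hwy.comp (tendsto_add_atTop_nat K)
    have hcm : ∀ k, 0 ≤ c k ∧ c k < 1 := fun k => ⟨(hbm _).1, hblt1 _⟩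
    right
    have ha0 : 0 < a := lt_of_le_of_lt (hcm 0).1 (hclt 0)
    refine ⟨a, ha0, haI.2, fun i => ?_⟩
    have e1 := eventually_ceil_eq hct (fun k => (hclt k).le) (γ * ((i:ℝ)+1))
    have e2 := eventually_ceil_eq hct (fun k => (hclt k).le) (γ * (i:ℝ))
    have e3 := eventually_not_bad hct hclt hcm (γ * ((i:ℝ)+1))
    have e4 := eventually_not_bad hct hclt hcm (γ * (i:ℝ))
    have e5 : ∀ᶠ k in atTop, w (φ (k + K)) i = y i := (tendsto_seq_iff.mp hvy) i
    obtain ⟨k, hk1, hk2, hk3, hk4, hk5⟩ := (e1.and (e2.and (e3.and (e4.and e5)))).exists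
    rw [← hk5, hwb]
    simp only [flSeq, ceSeq]
    rw [← hk1, ← hk2, ceil_eq_floor_add_one hk3, ceil_eq_floor_add_one hk4]
    ring

end SturmAux


/-- characterization of the members of `Y_γ` via floors (intercept in `[0,1)`)
or ceilings (intercept in `(0,1]`). -/
theorem stmt_5 (γ : ℝ) (y : ℤ → ℤ) :
    y ∈ sturmSystem γ ↔
      ((∃ a : ℝ, 0 ≤ a ∧ a < 1 ∧
          ∀ i : ℤ, y i = ⌊γ * ((i : ℝ) + 1) + a⌋ - ⌊γ * (i : ℝ) + a⌋) ∨
       (∃ a : ℝ, 0 < a ∧ a ≤ 1 ∧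
          ∀ i : ℤ, y i = ⌈γ * ((i : ℝ) + 1) + a⌉ - ⌈γ * (i : ℝ) + a⌉)) := by
  constructor
  · intro h
    rcases SturmAux.forward h with ⟨a, h0, h1, hy⟩ | ⟨a, h0, h1, hy⟩
    · exact Or.inl ⟨a, h0, h1, fun i => by simpa [SturmAux.flSeq] using hy i⟩
    · exact Or.inr ⟨a, h0, h1, fun i => by simpa [SturmAux.ceSeq] using hy i⟩
  · rintro (⟨a, h0, h1, hy⟩ | ⟨a, h0, h1, hy⟩)
    · exact SturmAux.mem_sturm_of_floor h0 h1 hy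
    · exact SturmAux.mem_sturm_of_ceil h0 h1 hy
end

section
/- For every j ≥ 1 and every n ∈ ℤ, the number of words (y_0, …, y_{j−1}) ∈ ℤ^j that are Sturmian words of slope γ for some γ ∈ ℝ and have weight y_0 + … + y_{j−1} = n is at most j(j+1). -/
open Finset

private lemma sign_comb (c v₀ v₁ : ℝ) (hc0 : 0 ≤ c) (hc1 : c ≤ 1) (h : (0 ≤ v₀ ↔ 0 ≤ v₁)) :
    (0 ≤ (1 - c) * v₀ + c * v₁ ↔ 0 ≤ v₀) := by
  by_cases h0 : 0 ≤ v₀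
  · have h1 := h.mp h0
    exact iff_of_true (by nlinarith) h0
  · have h1 : ¬ 0 ≤ v₁ := fun hv => h0 (h.mpr hv)
    push_neg at h0 h1
    refine iff_of_false ?_ (by linarith)
    rcases eq_or_lt_of_le hc1 with rfl | hlt
    · have : (1 - (1:ℝ)) * v₀ + 1 * v₁ = v₁ := by ring
      linarith [this]
    · have h2 : (1 - c) * v₀ < 0 := mul_neg_of_pos_of_neg (by linarith) h0
      have h3 : c * v₁ ≤ 0 := mul_nonpos_of_nonneg_of_nonpos hc0 h1.le
      linarith

private def linPat {m : ℕ} (P Q : Fin m → ℝ) (s : Finset (Fin m)) : Set (Fin m → Bool) :=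
  {t | ∃ x : ℝ, t = fun i => decide (i ∈ s ∧ 0 ≤ P i * x + Q i)}

private lemma linPat_card {m : ℕ} (P Q : Fin m → ℝ) (s : Finset (Fin m)) :
    (linPat P Q s).ncard ≤ s.card + 1 := by
  classical
  induction s using Finset.induction_on with
  | empty =>
    have hsub : linPat P Q ∅ ⊆ {fun _ => false} := by
      rintro t ⟨x, rfl⟩
      simp only [Set.mem_singleton_iff]
      funext i
      simp
    calc (linPat P Q ∅).ncard ≤ ({fun _ => false} : Set (Fin m → Bool)).ncard :=
          Set.ncard_le_ncard hsub (Set.toFinite _)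
      _ = 1 := Set.ncard_singleton _
      _ ≤ _ := by simp
  | @insert a₀ s' ha₀ ih =>
    set X : ℝ := -Q a₀ / P a₀ with hX
    set π : (Fin m → Bool) → (Fin m → Bool) := fun t => Function.update t a₀ false with hπ
    set P0 : Set (Fin m → Bool) := {t | t ∈ linPat P Q (insert a₀ s') ∧ t a₀ = false} with hP0
    set P1 : Set (Fin m → Bool) := {t | t ∈ linPat P Q (insert a₀ s') ∧ t a₀ = true} with hP1
    -- P0 is contained in linPat s'
    have hP0sub : P0 ⊆ linPat P Q s' := by
      rintro t ⟨⟨x, rfl⟩, hfa⟩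
      simp only [decide_eq_false_iff_not, Finset.mem_insert, true_or, true_and] at hfa
      refine ⟨x, ?_⟩
      funext i
      rcases eq_or_ne i a₀ with rfl | hne
      · simp [ha₀, hfa]
      · simp [Finset.mem_insert, hne]
    have hP1img : π '' P1 ⊆ linPat P Q s' := by
      rintro u ⟨t, ⟨⟨x, rfl⟩, hta⟩, rfl⟩
      refine ⟨x, ?_⟩
      funext i
      rcases eq_or_ne i a₀ with rfl | hne
      · simp [hπ, Function.update_self, ha₀]
      · simp [hπ, Function.update_of_ne hne, Finset.mem_insert, hne]
    have hinj : Set.InjOn π P1 := by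
      rintro t ⟨_, hta⟩ t' ⟨_, hta'⟩ h
      funext i
      rcases eq_or_ne i a₀ with rfl | hne
      · rw [hta, hta']
      · have := congrFun h i
        simpa [hπ, Function.update_of_ne hne] using this
    -- the union
    have hsplit : linPat P Q (insert a₀ s') = P0 ∪ P1 := by
      ext t
      constructor
      · intro ht
        rcases Bool.eq_false_or_eq_true (t a₀) with h | h
        · exact Or.inr ⟨ht, h⟩
        · exact Or.inl ⟨ht, h⟩
      · rintro (⟨ht, _⟩ | ⟨ht, _⟩) <;> exact ht
    -- intersection bound
    have hintsub : P0 ∩ π '' P1 ⊆ {fun i => decide (i ∈ s' ∧ 0 ≤ P i * X + Q i)} := by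
      rintro u ⟨⟨⟨x₀, hux₀⟩, hfa⟩, t, ⟨⟨x₁, htx₁⟩, hta⟩, hput⟩
      have hv₀ : P a₀ * x₀ + Q a₀ < 0 := by
        rw [hux₀] at hfa
        simp only [decide_eq_false_iff_not, Finset.mem_insert, true_or, true_and, not_le] at hfa
        exact hfa
      have hv₁ : 0 ≤ P a₀ * x₁ + Q a₀ := by
        rw [htx₁] at hta
        simp only [decide_eq_true_eq, Finset.mem_insert, true_or, true_and] at hta
        exact hta
      have hPa : P a₀ ≠ 0 := by
        intro h
        rw [h] at hv₀ hv₁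
        simp at hv₀ hv₁
        linarith
      -- u equals the s'-masked pattern at x₀ and at x₁
      have hu0 : ∀ i, u i = decide (i ∈ s' ∧ 0 ≤ P i * x₀ + Q i) := by
        intro i
        rcases eq_or_ne i a₀ with rfl | hne
        · simp [hfa, ha₀]
        · rw [hux₀]
          simp [Finset.mem_insert, hne]
      have hu1 : ∀ i, u i = decide (i ∈ s' ∧ 0 ≤ P i * x₁ + Q i) := by
        intro i
        rcases eq_or_ne i a₀ with rfl | hne
        · simp [hfa, ha₀]
        · rw [← hput, hπ]
          simp only [Function.update_of_ne hne]
          rw [htx₁]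
          simp [Finset.mem_insert, hne]
      set v₀ := P a₀ * x₀ + Q a₀
      set v₁ := P a₀ * x₁ + Q a₀
      have hd : 0 < v₁ - v₀ := by linarith
      set c : ℝ := -v₀ / (v₁ - v₀) with hc
      have hc0 : 0 ≤ c := div_nonneg (by linarith) hd.le
      have hc1 : c ≤ 1 := by
        rw [div_le_one hd]; linarith
      set x' : ℝ := (1 - c) * x₀ + c * x₁ with hx'
      have hroot : P a₀ * x' + Q a₀ = 0 := by
        have h1 : P a₀ * x' + Q a₀ = v₀ + c * (v₁ - v₀) := by
          simp only [hx', v₀, v₁]; ring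
        rw [h1, hc, div_mul_cancel₀ _ hd.ne']
        ring
      have hXx' : X = x' := by
        have hXr : P a₀ * X + Q a₀ = 0 := by
          rw [hX]; field_simp; ring
        have := hXr.trans hroot.symm
        have h2 : P a₀ * X = P a₀ * x' := by linarith
        exact mul_left_cancel₀ hPa h2
      simp only [Set.mem_singleton_iff]
      funext i
      rw [hXx']
      by_cases hi : i ∈ s'
      · have hiff : (0 ≤ P i * x₀ + Q i) ↔ (0 ≤ P i * x₁ + Q i) := by
          have := (hu0 i).symm.trans (hu1 i)
          simpa [hi] using decide_eq_decide.mp this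
        have hcomb : P i * x' + Q i = (1 - c) * (P i * x₀ + Q i) + c * (P i * x₁ + Q i) := by
          simp only [hx']; ring
        have := sign_comb c (P i * x₀ + Q i) (P i * x₁ + Q i) hc0 hc1 hiff
        rw [hu0 i]
        apply decide_eq_decide.mpr
        rw [hcomb]
        simp only [hi, true_and]
        exact this.symm
      · rw [hu0 i]
        simp [hi]
    have hcard : (insert a₀ s').card = s'.card + 1 := Finset.card_insert_of_notMem ha₀
    have e1 : (linPat P Q (insert a₀ s')).ncard ≤ P0.ncard + P1.ncard := by
      rw [hsplit]; exact Set.ncard_union_le _ _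
    have e2 : P1.ncard = (π '' P1).ncard := (Set.ncard_image_of_injOn hinj).symm
    have e3 : P0.ncard + (π '' P1).ncard = (P0 ∪ π '' P1).ncard + (P0 ∩ π '' P1).ncard := by
      rw [Set.ncard_union_add_ncard_inter]
    have e4 : (P0 ∪ π '' P1).ncard ≤ (linPat P Q s').ncard :=
      Set.ncard_le_ncard (Set.union_subset hP0sub hP1img) (Set.toFinite _)
    have e5 : (P0 ∩ π '' P1).ncard ≤ 1 := by
      calc (P0 ∩ π '' P1).ncard ≤ ({fun i => decide (i ∈ s' ∧ 0 ≤ P i * X + Q i)} :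
            Set (Fin m → Bool)).ncard := Set.ncard_le_ncard hintsub (Set.toFinite _)
        _ = 1 := Set.ncard_singleton _
    omega

private def affPat {m : ℕ} (A B C : Fin m → ℝ) (s : Finset (Fin m)) : Set (Fin m → Bool) :=
  {t | ∃ x y : ℝ, t = fun i => decide (i ∈ s ∧ 0 ≤ A i * x + B i * y + C i)}

private lemma affPat_card {m : ℕ} (A B C : Fin m → ℝ) (hA : ∀ i, A i ≠ 0)
    (s : Finset (Fin m)) : (affPat A B C s).ncard ≤ s.card * s.card + 1 := by
  classical
  induction s using Finset.induction_on with
  | empty =>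
    have hsub : affPat A B C ∅ ⊆ {fun _ => false} := by
      rintro t ⟨x, y, rfl⟩
      simp only [Set.mem_singleton_iff]
      funext i
      simp
    calc (affPat A B C ∅).ncard ≤ ({fun _ => false} : Set (Fin m → Bool)).ncard :=
          Set.ncard_le_ncard hsub (Set.toFinite _)
      _ = 1 := Set.ncard_singleton _
      _ ≤ _ := by simp
  | @insert a₀ s' ha₀ ih =>
    set P' : Fin m → ℝ := fun i => B i - A i * B a₀ / A a₀ with hP'
    set Q' : Fin m → ℝ := fun i => C i - A i * C a₀ / A a₀ with hQ'
    set π : (Fin m → Bool) → (Fin m → Bool) := fun t => Function.update t a₀ false with hπ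
    set P0 : Set (Fin m → Bool) := {t | t ∈ affPat A B C (insert a₀ s') ∧ t a₀ = false} with hP0
    set P1 : Set (Fin m → Bool) := {t | t ∈ affPat A B C (insert a₀ s') ∧ t a₀ = true} with hP1
    have hP0sub : P0 ⊆ affPat A B C s' := by
      rintro t ⟨⟨x, y, rfl⟩, hfa⟩
      simp only [decide_eq_false_iff_not, Finset.mem_insert, true_or, true_and, not_le] at hfa
      refine ⟨x, y, ?_⟩
      funext i
      rcases eq_or_ne i a₀ with rfl | hne
      · simp [ha₀, not_le.mpr hfa]
      · simp [Finset.mem_insert, hne]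
    have hP1img : π '' P1 ⊆ affPat A B C s' := by
      rintro u ⟨t, ⟨⟨x, y, rfl⟩, hta⟩, rfl⟩
      refine ⟨x, y, ?_⟩
      funext i
      rcases eq_or_ne i a₀ with rfl | hne
      · simp [hπ, Function.update_self, ha₀]
      · simp [hπ, Function.update_of_ne hne, Finset.mem_insert, hne]
    have hinj : Set.InjOn π P1 := by
      rintro t ⟨_, hta⟩ t' ⟨_, hta'⟩ h
      funext i
      rcases eq_or_ne i a₀ with rfl | hne
      · rw [hta, hta']
      · have := congrFun h i
        simpa [hπ, Function.update_of_ne hne] using this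
    have hsplit : affPat A B C (insert a₀ s') = P0 ∪ P1 := by
      ext t
      constructor
      · intro ht
        rcases Bool.eq_false_or_eq_true (t a₀) with h | h
        · exact Or.inr ⟨ht, h⟩
        · exact Or.inl ⟨ht, h⟩
      · rintro (⟨ht, _⟩ | ⟨ht, _⟩) <;> exact ht
    have hintsub : P0 ∩ π '' P1 ⊆ linPat P' Q' s' := by
      rintro u ⟨⟨⟨x₀, y₀, hux₀⟩, hfa⟩, t, ⟨⟨x₁, y₁, htx₁⟩, hta⟩, hput⟩
      have hv₀ : A a₀ * x₀ + B a₀ * y₀ + C a₀ < 0 := by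
        rw [hux₀] at hfa
        simp only [decide_eq_false_iff_not, Finset.mem_insert, true_or, true_and, not_le] at hfa
        exact hfa
      have hv₁ : 0 ≤ A a₀ * x₁ + B a₀ * y₁ + C a₀ := by
        rw [htx₁] at hta
        simp only [decide_eq_true_eq, Finset.mem_insert, true_or, true_and] at hta
        exact hta
      have hu0 : ∀ i, u i = decide (i ∈ s' ∧ 0 ≤ A i * x₀ + B i * y₀ + C i) := by
        intro i
        rcases eq_or_ne i a₀ with rfl | hne
        · simp [hfa, ha₀]
        · rw [hux₀]
          simp [Finset.mem_insert, hne]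
      have hu1 : ∀ i, u i = decide (i ∈ s' ∧ 0 ≤ A i * x₁ + B i * y₁ + C i) := by
        intro i
        rcases eq_or_ne i a₀ with rfl | hne
        · simp [hfa, ha₀]
        · rw [← hput, hπ]
          simp only [Function.update_of_ne hne]
          rw [htx₁]
          simp [Finset.mem_insert, hne]
      set v₀ := A a₀ * x₀ + B a₀ * y₀ + C a₀ with hv₀def
      set v₁ := A a₀ * x₁ + B a₀ * y₁ + C a₀ with hv₁def
      have hd : 0 < v₁ - v₀ := by linarith
      set c : ℝ := -v₀ / (v₁ - v₀) with hc
      have hc0 : 0 ≤ c := div_nonneg (by linarith) hd.le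
      have hc1 : c ≤ 1 := by rw [div_le_one hd]; linarith
      set x' : ℝ := (1 - c) * x₀ + c * x₁ with hx'
      set y' : ℝ := (1 - c) * y₀ + c * y₁ with hy'
      have hroot : A a₀ * x' + B a₀ * y' + C a₀ = 0 := by
        have h1 : A a₀ * x' + B a₀ * y' + C a₀ = v₀ + c * (v₁ - v₀) := by
          simp only [hx', hy', hv₀def, hv₁def]; ring
        rw [h1, hc, div_mul_cancel₀ _ hd.ne']
        ring
      refine ⟨y', ?_⟩
      funext i
      have hline : P' i * y' + Q' i = A i * x' + B i * y' + C i := by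
        simp only [hP', hQ']
        field_simp [hA a₀]
        linear_combination (-(A i)) * hroot
      by_cases hi : i ∈ s'
      · have hiff : (0 ≤ A i * x₀ + B i * y₀ + C i) ↔ (0 ≤ A i * x₁ + B i * y₁ + C i) := by
          have := (hu0 i).symm.trans (hu1 i)
          simpa [hi] using decide_eq_decide.mp this
        have hcomb : A i * x' + B i * y' + C i =
            (1 - c) * (A i * x₀ + B i * y₀ + C i) + c * (A i * x₁ + B i * y₁ + C i) := by
          simp only [hx', hy']; ring
        have hs := sign_comb c (A i * x₀ + B i * y₀ + C i) (A i * x₁ + B i * y₁ + C i) hc0 hc1 hiff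
        rw [hu0 i]
        apply decide_eq_decide.mpr
        rw [hline, hcomb]
        simp only [hi, true_and]
        exact hs.symm
      · rw [hu0 i]
        simp [hi]
    have hcard : (insert a₀ s').card = s'.card + 1 := Finset.card_insert_of_notMem ha₀
    have e1 : (affPat A B C (insert a₀ s')).ncard ≤ P0.ncard + P1.ncard := by
      rw [hsplit]; exact Set.ncard_union_le _ _
    have e2 : P1.ncard = (π '' P1).ncard := (Set.ncard_image_of_injOn hinj).symm
    have e3 : P0.ncard + (π '' P1).ncard = (P0 ∪ π '' P1).ncard + (P0 ∩ π '' P1).ncard := by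
      rw [Set.ncard_union_add_ncard_inter]
    have e4 : (P0 ∪ π '' P1).ncard ≤ (affPat A B C s').ncard :=
      Set.ncard_le_ncard (Set.union_subset hP0sub hP1img) (Set.toFinite _)
    have e5 : (P0 ∩ π '' P1).ncard ≤ s'.card + 1 :=
      le_trans (Set.ncard_le_ncard hintsub (Set.toFinite _)) (linPat_card P' Q' s')
    rw [hcard]
    nlinarith [ih, e1, e2, e3, e4, e5]

private noncomputable def Edef (j : ℕ) (n : ℤ) (k : ℕ) : ℤ := ⌊((k : ℝ) * (n : ℝ)) / (j : ℝ)⌋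

private noncomputable def sdef (j : ℕ) (n : ℤ) (t : Fin j → Bool) (k : ℕ) : ℤ :=
  if h : 1 ≤ k ∧ k ≤ j then
    Edef j n k + (if t ⟨k - 1, by omega⟩ then 1 else 0)
  else 0

private noncomputable def Phidef (j : ℕ) (n : ℤ) (t : Fin j → Bool) : Fin j → ℤ :=
  fun i => sdef j n t ((i : ℕ) + 1) - sdef j n t (i : ℕ)

private noncomputable def Adef (j : ℕ) (i : Fin j) : ℝ := ((i : ℕ) : ℝ) + 1
private noncomputable def Bdef (j : ℕ) (i : Fin j) : ℝ := (j : ℝ) - (((i : ℕ) : ℝ) + 1)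
private noncomputable def Cdef (j : ℕ) (n : ℤ) (i : Fin j) : ℝ :=
  (((i : ℕ) : ℝ) + 1) * (n : ℝ) - (j : ℝ) * ((Edef j n ((i : ℕ) + 1) : ℤ) : ℝ) - (j : ℝ)


/-- there are at most `j(j+1)` Sturmian words of length `j` and weight `n`. -/
theorem stmt_6 (j : ℕ) (hj : 1 ≤ j) (n : ℤ) :
    {y : Fin j → ℤ | (∃ γ : ℝ, IsSturmianWord γ y) ∧ ∑ i, y i = n}.Finite ∧
    Nat.card {y : Fin j → ℤ | (∃ γ : ℝ, IsSturmianWord γ y) ∧ ∑ i, y i = n} ≤ j * (j + 1) := by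
  classical
  have hj0 : (0 : ℝ) < (j : ℝ) := by exact_mod_cast hj
  have hAne : ∀ i : Fin j, Adef j i ≠ 0 := by
    intro i
    have : (0:ℝ) < ((i:ℕ):ℝ) + 1 := by positivity
    simpa [Adef] using this.ne'
  have key : {y : Fin j → ℤ | (∃ γ : ℝ, IsSturmianWord γ y) ∧ ∑ i, y i = n} ⊆
      Phidef j n '' (affPat (Adef j) (Bdef j) (Cdef j n) Finset.univ) := by
    rintro y ⟨⟨γ, a, ha0, ha1, hy⟩, hsum⟩
    have hfa : ⌊a⌋ = 0 := Int.floor_eq_zero_iff.mpr ⟨ha0, ha1⟩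
    -- the total sum is ⌊jγ + a⌋
    have hsum' : ⌊(j : ℝ) * γ + a⌋ = n := by
      have h1 : ∑ i : Fin j, y i =
          ∑ k ∈ Finset.range j,
            ((fun k : ℕ => ⌊(k : ℝ) * γ + a⌋) (k + 1) - (fun k : ℕ => ⌊(k : ℝ) * γ + a⌋) k) := by
        rw [← Fin.sum_univ_eq_sum_range]
        refine Finset.sum_congr rfl (fun i _ => ?_)
        rw [hy i]
        push_cast
        ring_nf
      rw [Finset.sum_range_sub (fun k : ℕ => ⌊(k : ℝ) * γ + a⌋) j] at h1
      simp only [Nat.cast_zero, zero_mul, zero_add, hfa, sub_zero] at h1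
      rw [← hsum, h1]
    set θ : ℝ := (j : ℝ) * γ + a - (n : ℝ) with hθ
    have hθ0 : 0 ≤ θ := by
      have h := Int.floor_le ((j : ℝ) * γ + a)
      rw [hsum'] at h
      simp only [hθ]; linarith
    have hθ1 : θ < 1 := by
      have h := Int.lt_floor_add_one ((j : ℝ) * γ + a)
      rw [hsum'] at h
      simp only [hθ]; push_cast at h ⊢; linarith
    -- the key floor computation
    have hfloor : ∀ k : ℕ, 1 ≤ k → k ≤ j →
        ⌊(k : ℝ) * γ + a⌋ = Edef j n k +
          (if 0 ≤ (k : ℝ) * θ + ((j : ℝ) - (k : ℝ)) * a +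
              ((k : ℝ) * (n : ℝ) - (j : ℝ) * ((Edef j n k : ℤ) : ℝ) - (j : ℝ)) then 1 else 0) := by
      intro k hk1 hkj
      have hkR : (k : ℝ) ≤ (j : ℝ) := by exact_mod_cast hkj
      have hk0 : (1 : ℝ) ≤ (k : ℝ) := by exact_mod_cast hk1
      have hE1 : (j : ℝ) * ((Edef j n k : ℤ) : ℝ) ≤ (k : ℝ) * (n : ℝ) := by
        have h := Int.floor_le ((k : ℝ) * (n : ℝ) / (j : ℝ))
        rw [le_div_iff₀ hj0] at h
        unfold Edef
        linarith
      have hE2 : (k : ℝ) * (n : ℝ) < (j : ℝ) * ((Edef j n k : ℤ) : ℝ) + (j : ℝ) := by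
        have h := Int.lt_floor_add_one ((k : ℝ) * (n : ℝ) / (j : ℝ))
        rw [div_lt_iff₀ hj0] at h
        unfold Edef
        nlinarith
      have hid : (j : ℝ) * ((k : ℝ) * γ + a) =
          (k : ℝ) * θ + ((j : ℝ) - (k : ℝ)) * a + (k : ℝ) * (n : ℝ) := by
        simp only [hθ]; ring
      by_cases hL0 : 0 ≤ (k : ℝ) * θ + ((j : ℝ) - (k : ℝ)) * a +
          ((k : ℝ) * (n : ℝ) - (j : ℝ) * ((Edef j n k : ℤ) : ℝ) - (j : ℝ))
      · rw [if_pos hL0]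
        rw [Int.floor_eq_iff]
        constructor
        · have h1 : (j : ℝ) * (((Edef j n k : ℤ) : ℝ) + 1) ≤ (j : ℝ) * ((k : ℝ) * γ + a) := by
            rw [hid]; linarith
          have h2 := le_of_mul_le_mul_left h1 hj0
          push_cast
          linarith
        · have f1 : (k : ℝ) * θ < (k : ℝ) := by nlinarith
          have f2 : ((j : ℝ) - (k : ℝ)) * a ≤ (j : ℝ) - (k : ℝ) := by nlinarith
          have h1 : (j : ℝ) * ((k : ℝ) * γ + a) < (j : ℝ) * (((Edef j n k : ℤ) : ℝ) + 2) := by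
            rw [hid]; linarith
          have h2 := lt_of_mul_lt_mul_left h1 hj0.le
          push_cast
          linarith
      · rw [if_neg hL0]
        push_neg at hL0
        rw [Int.floor_eq_iff]
        constructor
        · have f1 : 0 ≤ (k : ℝ) * θ := by positivity
          have f2 : 0 ≤ ((j : ℝ) - (k : ℝ)) * a := mul_nonneg (by linarith) ha0
          have h1 : (j : ℝ) * ((Edef j n k : ℤ) : ℝ) ≤ (j : ℝ) * ((k : ℝ) * γ + a) := by
            rw [hid]; linarith
          have h2 := le_of_mul_le_mul_left h1 hj0
          push_cast
          linarith
        · have h1 : (j : ℝ) * ((k : ℝ) * γ + a) < (j : ℝ) * (((Edef j n k : ℤ) : ℝ) + 1) := by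
            rw [hid]; linarith
          have h2 := lt_of_mul_lt_mul_left h1 hj0.le
          push_cast
          linarith
    -- build the pattern
    refine ⟨fun i => decide (i ∈ (Finset.univ : Finset (Fin j)) ∧
        0 ≤ Adef j i * θ + Bdef j i * a + Cdef j n i), ⟨θ, a, rfl⟩, ?_⟩
    set t : Fin j → Bool := fun i => decide (i ∈ (Finset.univ : Finset (Fin j)) ∧
        0 ≤ Adef j i * θ + Bdef j i * a + Cdef j n i) with htdef
    have hs : ∀ k : ℕ, k ≤ j → sdef j n t k = ⌊(k : ℝ) * γ + a⌋ := by
      intro k hk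
      rcases Nat.eq_zero_or_pos k with rfl | hk1
      · simp [sdef, hfa]
      · have hcond : (1 ≤ k ∧ k ≤ j) := ⟨hk1, hk⟩
        rw [hfloor k hk1 hk]
        show (if h : 1 ≤ k ∧ k ≤ j then
            Edef j n k + (if t ⟨k - 1, by omega⟩ then 1 else 0) else 0) = _
        rw [dif_pos hcond]
        congr 1
        have hfin : ((⟨k - 1, by omega⟩ : Fin j) : ℕ) = k - 1 := rfl
        have hc1 : (((k - 1 : ℕ) : ℝ)) = (k : ℝ) - 1 := by
          push_cast [Nat.cast_sub hk1]
          ring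
        have hidx : (k - 1) + 1 = k := Nat.succ_pred_eq_of_pos hk1
        have hval : Adef j ⟨k - 1, by omega⟩ * θ + Bdef j ⟨k - 1, by omega⟩ * a +
            Cdef j n ⟨k - 1, by omega⟩ =
            (k : ℝ) * θ + ((j : ℝ) - (k : ℝ)) * a +
              ((k : ℝ) * (n : ℝ) - (j : ℝ) * ((Edef j n k : ℤ) : ℝ) - (j : ℝ)) := by
          simp only [Adef, Bdef, Cdef, hfin, hc1, hidx]
          ring
        by_cases hP : 0 ≤ (k : ℝ) * θ + ((j : ℝ) - (k : ℝ)) * a +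
            ((k : ℝ) * (n : ℝ) - (j : ℝ) * ((Edef j n k : ℤ) : ℝ) - (j : ℝ))
        · rw [if_pos hP]
          have : t ⟨k - 1, by omega⟩ = true := by
            rw [htdef]
            simp only [decide_eq_true_eq]
            exact ⟨Finset.mem_univ _, by rw [hval]; exact hP⟩
          rw [if_pos this]
        · rw [if_neg hP]
          have : t ⟨k - 1, by omega⟩ = false := by
            rw [htdef]
            simp only [decide_eq_false_iff_not]
            rintro ⟨-, h⟩
            rw [hval] at h
            exact hP h
          rw [if_neg (by simp [this])]
    funext i
    have h1 := hs ((i : ℕ) + 1) (by omega)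
    have h2 := hs (i : ℕ) (by omega)
    simp only [Phidef, h1, h2]
    rw [hy i]
    push_cast
    ring_nf
  constructor
  · exact Set.Finite.subset ((Set.toFinite _).image _) key
  · rw [Nat.card_coe_set_eq]
    calc ({y : Fin j → ℤ | (∃ γ : ℝ, IsSturmianWord γ y) ∧ ∑ i, y i = n}).ncard
        ≤ (Phidef j n '' (affPat (Adef j) (Bdef j) (Cdef j n) Finset.univ)).ncard :=
          Set.ncard_le_ncard key (Set.Finite.image _ (Set.toFinite _))
      _ ≤ (affPat (Adef j) (Bdef j) (Cdef j n) Finset.univ).ncard :=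
          Set.ncard_image_le (Set.toFinite _)
      _ ≤ (Finset.univ : Finset (Fin j)).card * (Finset.univ : Finset (Fin j)).card + 1 :=
          affPat_card _ _ _ hAne _
      _ ≤ j * (j + 1) := by
          simp only [Finset.card_univ, Fintype.card_fin]
          nlinarith
end

section
/- Suppose (γ^{(n)})_{n∈ℕ} is a sequence of real numbers, y^{(n)} ∈ Y_{γ^{(n)}} for each n, and y^{(n)} → y in the product topology of ℤ^ℤ. Then the sequence (γ^{(n)}) converges to some γ ∈ ℝ, and either y ∈ Y_γ, or γ is rational and y is an aperiodic sequence that is the concatenation of two periodic semi-infinite words, i.e., y is not periodic but there exist N ≥ 0 and p, q ≥ 1 with y_{i+p} = y_i for all i ≥ N and y_{i−q} = y_i for all i ≤ −N. -/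
namespace Stmt7
open Filter
def wsum (y : ℤ → ℤ) (i : ℤ) (k : ℕ) : ℤ := ∑ j ∈ Finset.range k, y (i + j)
lemma continuous_wsum (i : ℤ) (k : ℕ) : Continuous (fun y : ℤ → ℤ => wsum y i k) := by
  unfold wsum; exact continuous_finset_sum _ (fun j _ => continuous_apply _)

lemma floor_diff_lb (x u : ℝ) : ⌊x⌋ ≤ ⌊u + x⌋ - ⌊u⌋ := by
  have h : (⌊u⌋ : ℝ) + ⌊x⌋ ≤ u + x := by
    have := Int.floor_le u; have := Int.floor_le x; linarith
  have := Int.le_floor.mpr (by exact_mod_cast h : ((⌊u⌋ + ⌊x⌋ : ℤ) : ℝ) ≤ u + x)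
  omega

lemma floor_diff_ub (x u : ℝ) : ⌊u + x⌋ - ⌊u⌋ ≤ ⌊x⌋ + 1 := by
  have h : u + x < ((⌊u⌋ + ⌊x⌋ + 1 + 1 : ℤ) : ℝ) := by
    have := Int.lt_floor_add_one u; have := Int.lt_floor_add_one x; push_cast; linarith
  have h2 : ⌊u + x⌋ < ⌊u⌋ + ⌊x⌋ + 1 + 1 := Int.floor_lt.mpr h
  omega

/-- the balance property -/
def Bset (γ' : ℝ) : Set (ℤ → ℤ) :=
  {z | ∀ (i : ℤ) (k : ℕ), ⌊(k : ℝ) * γ'⌋ ≤ wsum z i k ∧ wsum z i k ≤ ⌊(k : ℝ) * γ'⌋ + 1}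

lemma isClosed_Bset (γ' : ℝ) : IsClosed (Bset γ') := by
  have : Bset γ' = ⋂ (i : ℤ), ⋂ (k : ℕ),
      (fun z => wsum z i k) ⁻¹' {m : ℤ | ⌊(k : ℝ) * γ'⌋ ≤ m ∧ m ≤ ⌊(k : ℝ) * γ'⌋ + 1} := by
    ext z; simp [Bset, Set.mem_iInter]
  rw [this]
  exact isClosed_iInter fun i => isClosed_iInter fun k =>
    IsClosed.preimage (continuous_wsum i k) (isClosed_discrete _)

lemma wsum_sturm (γ : ℝ) (n i : ℤ) (k : ℕ) :
    wsum (fun i => sturmSeq γ (i + n)) i k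
      = ⌊((i + n : ℤ) : ℝ) * γ + (k : ℝ) * γ⌋ - ⌊((i + n : ℤ) : ℝ) * γ⌋ := by
  induction k with
  | zero => simp [wsum]
  | succ k ih =>
    simp only [wsum, Finset.sum_range_succ] at ih ⊢
    rw [ih, sturmSeq]
    have e1 : ((i + (k:ℤ) + n : ℤ) : ℝ) * γ = ((i + n : ℤ) : ℝ) * γ + (k : ℝ) * γ := by
      push_cast; ring
    have e2 : (((i + (k:ℤ) + n : ℤ) : ℝ) + 1) * γ
        = ((i + n : ℤ) : ℝ) * γ + ((k+1 : ℕ) : ℝ) * γ := by push_cast; ring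
    rw [e1, e2]; ring

lemma sturmSystem_subset_Bset (γ' : ℝ) : sturmSystem γ' ⊆ Bset γ' := by
  refine closure_minimal ?_ (isClosed_Bset γ')
  rintro z ⟨n, rfl⟩ 
  intro i k
  rw [wsum_sturm]
  exact ⟨floor_diff_lb _ _, floor_diff_ub _ _⟩

/-- the one-sided deviation property, relative to a fixed slope γ -/
def Qset (γ : ℝ) : Set (ℤ → ℤ) :=
  ({z | ∃ (i : ℤ) (k : ℕ), 1 ≤ k ∧ (k : ℝ) * γ + 1 ≤ wsum z i k} ∩
   {z | ∃ (j : ℤ) (l : ℕ), 1 ≤ l ∧ (wsum z j l : ℝ) ≤ (l : ℝ) * γ - 1})ᶜ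

lemma isClosed_Qset (γ : ℝ) : IsClosed (Qset γ) := by
  refine IsOpen.isClosed_compl (IsOpen.inter ?_ ?_)
  · have : {z : ℤ → ℤ | ∃ (i : ℤ) (k : ℕ), 1 ≤ k ∧ (k : ℝ) * γ + 1 ≤ wsum z i k}
        = ⋃ (i : ℤ), ⋃ (k : ℕ), (fun z => wsum z i k) ⁻¹'
            {m : ℤ | 1 ≤ k ∧ (k : ℝ) * γ + 1 ≤ (m : ℝ)} := by
      ext z; simp [Set.mem_iUnion]
    rw [this]
    exact isOpen_iUnion fun i => isOpen_iUnion fun k =>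
      IsOpen.preimage (continuous_wsum i k) (isOpen_discrete _)
  · have : {z : ℤ → ℤ | ∃ (j : ℤ) (l : ℕ), 1 ≤ l ∧ (wsum z j l : ℝ) ≤ (l : ℝ) * γ - 1}
        = ⋃ (j : ℤ), ⋃ (l : ℕ), (fun z => wsum z j l) ⁻¹'
            {m : ℤ | 1 ≤ l ∧ (m : ℝ) ≤ (l : ℝ) * γ - 1} := by
      ext z; simp [Set.mem_iUnion]
    rw [this]
    exact isOpen_iUnion fun j => isOpen_iUnion fun l =>
      IsOpen.preimage (continuous_wsum j l) (isOpen_discrete _)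

lemma sturmSystem_subset_Qset (γ γ' : ℝ) : sturmSystem γ' ⊆ Qset γ := by
  refine closure_minimal ?_ (isClosed_Qset γ)
  rintro z ⟨n, rfl⟩ ⟨⟨i, k, hk, hik⟩, ⟨j, l, hl, hjl⟩⟩
  rw [wsum_sturm] at hik hjl
  set u := ((i + n : ℤ) : ℝ) * γ' with hu
  set v := ((j + n : ℤ) : ℝ) * γ' with hv
  -- from hik : kγ + 1 ≤ ⌊u + kγ'⌋ - ⌊u⌋ < kγ' + 1  ⇒ γ < γ'
  have h1 : ((⌊u + (k:ℝ)*γ'⌋ - ⌊u⌋ : ℤ) : ℝ) < (k:ℝ)*γ' + 1 := by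
    have a1 := Int.floor_le (u + (k:ℝ)*γ')
    have a2 := Int.lt_floor_add_one u
    push_cast; linarith
  have h2 : ((l:ℝ)*γ' - 1 : ℝ) < ((⌊v + (l:ℝ)*γ'⌋ - ⌊v⌋ : ℤ) : ℝ) := by
    have a1 := Int.lt_floor_add_one (v + (l:ℝ)*γ')
    have a2 := Int.floor_le v
    push_cast; linarith
  have hik' : (k : ℝ) * γ + 1 ≤ ((⌊u + (k:ℝ)*γ'⌋ - ⌊u⌋ : ℤ) : ℝ) := by exact_mod_cast hik
  have hjl' : ((⌊v + (l:ℝ)*γ'⌋ - ⌊v⌋ : ℤ) : ℝ) ≤ (l : ℝ) * γ - 1 := by exact_mod_cast hjl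
  have hkpos : (0 : ℝ) < (k : ℝ) := by exact_mod_cast hk
  have hlpos : (0 : ℝ) < (l : ℝ) := by exact_mod_cast hl
  have hgl : γ < γ' := by
    by_contra h
    push_neg at h
    have : (k:ℝ) * γ' ≤ (k:ℝ) * γ := by nlinarith
    linarith
  have hgr : γ' < γ := by
    by_contra h
    push_neg at h
    have : (l:ℝ) * γ ≤ (l:ℝ) * γ' := by nlinarith
    linarith
  linarith

/-- membership criterion for the Sturmian system via finite windows -/
lemma mem_sturmSystem_of_windows (γ : ℝ) (y : ℤ → ℤ)
    (h : ∀ M : ℕ, ∃ n : ℤ, ∀ i : ℤ, |i| ≤ (M : ℤ) → y i = sturmSeq γ (i + n)) :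
    y ∈ sturmSystem γ := by
  choose n hn using h
  have htend : Tendsto (fun M : ℕ => fun i => sturmSeq γ (i + n M)) atTop (nhds y) := by
    rw [tendsto_pi_nhds]
    intro i
    have : ∀ᶠ M : ℕ in atTop, sturmSeq γ (i + n M) = y i := by
      rw [eventually_atTop]
      exact ⟨i.natAbs, fun M hM => (hn M i (by rw [Int.abs_eq_natAbs]; omega : |i| ≤ (M:ℤ))).symm⟩
    exact Tendsto.congr' (this.mono fun M hM => hM.symm) tendsto_const_nhds
  exact mem_closure_of_tendsto htend (Eventually.of_forall fun M => ⟨n M, rfl⟩)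

/-- bi-infinite partial sums: Fsum y j - Fsum y i = wsum y i (j-i) -/
def Fsum (y : ℤ → ℤ) (n : ℤ) : ℤ :=
  if 0 ≤ n then wsum y 0 n.toNat else - wsum y n (-n).toNat

lemma Fsum_succ (y : ℤ → ℤ) (n : ℤ) : Fsum y (n + 1) = Fsum y n + y n := by
  rcases le_or_gt 0 n with h | h
  · have h1 : (0:ℤ) ≤ n + 1 := by omega
    have h2 : (n+1).toNat = n.toNat + 1 := by omega
    simp only [Fsum, if_pos h, if_pos h1, h2, wsum, Finset.sum_range_succ]
    congr 2
    omega
  · have h1 : ¬ (0:ℤ) ≤ n := by omega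
    rcases eq_or_lt_of_le (by omega : n + 1 ≤ 0) with h2 | h2
    · -- n = -1
      have hn : n = -1 := by omega
      subst hn
      simp [Fsum, wsum]
    · have h3 : ¬ (0:ℤ) ≤ n + 1 := by omega
      have h4 : (-n).toNat = (-(n+1)).toNat + 1 := by omega
      simp only [Fsum, if_neg h1, if_neg h3, h4]
      have key : wsum y n ((-(n+1)).toNat + 1) = y n + wsum y (n+1) (-(n+1)).toNat := by
        simp only [wsum, Finset.sum_range_succ']
        have e0 : y (n + ((0:ℕ):ℤ)) = y n := by norm_num
        have e1 : ∀ j : ℕ, y (n + ((j+1 : ℕ):ℤ)) = y ((n+1) + j) := by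
          intro j; congr 1; push_cast; ring
        rw [Finset.sum_congr rfl (fun j _ => e1 j), e0]
        ring
      rw [key]
      ring

lemma Fsum_add_wsum (y : ℤ → ℤ) (i : ℤ) (k : ℕ) :
    Fsum y (i + k) = Fsum y i + wsum y i k := by
  induction k with
  | zero => simp [wsum]
  | succ k ih =>
    have : i + ((k:ℤ) + 1) = (i + k) + 1 := by ring
    rw [show ((k+1 : ℕ) : ℤ) = (k : ℤ) + 1 by push_cast; ring, this, Fsum_succ, ih]
    simp only [wsum, Finset.sum_range_succ]
    ring

lemma Fsum_diff (y : ℤ → ℤ) {i j : ℤ} (h : i ≤ j) :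
    Fsum y j - Fsum y i = wsum y i (j - i).toNat := by
  obtain ⟨K, hK⟩ : ∃ K : ℕ, j = i + (K:ℤ) ∧ (j - i).toNat = K :=
    ⟨(j - i).toNat, by omega, rfl⟩
  rw [hK.2, hK.1, Fsum_add_wsum]; ring


lemma limit_slope (γseq : ℕ → ℝ) (yseq : ℕ → (ℤ → ℤ)) (y : ℤ → ℤ)
    (hmem : ∀ n : ℕ, yseq n ∈ sturmSystem (γseq n))
    (hconv : Filter.Tendsto yseq Filter.atTop (nhds y)) :
    ∃ γ : ℝ, Filter.Tendsto γseq Filter.atTop (nhds γ) ∧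
      (∀ (i : ℤ) (k : ℕ), (k:ℝ)*γ - 1 ≤ (wsum y i k : ℝ) ∧ (wsum y i k : ℝ) ≤ (k:ℝ)*γ + 1) ∧
      y ∈ Qset γ := by
  have hcoord : ∀ i : ℤ, ∀ᶠ n in atTop, yseq n i = y i := by
    intro i
    have t := tendsto_pi_nhds.mp hconv i
    have hs : {y i} ∈ nhds (y i) := IsOpen.mem_nhds (isOpen_discrete _) rfl
    filter_upwards [t hs] with n hn
    exact hn
  have hwin : ∀ (i : ℤ) (k : ℕ), ∀ᶠ n in atTop, wsum (yseq n) i k = wsum y i k := by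
    intro i k
    have := (Filter.eventually_all_finset (Finset.range k)).2
      (fun j _ => hcoord (i + (j:ℤ)))
    filter_upwards [this] with n hn
    exact Finset.sum_congr rfl fun j hj => hn j hj
  have hBn : ∀ n, yseq n ∈ Bset (γseq n) := fun n => sturmSystem_subset_Bset _ (hmem n)
  have hbound : ∀ (n : ℕ) (i : ℤ) (k : ℕ),
      (k:ℝ) * γseq n - 1 ≤ (wsum (yseq n) i k : ℝ) ∧
      (wsum (yseq n) i k : ℝ) ≤ (k:ℝ) * γseq n + 1 := by
    intro n i k
    obtain ⟨h1, h2⟩ := hBn n i k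
    have f1 := Int.floor_le ((k:ℝ) * γseq n)
    have f2 := Int.lt_floor_add_one ((k:ℝ) * γseq n)
    constructor
    · have : ((⌊(k:ℝ) * γseq n⌋ : ℤ) : ℝ) ≤ (wsum (yseq n) i k : ℝ) := by exact_mod_cast h1
      linarith
    · have : (wsum (yseq n) i k : ℝ) ≤ ((⌊(k:ℝ) * γseq n⌋ + 1 : ℤ) : ℝ) := by exact_mod_cast h2
      push_cast at this
      linarith
  have hcauchy : CauchySeq γseq := by
    rw [Metric.cauchySeq_iff]
    intro ε hε
    obtain ⟨k, hk⟩ := exists_nat_gt (2 / ε)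
    have hk1 : 1 ≤ k := by
      by_contra h
      push_neg at h
      interval_cases k
      simp at hk
      nlinarith [div_pos (by norm_num : (0:ℝ) < 2) hε]
    have hkR : (0:ℝ) < (k:ℝ) := by exact_mod_cast hk1
    obtain ⟨N, hN⟩ := eventually_atTop.mp (hwin 0 k)
    refine ⟨N, fun m hm n hn => ?_⟩
    have bm := hbound m 0 k
    have bn := hbound n 0 k
    rw [hN m hm] at bm
    rw [hN n hn] at bn
    have h2k : 2 / (k:ℝ) < ε := by
      rw [div_lt_iff₀ hkR]
      have := (div_lt_iff₀ hε).mp hk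
      nlinarith
    rw [Real.dist_eq]
    have key : |(k:ℝ) * (γseq m - γseq n)| ≤ 2 := by
      rw [abs_le, mul_sub]
      constructor <;> linarith [bm.1, bm.2, bn.1, bn.2]
    have : |γseq m - γseq n| ≤ 2 / (k:ℝ) := by
      rw [le_div_iff₀ hkR]
      calc |γseq m - γseq n| * (k:ℝ) = |(k:ℝ) * (γseq m - γseq n)| := by
            rw [abs_mul, abs_of_pos hkR]; ring
        _ ≤ 2 := key
    linarith
  obtain ⟨γ, hγ⟩ := cauchySeq_tendsto_of_complete hcauchy
  refine ⟨γ, hγ, ?_, ?_⟩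
  · intro i k
    constructor
    · have T : Tendsto (fun n => (k:ℝ) * γseq n - 1) atTop (nhds ((k:ℝ) * γ - 1)) :=
        (hγ.const_mul _).sub_const 1
      refine le_of_tendsto T ?_
      filter_upwards [hwin i k] with n hn
      have := (hbound n i k).1
      rw [hn] at this
      exact this
    · have T : Tendsto (fun n => (k:ℝ) * γseq n + 1) atTop (nhds ((k:ℝ) * γ + 1)) :=
        (hγ.const_mul _).add_const 1
      refine ge_of_tendsto T ?_
      filter_upwards [hwin i k] with n hn
      have := (hbound n i k).2
      rw [hn] at this
      exact this
  · by_contra hq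
    simp only [Qset, Set.mem_compl_iff, not_not] at hq
    obtain ⟨⟨i, k, hk, hik⟩, ⟨j, l, hl, hjl⟩⟩ := hq
    obtain ⟨n, hn1, hn2⟩ := ((hwin i k).and (hwin j l)).exists
    have := sturmSystem_subset_Qset γ (γseq n) (hmem n)
    simp only [Qset, Set.mem_compl_iff, not_not] at this
    exact this ⟨⟨i, k, hk, by rw [hn1]; exact hik⟩, ⟨j, l, hl, by rw [hn2]; exact hjl⟩⟩

/-- if `F` is exactly a floor sequence with intercept in `(1/b)ℤ`, then the difference
sequence is an exact shift of the Sturmian sequence -/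
lemma exists_shift_of_floor_form (γ : ℝ) (a b : ℤ) (hb : 0 < b) (hab : Int.gcd a b = 1)
    (hγ : γ = (a : ℝ) / (b : ℝ)) (c' : ℤ) (y : ℤ → ℤ) (F : ℤ → ℤ)
    (hy : ∀ i, y i = F (i + 1) - F i)
    (hF : ∀ i : ℤ, F i = ⌊(i : ℝ) * γ + (c' : ℝ) / (b : ℝ)⌋) :
    y ∈ sturmSystem γ := by
  have hbR : (0 : ℝ) < (b : ℝ) := by exact_mod_cast hb
  have hbezout : a * Int.gcdA a b + b * Int.gcdB a b = 1 := by
    have := Int.gcd_eq_gcd_ab a b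
    rw [hab] at this
    exact_mod_cast this.symm
  set u := Int.gcdA a b
  set v := Int.gcdB a b
  set n := c' * u with hn
  have hna : n * a = c' + b * (-(c' * v)) := by
    have : n * a = c' * (a * u) := by rw [hn]; ring
    rw [this, show a * u = 1 - b * v by linarith [hbezout]]
    ring
  set t := -(c' * v)
  have hnγ : (n : ℝ) * γ = (c' : ℝ) / (b : ℝ) + (t : ℝ) := by
    rw [hγ]
    field_simp
    have : (n : ℝ) * (a : ℝ) = (c' : ℝ) + (b : ℝ) * (t : ℝ) := by exact_mod_cast congrArg (Int.cast : ℤ → ℝ) hna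
    linarith
  apply subset_closure
  refine ⟨n, funext fun i => ?_⟩
  have key : ∀ j : ℤ, ⌊((j + n : ℤ) : ℝ) * γ⌋ = ⌊(j : ℝ) * γ + (c' : ℝ) / (b : ℝ)⌋ + t := by
    intro j
    have e : ((j + n : ℤ) : ℝ) * γ = ((j : ℝ) * γ + (c' : ℝ) / (b : ℝ)) + (t : ℝ) := by
      push_cast
      rw [add_mul, hnγ]
      ring
    rw [e, Int.floor_add_intCast]
  rw [hy i, sturmSeq]
  have e1 : ((i + n : ℤ) : ℝ) + 1 = ((i + 1 + n : ℤ) : ℝ) := by push_cast; ring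
  rw [e1, key (i + 1), key i, hF (i+1), hF i]
  push_cast
  ring

lemma dense_subgroup (γ : ℝ) (hirr : ¬∃ r : ℚ, γ = (r : ℝ)) :
    Dense {x : ℝ | ∃ n m : ℤ, x = n * γ + m} := by
  set S : AddSubgroup ℝ :=
    { carrier := {x : ℝ | ∃ n m : ℤ, x = n * γ + m}
      zero_mem' := ⟨0, 0, by simp⟩
      add_mem' := by
        rintro x x' ⟨n, m, rfl⟩ ⟨n', m', rfl⟩
        exact ⟨n + n', m + m', by push_cast; ring⟩
      neg_mem' := by
        rintro x ⟨n, m, rfl⟩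
        exact ⟨-n, -m, by push_cast; ring⟩ } with hS
  rcases S.dense_or_cyclic with h | ⟨α, hα⟩
  · exact h
  · exfalso
    have hγS : γ ∈ S := ⟨1, 0, by simp⟩
    have h1S : (1 : ℝ) ∈ S := ⟨0, 1, by simp⟩
    rw [hα, AddSubgroup.mem_closure_singleton] at hγS h1S
    obtain ⟨n, hn⟩ := hγS
    obtain ⟨m, hm⟩ := h1S
    rw [zsmul_eq_mul] at hn hm
    have hm0 : m ≠ 0 := by
      rintro rfl
      simp at hm
    have hmR : (m : ℝ) ≠ 0 := by exact_mod_cast hm0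
    refine hirr ⟨(n : ℚ) / (m : ℚ), ?_⟩
    push_cast
    rw [eq_div_iff hmR, ← hn]
    linear_combination (n : ℝ) * hm

lemma irrational_mem (γ : ℝ) (hirr : ¬∃ r : ℚ, γ = (r : ℝ)) (y F : ℤ → ℤ) (c : ℝ)
    (hy : ∀ i, y i = F (i + 1) - F i)
    (H1a : ∀ i : ℤ, (i : ℝ) * γ + c - 1 ≤ F i)
    (H1b : ∀ i : ℤ, (F i : ℝ) ≤ (i : ℝ) * γ + c) :
    y ∈ sturmSystem γ := by
  have haluniq : ∀ {i j mi mj : ℤ}, (i : ℝ) * γ + c = mi → (j : ℝ) * γ + c = mj → i = j := by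
    intro i j mi mj hi hj
    by_contra hne
    refine hirr ⟨(mi - mj : ℚ) / ((i : ℚ) - (j : ℚ)), ?_⟩
    have hne' : ((i : ℝ) - (j : ℝ)) ≠ 0 := by
      have : (i : ℝ) ≠ (j : ℝ) := by exact_mod_cast hne
      exact sub_ne_zero.mpr this
    push_cast
    rw [eq_div_iff hne']
    linarith [hi, hj]
  -- basic floor facts for unaligned coordinates
  have hFun : ∀ i : ℤ, (¬∃ m : ℤ, (i : ℝ) * γ + c = m) →
      ((F i : ℝ) < (i : ℝ) * γ + c ∧ (i : ℝ) * γ + c < (F i : ℝ) + 1) := by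
    intro i hal
    constructor
    · rcases (H1b i).lt_or_eq with h | h
      · exact h
      · exact absurd ⟨F i, h.symm⟩ hal
    · rcases (H1a i).lt_or_eq with h | h
      · linarith
      · exact absurd ⟨F i + 1, by push_cast; linarith⟩ hal
  apply mem_sturmSystem_of_windows
  intro M
  set J : Finset ℤ := Finset.Icc (-(M : ℤ) - 1) ((M : ℤ) + 1) with hJ
  -- a suitable one-sided neighborhood filter of c
  have main : ∃ x : ℝ, (∃ n m : ℤ, x = n * γ + m) ∧ ∀ i ∈ J, ⌊(i : ℝ) * γ + x⌋ = F i := by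
    by_cases hb1 : ∃ i₀ m₀ : ℤ, ((i₀ : ℝ) * γ + c = m₀) ∧ (F i₀ : ℝ) = (i₀ : ℝ) * γ + c - 1
    · -- approximate from the left
      have hev : ∀ i ∈ J, ∀ᶠ x in nhdsWithin c (Set.Iio c), ⌊(i : ℝ) * γ + x⌋ = F i := by
        intro i _
        by_cases hal : ∃ m : ℤ, (i : ℝ) * γ + c = m
        · obtain ⟨m, hm⟩ := hal
          obtain ⟨i₀, m₀, hm₀, hF₀⟩ := hb1
          have hii : i = i₀ := haluniq hm hm₀
          subst hii
          have hIoo : Set.Ioo (c - 1) c ∈ nhdsWithin c (Set.Iio c) :=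
            Ioo_mem_nhdsLT_of_mem ⟨by linarith, le_refl c⟩
          filter_upwards [hIoo] with x hx
          rw [Int.floor_eq_iff]
          constructor
          · rw [hF₀]; linarith [hx.1]
          · push_cast
            rw [hF₀]
            linarith [hx.2]
        · obtain ⟨h1, h2⟩ := hFun i hal
          have hIoo : Set.Ioo ((F i : ℝ) - (i : ℝ) * γ) ((F i : ℝ) + 1 - (i : ℝ) * γ)
              ∈ nhdsWithin c (Set.Iio c) := by
            apply nhdsWithin_le_nhds
            apply Ioo_mem_nhds <;> linarith
          filter_upwards [hIoo] with x hx
          rw [Int.floor_eq_iff]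
          constructor
          · linarith [hx.1]
          · push_cast; linarith [hx.2]
      have hall := (Filter.eventually_all_finset J).2 hev
      obtain ⟨l', hl', hsub⟩ := mem_nhdsLT_iff_exists_Ioo_subset.mp hall
      obtain ⟨x, hxS, hxI⟩ := (dense_subgroup γ hirr).exists_mem_open isOpen_Ioo
        (Set.nonempty_Ioo.mpr hl')
      exact ⟨x, hxS, hsub hxI⟩
    · -- approximate from the right
      push_neg at hb1
      have hev : ∀ i ∈ J, ∀ᶠ x in nhdsWithin c (Set.Ioi c), ⌊(i : ℝ) * γ + x⌋ = F i := by
        intro i _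
        by_cases hal : ∃ m : ℤ, (i : ℝ) * γ + c = m
        · obtain ⟨m, hm⟩ := hal
          -- F i = m exactly
          have hFm : (F i : ℝ) = (i : ℝ) * γ + c := by
            have h1 := H1a i
            have h2 := H1b i
            rcases h2.lt_or_eq with h2' | h2'
            · exfalso
              apply hb1 i m hm
              -- F i is an integer in [m-1, m), so F i = m - 1
              have hle : (F i : ℝ) ≤ (m : ℝ) - 1 := by
                have h3 : F i < m := by exact_mod_cast hm ▸ h2'
                have h4 : F i + 1 ≤ m := Int.lt_iff_add_one_le.mp h3
                have h5 : ((F i + 1 : ℤ) : ℝ) ≤ (m : ℝ) := by exact_mod_cast h4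
                push_cast at h5
                linarith
              have hge : (m : ℝ) - 1 ≤ (F i : ℝ) := by rw [← hm]; linarith
              rw [hm]
              linarith
            · exact h2'
          have hIoo : Set.Ioo c (c + 1) ∈ nhdsWithin c (Set.Ioi c) :=
            Ioo_mem_nhdsGT_of_mem ⟨le_refl c, by linarith⟩
          filter_upwards [hIoo] with x hx
          rw [Int.floor_eq_iff]
          constructor
          · rw [hFm]; linarith [hx.1]
          · push_cast; rw [hFm]; linarith [hx.2]
        · obtain ⟨h1, h2⟩ := hFun i hal
          have hIoo : Set.Ioo ((F i : ℝ) - (i : ℝ) * γ) ((F i : ℝ) + 1 - (i : ℝ) * γ)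
              ∈ nhdsWithin c (Set.Ioi c) := by
            apply nhdsWithin_le_nhds
            apply Ioo_mem_nhds <;> linarith
          filter_upwards [hIoo] with x hx
          rw [Int.floor_eq_iff]
          constructor
          · linarith [hx.1]
          · push_cast; linarith [hx.2]
      have hall := (Filter.eventually_all_finset J).2 hev
      obtain ⟨r', hr', hsub⟩ := mem_nhdsGT_iff_exists_Ioo_subset.mp hall
      obtain ⟨x, hxS, hxI⟩ := (dense_subgroup γ hirr).exists_mem_open isOpen_Ioo
        (Set.nonempty_Ioo.mpr hr')
      exact ⟨x, hxS, hsub hxI⟩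
  obtain ⟨x, ⟨n, m, rfl⟩, hx⟩ := main
  refine ⟨n, fun i hi => ?_⟩
  have hiJ : i ∈ J := by
    rw [hJ, Finset.mem_Icc]
    rw [Int.abs_eq_natAbs] at hi
    omega
  have hi1J : i + 1 ∈ J := by
    rw [hJ, Finset.mem_Icc]
    rw [Int.abs_eq_natAbs] at hi
    omega
  have key : ∀ j : ℤ, j ∈ J → ⌊((j + n : ℤ) : ℝ) * γ⌋ = F j - m := by
    intro j hj
    have e : ((j + n : ℤ) : ℝ) * γ = ((j : ℝ) * γ + ((n : ℝ) * γ + (m : ℝ))) + ((-m : ℤ) : ℝ) := by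
      push_cast; ring
    rw [e, Int.floor_add_intCast, hx j hj]
    ring
  rw [hy i, sturmSeq]
  have e1 : ((i + n : ℤ) : ℝ) + 1 = ((i + 1 + n : ℤ) : ℝ) := by push_cast; ring
  rw [e1, key (i + 1) hi1J, key i hiJ]
  ring

lemma mono_thresholds_core (E : ℤ → ℤ) (h01 : ∀ t, E t = 0 ∨ E t = 1)
    (hm : ∀ t s : ℤ, t ≤ s → E t ≤ E s) :
    (∃ T1 : ℤ, ∀ t, T1 ≤ t → E t = E T1) ∧ (∃ T0 : ℤ, ∀ t, t ≤ T0 → E t = E T0) := by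
  constructor
  · by_cases h : ∃ t, E t = 1
    · obtain ⟨t1, ht1⟩ := h
      exact ⟨t1, fun t ht => by have := hm t1 t ht; rcases h01 t with h' | h' <;> omega⟩
    · push_neg at h
      refine ⟨0, fun t _ => ?_⟩
      rcases h01 t with h' | h' <;> rcases h01 0 with h'' | h'' <;> first | omega | exact absurd h' (h t) | exact absurd h'' (h 0)
  · by_cases h : ∃ t, E t = 0
    · obtain ⟨t0, ht0⟩ := h
      exact ⟨t0, fun t ht => by have := hm t t0 ht; rcases h01 t with h' | h' <;> omega⟩
    · push_neg at h
      refine ⟨0, fun t _ => ?_⟩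
      rcases h01 t with h' | h' <;> rcases h01 0 with h'' | h'' <;> first | omega | exact absurd h' (h t) | exact absurd h'' (h 0)

lemma mono_thresholds (E : ℤ → ℤ) (h01 : ∀ t, E t = 0 ∨ E t = 1)
    (hm : (∀ t s : ℤ, t ≤ s → E t ≤ E s) ∨ (∀ t s : ℤ, t ≤ s → E s ≤ E t)) :
    (∃ T1 : ℤ, ∀ t, T1 ≤ t → E t = E T1) ∧ (∃ T0 : ℤ, ∀ t, t ≤ T0 → E t = E T0) := by
  rcases hm with hm | hm
  · exact mono_thresholds_core E h01 hm
  · have h01' : ∀ t, (1 - E t) = 0 ∨ (1 - E t) = 1 := fun t => by rcases h01 t with h | h <;> omega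
    have hm' : ∀ t s : ℤ, t ≤ s → (1 - E t) ≤ (1 - E s) := fun t s hts => by
      have := hm t s hts; omega
    obtain ⟨⟨T1, hT1⟩, ⟨T0, hT0⟩⟩ := mono_thresholds_core (fun t => 1 - E t) h01' hm'
    exact ⟨⟨T1, fun t ht => by have := hT1 t ht; omega⟩, ⟨T0, fun t ht => by have := hT0 t ht; omega⟩⟩

lemma mono_periodic_const (E : ℤ → ℤ) (P' : ℤ) (hP' : 1 ≤ P')
    (hshift : ∀ t, E (t + P') = E t)
    (hm : (∀ t s : ℤ, t ≤ s → E t ≤ E s) ∨ (∀ t s : ℤ, t ≤ s → E s ≤ E t)) :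
    ∀ t, E t = E 0 := by
  have hmul : ∀ (k : ℕ) (t : ℤ), E (t + k * P') = E t := by
    intro k
    induction k with
    | zero => intro t; simp
    | succ k ih =>
      intro t
      have e : t + ((k + 1 : ℕ) : ℤ) * P' = (t + (k : ℕ) * P') + P' := by push_cast; ring
      rw [e, hshift, ih]
  intro t
  set k := t.natAbs with hk
  have h1 : E ((k : ℤ) * P') = E 0 := by
    have := hmul k 0
    rwa [zero_add] at this
  have h2 : E (-((k : ℤ) * P')) = E 0 := by
    have := hmul k (-((k : ℤ) * P'))
    rw [neg_add_cancel] at this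
    exact this.symm
  have hkb : (k : ℤ) ≤ (k : ℤ) * P' := le_mul_of_one_le_right (by positivity) hP'
  have hub : t ≤ (k : ℤ) * P' := by omega
  have hlb : -((k : ℤ) * P') ≤ t := by omega
  rcases hm with hm | hm
  · exact le_antisymm (h1 ▸ hm t _ hub) (h2 ▸ hm _ t hlb)
  · exact le_antisymm (h2 ▸ hm _ t hlb) (h1 ▸ hm t _ hub)

lemma rational_case (γ : ℝ) (r : ℚ) (hγr : γ = (r : ℝ)) (y F : ℤ → ℤ) (c : ℝ)
    (hy : ∀ i, y i = F (i + 1) - F i)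
    (H1a : ∀ i : ℤ, (i : ℝ) * γ + c - 1 ≤ F i)
    (H1b : ∀ i : ℤ, (F i : ℝ) ≤ (i : ℝ) * γ + c)
    (Hmono : (∀ i j : ℤ, i ≤ j → (F j : ℝ) - F i < ((j : ℝ) - (i : ℝ)) * γ + 1)
           ∨ (∀ i j : ℤ, i ≤ j → ((j : ℝ) - (i : ℝ)) * γ - 1 < (F j : ℝ) - F i)) :
    y ∈ sturmSystem γ ∨
      ((¬ ∃ p : ℤ, 1 ≤ p ∧ ∀ i : ℤ, y (i + p) = y i) ∧
       (∃ N : ℤ, 0 ≤ N ∧ ∃ p q : ℤ, 1 ≤ p ∧ 1 ≤ q ∧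
          (∀ i : ℤ, N ≤ i → y (i + p) = y i) ∧
          (∀ i : ℤ, i ≤ -N → y (i - q) = y i))) := by
  set a : ℤ := r.num with ha
  set b : ℤ := (r.den : ℤ) with hbdef
  have hb : 0 < b := by positivity
  have hbR : (0 : ℝ) < (b : ℝ) := by exact_mod_cast hb
  have hbR1 : (1 : ℝ) ≤ (b : ℝ) := by exact_mod_cast hb
  have hab : Int.gcd a b = 1 := by
    have := r.reduced
    simpa [Int.gcd, ha, hbdef] using this
  have hγ : γ = (a : ℝ) / (b : ℝ) := by
    rw [hγr, Rat.cast_def, ha, hbdef]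
    push_cast
    ring
  have hbγ : (b : ℝ) * γ = (a : ℝ) := by
    rw [hγ]; field_simp
  have hcop : IsCoprime b a := (Int.isCoprime_iff_gcd_eq_one.mpr hab).symm
  by_cases hal : ∃ i₁ m₁ : ℤ, (i₁ : ℝ) * γ + c = (m₁ : ℝ)
  case neg =>
    -- no aligned site: F is exactly a floor sequence with rational intercept
    left
    push_neg at hal
    refine exists_shift_of_floor_form γ a b hb hab hγ ⌊(b : ℝ) * c⌋ y F hy ?_
    intro i
    have h1 : (F i : ℝ) < (i : ℝ) * γ + c := by
      rcases (H1b i).lt_or_eq with h | h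
      · exact h
      · exact absurd h.symm (hal i (F i))
    have h2 : (i : ℝ) * γ + c < (F i : ℝ) + 1 := by
      rcases (H1a i).lt_or_eq with h | h
      · linarith
      · exact absurd (by push_cast; linarith : (i:ℝ)*γ + c = ((F i + 1 : ℤ) : ℝ)) (hal i (F i + 1))
    have hfl : (b : ℤ) * F i - i * a ≤ ⌊(b : ℝ) * c⌋ := by
      apply Int.le_floor.mpr
      have e : ((b * F i - i * a : ℤ) : ℝ) = (b : ℝ) * (F i : ℝ) - (i : ℝ) * ((b : ℝ) * γ) := by
        rw [hbγ]; push_cast; ring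
      rw [e]
      nlinarith [h1]
    symm
    rw [Int.floor_eq_iff]
    have hflR : ((b : ℝ)) * (F i : ℝ) - (i : ℝ) * (a : ℝ) ≤ ((⌊(b:ℝ)*c⌋ : ℤ) : ℝ) := by
      have : ((b * F i - i * a : ℤ) : ℝ) ≤ ((⌊(b:ℝ)*c⌋ : ℤ) : ℝ) := by exact_mod_cast hfl
      push_cast at this
      linarith
    have hfloorle : ((⌊(b:ℝ)*c⌋ : ℤ) : ℝ) ≤ (b : ℝ) * c := Int.floor_le _
    constructor
    · calc (F i : ℝ) ≤ ((i : ℝ) * (a : ℝ) + ((⌊(b:ℝ)*c⌋ : ℤ) : ℝ)) / (b : ℝ) := by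
            rw [le_div_iff₀ hbR]; linarith
        _ = (i : ℝ) * γ + ((⌊(b:ℝ)*c⌋ : ℤ) : ℝ) / (b : ℝ) := by rw [hγ]; field_simp
    · have : ((⌊(b:ℝ)*c⌋ : ℤ) : ℝ) / (b : ℝ) ≤ c := by
        rw [div_le_iff₀ hbR]; linarith
      push_cast
      linarith
  case pos =>
    obtain ⟨i₁, m₁, hal₁⟩ := hal
    have halval : ∀ t : ℤ, ((i₁ + t * b : ℤ) : ℝ) * γ + c = ((m₁ + t * a : ℤ) : ℝ) := by
      intro t
      push_cast
      linear_combination hal₁ + (t : ℝ) * hbγ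
    have haldvd : ∀ i m : ℤ, (i : ℝ) * γ + c = (m : ℝ) → b ∣ (i - i₁) := by
      intro i m him
      have h5 : ((i : ℝ) - (i₁ : ℝ)) * γ = (m : ℝ) - (m₁ : ℝ) := by linarith
      have hreal : ((i - i₁ : ℤ) : ℝ) * (a : ℝ) = (b : ℝ) * ((m - m₁ : ℤ) : ℝ) := by
        push_cast
        calc ((i:ℝ) - (i₁:ℝ)) * (a:ℝ) = ((i:ℝ) - (i₁:ℝ)) * ((b:ℝ) * γ) := by rw [hbγ]
          _ = (b:ℝ) * (((i:ℝ) - (i₁:ℝ)) * γ) := by ring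
          _ = (b:ℝ) * ((m:ℝ) - (m₁:ℝ)) := by rw [h5]
      have hint : (i - i₁) * a = b * (m - m₁) := by exact_mod_cast hreal
      exact hcop.dvd_of_dvd_mul_right ⟨m - m₁, hint⟩
    set E : ℤ → ℤ := fun t => m₁ + t * a - F (i₁ + t * b) with hE
    have hE01 : ∀ t, E t = 0 ∨ E t = 1 := by
      intro t
      have h1 := H1a (i₁ + t * b)
      have h2 := H1b (i₁ + t * b)
      rw [halval t] at h1 h2
      have h1' : (m₁ + t * a - 1 : ℤ) ≤ F (i₁ + t * b) := by exact_mod_cast h1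
      have h2' : F (i₁ + t * b) ≤ (m₁ + t * a : ℤ) := by exact_mod_cast h2
      simp only [hE]
      omega
    have hEmono : (∀ t s : ℤ, t ≤ s → E t ≤ E s) ∨ (∀ t s : ℤ, t ≤ s → E s ≤ E t) := by
      have hcastdiff : ∀ t s : ℤ, (((i₁ + s * b : ℤ) : ℝ) - ((i₁ + t * b : ℤ) : ℝ)) * γ
          = ((s * a : ℤ) : ℝ) - ((t * a : ℤ) : ℝ) := by
        intro t s
        push_cast
        linear_combination (s - t : ℝ) * hbγ
      rcases Hmono with hM | hM
      · left
        intro t s hts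
        have hij : i₁ + t * b ≤ i₁ + s * b := by
          have := mul_le_mul_of_nonneg_right hts hb.le
          omega
        have h := hM _ _ hij
        rw [hcastdiff t s] at h
        have hi : F (i₁ + s * b) - F (i₁ + t * b) < s * a - t * a + 1 := by exact_mod_cast h
        simp only [hE]
        omega
      · right
        intro t s hts
        have hij : i₁ + t * b ≤ i₁ + s * b := by
          have := mul_le_mul_of_nonneg_right hts hb.le
          omega
        have h := hM _ _ hij
        rw [hcastdiff t s] at h
        have hi : s * a - t * a - 1 < F (i₁ + s * b) - F (i₁ + t * b) := by exact_mod_cast h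
        simp only [hE]
        omega
    -- unaligned sites: quantitative floor sandwich
    have hVval : ∀ i : ℤ, ((i * a - i₁ * a + m₁ * b : ℤ) : ℝ) = (b : ℝ) * ((i : ℝ) * γ + c) := by
      intro i
      push_cast
      linear_combination ((i₁ : ℝ) - (i : ℝ)) * hbγ - (b : ℝ) * hal₁
    have hFgap : ∀ i : ℤ, ¬ (b ∣ (i - i₁)) →
        ((F i : ℝ) ≤ (i : ℝ) * γ + c - 1 / (b : ℝ) ∧
         (i : ℝ) * γ + c ≤ (F i : ℝ) + 1 - 1 / (b : ℝ)) := by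
      intro i hnd
      have hnal : ∀ m : ℤ, (i : ℝ) * γ + c ≠ (m : ℝ) := fun m hm => hnd (haldvd i m hm)
      set V : ℤ := i * a - i₁ * a + m₁ * b with hV
      have hVR := hVval i
      constructor
      · have hlt : (F i : ℝ) < (i : ℝ) * γ + c := (H1b i).lt_or_eq.resolve_right fun h => hnal (F i) h.symm
        have hbF : b * F i < V := by
          have : (b : ℝ) * (F i : ℝ) < ((V : ℤ) : ℝ) := by rw [hVR]; nlinarith
          exact_mod_cast this
        have hbF1 : ((b * F i + 1 : ℤ) : ℝ) ≤ ((V : ℤ) : ℝ) := by exact_mod_cast hbF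
        push_cast at hbF1
        rw [show (i : ℝ) * γ + c - 1 / (b:ℝ) = (((V:ℤ):ℝ) - 1) / (b:ℝ) by rw [hVR]; field_simp, le_div_iff₀ hbR]
        linarith
      · have hlt : (i : ℝ) * γ + c < (F i : ℝ) + 1 := by
          rcases (H1a i).lt_or_eq with h | h
          · linarith
          · exact absurd (by push_cast; linarith : (i:ℝ)*γ + c = ((F i + 1 : ℤ):ℝ)) (hnal (F i + 1))
        have hbF : V < b * (F i + 1) := by
          have : ((V : ℤ) : ℝ) < (b : ℝ) * ((F i : ℝ) + 1) := by rw [hVR]; nlinarith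
          exact_mod_cast this
        have hbF1 : ((V + 1 : ℤ) : ℝ) ≤ ((b * (F i + 1) : ℤ) : ℝ) := by exact_mod_cast hbF
        push_cast at hbF1
        rw [show (i : ℝ) * γ + c = ((V:ℤ):ℝ) / (b:ℝ) by rw [hVR]; field_simp; try ring]
        rw [div_le_iff₀ hbR]
        have e : ((F i : ℝ) + 1 - 1/(b:ℝ)) * (b:ℝ) = (b:ℝ) * ((F i : ℝ) + 1) - 1 := by
          field_simp
        rw [e]
        linarith
    have hFun_floor : ∀ i : ℤ, ¬ (b ∣ (i - i₁)) → F i = ⌊(i : ℝ) * γ + c⌋ := by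
      intro i hnd
      obtain ⟨hg1, hg2⟩ := hFgap i hnd
      have hpos : 0 < 1 / (b : ℝ) := by positivity
      symm
      rw [Int.floor_eq_iff]
      constructor
      · linarith
      · push_cast; linarith
    -- the aligned value of F
    have hFal : ∀ t : ℤ, F (i₁ + t * b) = m₁ + t * a - E t := by
      intro t; simp only [hE]; ring
    have h1bpos : 0 < 1 / (b : ℝ) := by positivity
    have h1ble : (1 : ℝ) / (b : ℝ) ≤ 1 := by rw [div_le_one hbR]; exact hbR1
    by_cases hEc : ∀ t, E t = E 0
    · -- E constant: exact floor sequence, hence a shift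
      left
      set e0 : ℤ := E 0 with he0def
      have he0 : e0 = 0 ∨ e0 = 1 := hE01 0
      have hbc : (b : ℝ) * c = (m₁ : ℝ) * (b : ℝ) - (i₁ : ℝ) * (a : ℝ) := by
        linear_combination (b : ℝ) * hal₁ - (i₁ : ℝ) * hbγ
      set c₁ : ℤ := m₁ * b - i₁ * a - e0 with hc₁def
      have hc₁ : ((c₁ : ℤ) : ℝ) / (b : ℝ) = c - (e0 : ℝ) / (b : ℝ) := by
        rw [hc₁def]
        push_cast
        field_simp
        linarith
      refine exists_shift_of_floor_form γ a b hb hab hγ c₁ y F hy ?_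
      intro i
      symm
      rw [Int.floor_eq_iff, hc₁]
      by_cases hdv : b ∣ (i - i₁)
      · obtain ⟨t, ht⟩ := hdv
        have hi : i = i₁ + t * b := by rw [mul_comm] at ht; omega
        have hFi : F i = m₁ + t * a - e0 := by rw [hi, hFal t, hEc t]
        have hval : (i : ℝ) * γ + c = ((m₁ + t * a : ℤ) : ℝ) := by
          rw [hi]; exact_mod_cast halval t
        have hFiR : (F i : ℝ) = ((m₁ + t * a : ℤ) : ℝ) - (e0 : ℝ) := by
          rw [hFi]; push_cast; ring
        constructor
        · rcases he0 with h | h <;>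
            (rw [h] at hFiR ⊢; push_cast at hFiR hval ⊢; linarith [zero_div ((b : ℤ) : ℝ)])
        · rcases he0 with h | h <;>
            (rw [h] at hFiR ⊢; push_cast at hFiR hval ⊢; linarith [zero_div ((b : ℤ) : ℝ)])
      · obtain ⟨hg1, hg2⟩ := hFgap i hdv
        have hH := H1b i
        constructor
        · rcases he0 with h | h <;> (rw [h]; push_cast; linarith [zero_div ((b : ℤ) : ℝ)])
        · rcases he0 with h | h <;> (rw [h]; push_cast; linarith [zero_div ((b : ℤ) : ℝ)])
    · -- E not constant: the exceptional case
      right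
      push_neg at hEc
      obtain ⟨t₂, ht₂⟩ := hEc
      obtain ⟨⟨T1, hT1⟩, ⟨T0, hT0⟩⟩ := mono_thresholds E hE01 hEmono
      -- step lemmas
      have hdvshift : ∀ j : ℤ, (b ∣ (j + b - i₁)) ↔ (b ∣ (j - i₁)) := by
        intro j
        constructor
        · rintro ⟨k, hk⟩
          exact ⟨k - 1, by rw [mul_sub, mul_one]; omega⟩
        · rintro ⟨k, hk⟩
          exact ⟨k + 1, by rw [mul_add, mul_one]; omega⟩
      have hflshift : ∀ j : ℤ, ¬ (b ∣ (j - i₁)) → F (j + b) = F j + a := by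
        intro j hnd
        have hnd2 : ¬ (b ∣ (j + b - i₁)) := fun h => hnd ((hdvshift j).mp h)
        rw [hFun_floor _ hnd, hFun_floor _ hnd2]
        have e : ((j + b : ℤ) : ℝ) * γ + c = ((j : ℤ) : ℝ) * γ + c + ((a : ℤ) : ℝ) := by
          push_cast
          linear_combination hbγ
        rw [e, Int.floor_add_intCast]
      have hstepR : ∀ j : ℤ, i₁ + T1 * b ≤ j → F (j + b) = F j + a := by
        intro j hj
        by_cases hdv : b ∣ (j - i₁)
        · obtain ⟨t, ht⟩ := hdv
          have hi : j = i₁ + t * b := by rw [mul_comm] at ht; omega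
          have htT : T1 ≤ t := by
            by_contra hc
            push_neg at hc
            have : t * b < T1 * b := by
              apply mul_lt_mul_of_pos_right hc hb
            omega
          rw [hi, show i₁ + t * b + b = i₁ + (t + 1) * b by ring, hFal t, hFal (t+1),
            hT1 t htT, hT1 (t+1) (by omega)]
          ring
        · exact hflshift j hdv
      have hstepL : ∀ j : ℤ, j + b ≤ i₁ + T0 * b → F (j + b) = F j + a := by
        intro j hj
        by_cases hdv : b ∣ (j - i₁)
        · obtain ⟨t, ht⟩ := hdv
          have hi : j = i₁ + t * b := by rw [mul_comm] at ht; omega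
          have htT : t + 1 ≤ T0 := by
            by_contra hc
            push_neg at hc
            have : T0 * b < (t + 1) * b := by
              apply mul_lt_mul_of_pos_right hc hb
            have : T0 * b < t * b + b := by rw [add_mul, one_mul] at this; omega
            omega
          rw [hi, show i₁ + t * b + b = i₁ + (t + 1) * b by ring, hFal t, hFal (t+1),
            hT0 t (by omega), hT0 (t+1) htT]
          ring
        · exact hflshift j hdv
      constructor
      · -- aperiodicity
        rintro ⟨P, hP, hper⟩
        have hK : ∀ i : ℤ, F (i + P) = F i + (F P - F 0) := by
          intro i
          induction i using Int.induction_on with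
          | zero => simp
          | succ k ih =>
            have e1 : (k : ℤ) + 1 + P = ((k : ℤ) + P) + 1 := by ring
            have e2 : F (((k : ℤ) + P) + 1) = F ((k : ℤ) + P) + y ((k : ℤ) + P) := by
              rw [hy ((k : ℤ) + P)]; ring
            rw [e1, e2, hper, ih, hy (k : ℤ)]
            ring
          | pred k ih =>
            have e1 : (-(k : ℤ) - 1 + P) + 1 = -(k : ℤ) + P := by ring
            have e2 : F ((-(k : ℤ) - 1 + P) + 1) = F (-(k : ℤ) - 1 + P) + y (-(k : ℤ) - 1 + P) := by
              rw [hy (-(k : ℤ) - 1 + P)]; ring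
            rw [e1] at e2
            rw [hper (-(k:ℤ) - 1)] at e2
            have e3 : y (-(k : ℤ) - 1) = F (-(k : ℤ)) - F (-(k : ℤ) - 1) := by
              have := hy (-(k : ℤ) - 1)
              rw [show -(k : ℤ) - 1 + 1 = -(k : ℤ) by ring] at this
              omega
            omega
        set d : ℤ := F P - F 0 with hd
        have hnP : ∀ n : ℤ, F (n * P) = F 0 + n * d := by
          intro n
          induction n using Int.induction_on with
          | zero => simp
          | succ k ih =>
            have e1 : ((k : ℤ) + 1) * P = (k : ℤ) * P + P := by ring
            rw [e1, hK ((k : ℤ) * P), ih]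
            ring
          | pred k ih =>
            have e1 : (-(k : ℤ)) * P = (-(k : ℤ) - 1) * P + P := by ring
            rw [e1, hK ((-(k : ℤ) - 1) * P)] at ih
            have : F ((-(k:ℤ) - 1) * P) = F 0 + (-(k:ℤ)) * d - d := by omega
            rw [this]
            ring
        have hdγ : (d : ℝ) = (P : ℝ) * γ := by
          by_contra hne
          have hbound2 : ∀ n : ℤ, (n : ℝ) * ((d : ℝ) - (P : ℝ) * γ) ≤ c - (F 0 : ℝ) ∧
              c - 1 - (F 0 : ℝ) ≤ (n : ℝ) * ((d : ℝ) - (P : ℝ) * γ) := by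
            intro n
            have h1 := H1a (n * P)
            have h2 := H1b (n * P)
            rw [hnP n] at h1 h2
            push_cast at h1 h2
            constructor <;> nlinarith [h1, h2]
          set δ : ℝ := (d : ℝ) - (P : ℝ) * γ with hδ
          have hδne : δ ≠ 0 := fun h => hne (by linarith [sub_eq_zero.mp h])
          rcases hδne.lt_or_gt with hneg | hpos
          · -- δ < 0 : choose n large so n δ < c - 1 - F 0
            set n : ℤ := ⌊(c - 1 - (F 0 : ℝ)) / δ⌋ + 1 with hn
            have h1 : ((c - 1 - (F 0 : ℝ)) / δ) < (n : ℝ) := by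
              rw [hn]; push_cast; exact Int.lt_floor_add_one _
            have h2 : (n : ℝ) * δ < c - 1 - (F 0 : ℝ) := by
              have := (div_lt_iff_of_neg hneg).mp h1
              linarith
            exact absurd (hbound2 n).2 (by linarith)
          · set n : ℤ := ⌊(c - (F 0 : ℝ)) / δ⌋ + 1 with hn
            have h1 : ((c - (F 0 : ℝ)) / δ) < (n : ℝ) := by
              rw [hn]; push_cast; exact Int.lt_floor_add_one _
            have h2 : c - (F 0 : ℝ) < (n : ℝ) * δ := by
              rw [div_lt_iff₀ hpos] at h1
              linarith
            exact absurd (hbound2 n).1 (by linarith)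
        have hdb : d * b = P * a := by
          have : (d : ℝ) * (b : ℝ) = (P : ℝ) * (a : ℝ) := by
            rw [hdγ]
            linear_combination (P : ℝ) * hbγ
          exact_mod_cast this
        have hbP : b ∣ P := by
          refine hcop.dvd_of_dvd_mul_right ⟨d, ?_⟩
          linarith [hdb]
        obtain ⟨P', hP'⟩ := hbP
        have hP'pos : 1 ≤ P' := by
          by_contra hc
          push_neg at hc
          have : b * P' ≤ 0 := mul_nonpos_of_nonneg_of_nonpos hb.le (by omega)
          omega
        have hda : d = P' * a := by
          have : d * b = (P' * a) * b := by rw [hdb, hP']; ring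
          exact mul_right_cancel₀ hb.ne' this
        have hEshift : ∀ t, E (t + P') = E t := by
          intro t
          have e1 : i₁ + (t + P') * b = (i₁ + t * b) + P := by rw [hP']; ring
          simp only [hE]
          rw [e1, hK (i₁ + t * b), hda]
          ring
        have := mono_periodic_const E P' hP'pos hEshift hEmono
        exact ht₂ (this t₂)
      · -- eventually periodic on both sides
        refine ⟨max 0 (max (i₁ + T1 * b) (1 - (i₁ + T0 * b))), le_max_left _ _, b, b,
          hb, hb, ?_, ?_⟩
        · intro i hi
          have hmax1 : i₁ + T1 * b ≤ max (i₁ + T1 * b) (1 - (i₁ + T0 * b)) := le_max_left _ _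
          have hmax2 : max (i₁ + T1 * b) (1 - (i₁ + T0 * b)) ≤
              max 0 (max (i₁ + T1 * b) (1 - (i₁ + T0 * b))) := le_max_right _ _
          have hi1 : i₁ + T1 * b ≤ i := by linarith
          rw [hy (i + b), hy i, hstepR i hi1, show i + b + 1 = (i + 1) + b by ring,
            hstepR (i + 1) (by linarith)]
          ring
        · intro i hi
          have hmax1 : 1 - (i₁ + T0 * b) ≤ max (i₁ + T1 * b) (1 - (i₁ + T0 * b)) := le_max_right _ _
          have hmax2 : max (i₁ + T1 * b) (1 - (i₁ + T0 * b)) ≤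
              max 0 (max (i₁ + T1 * b) (1 - (i₁ + T0 * b))) := le_max_right _ _
          have hi1 : i ≤ i₁ + T0 * b - 1 := by linarith
          have e1 : F (i - b + b) = F (i - b) + a := hstepL (i - b) (by linarith)
          have e2 : F (i + 1 - b + b) = F (i + 1 - b) + a := hstepL (i + 1 - b) (by linarith)
          rw [show i - b + b = i by ring] at e1
          rw [show i + 1 - b + b = i + 1 by ring] at e2
          rw [hy (i - b), hy i, show i - b + 1 = i + 1 - b by ring, e1, e2]
          ring

theorem main_dichotomy (γ : ℝ) (y : ℤ → ℤ)
    (hB : ∀ (i : ℤ) (k : ℕ), (k:ℝ)*γ - 1 ≤ (wsum y i k : ℝ) ∧ (wsum y i k : ℝ) ≤ (k:ℝ)*γ + 1)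
    (hQ : y ∈ Qset γ) :
    y ∈ sturmSystem γ ∨
      ((∃ r : ℚ, γ = (r : ℝ)) ∧
       (¬ ∃ p : ℤ, 1 ≤ p ∧ ∀ i : ℤ, y (i + p) = y i) ∧
       (∃ N : ℤ, 0 ≤ N ∧ ∃ p q : ℤ, 1 ≤ p ∧ 1 ≤ q ∧
          (∀ i : ℤ, N ≤ i → y (i + p) = y i) ∧
          (∀ i : ℤ, i ≤ -N → y (i - q) = y i))) := by
  have hyF : ∀ i, y i = Fsum y (i + 1) - Fsum y i := fun i => by rw [Fsum_succ]; ring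
  -- real difference bounds
  have hBF : ∀ i j : ℤ, i ≤ j →
      ((j:ℝ) - (i:ℝ)) * γ - 1 ≤ (Fsum y j : ℝ) - (Fsum y i : ℝ) ∧
      (Fsum y j : ℝ) - (Fsum y i : ℝ) ≤ ((j:ℝ) - (i:ℝ)) * γ + 1 := by
    intro i j hij
    have hd := Fsum_diff y hij
    have hdR : (Fsum y j : ℝ) - (Fsum y i : ℝ) = (wsum y i (j - i).toNat : ℝ) := by
      exact_mod_cast congrArg (Int.cast : ℤ → ℝ) hd
    have hc : (((j - i).toNat : ℕ) : ℝ) = (j : ℝ) - (i : ℝ) := by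
      have h1 : ((j - i).toNat : ℤ) = j - i := Int.toNat_of_nonneg (by omega)
      exact_mod_cast congrArg (Int.cast : ℤ → ℝ) h1
    obtain ⟨h1, h2⟩ := hB i ((j - i).toNat)
    rw [hc] at h1 h2
    rw [hdR]
    exact ⟨h1, h2⟩
  -- strictness on one side
  have hstrict : (∀ i j : ℤ, i ≤ j → (Fsum y j : ℝ) - (Fsum y i : ℝ) < ((j:ℝ) - (i:ℝ)) * γ + 1)
      ∨ (∀ i j : ℤ, i ≤ j → ((j:ℝ) - (i:ℝ)) * γ - 1 < (Fsum y j : ℝ) - (Fsum y i : ℝ)) := by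
    have hq := hQ
    rw [Qset, Set.mem_compl_iff, Set.mem_inter_iff] at hq
    rcases not_and_or.mp hq with hA | hB'
    · left
      intro i j hij
      rcases hij.lt_or_eq with hlt | heq
      · have hk : 1 ≤ (j - i).toNat := by omega
        have hnA : ¬ ((((j - i).toNat : ℕ) : ℝ) * γ + 1 ≤ (wsum y i (j - i).toNat : ℝ)) := by
          intro hcon
          exact hA ⟨i, (j - i).toNat, hk, hcon⟩
        push_neg at hnA
        have hd := Fsum_diff y hij
        have hdR : (Fsum y j : ℝ) - (Fsum y i : ℝ) = (wsum y i (j - i).toNat : ℝ) := by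
          exact_mod_cast congrArg (Int.cast : ℤ → ℝ) hd
        have hc : (((j - i).toNat : ℕ) : ℝ) = (j : ℝ) - (i : ℝ) := by
          have h1 : ((j - i).toNat : ℤ) = j - i := Int.toNat_of_nonneg (by omega)
          exact_mod_cast congrArg (Int.cast : ℤ → ℝ) h1
        rw [hc] at hnA
        rw [hdR]
        exact hnA
      · subst heq
        simp
    · right
      intro i j hij
      rcases hij.lt_or_eq with hlt | heq
      · have hk : 1 ≤ (j - i).toNat := by omega
        have hnB : ¬ ((wsum y i (j - i).toNat : ℝ) ≤ (((j - i).toNat : ℕ) : ℝ) * γ - 1) := by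
          intro hcon
          exact hB' ⟨i, (j - i).toNat, hk, hcon⟩
        push_neg at hnB
        have hd := Fsum_diff y hij
        have hdR : (Fsum y j : ℝ) - (Fsum y i : ℝ) = (wsum y i (j - i).toNat : ℝ) := by
          exact_mod_cast congrArg (Int.cast : ℤ → ℝ) hd
        have hc : (((j - i).toNat : ℕ) : ℝ) = (j : ℝ) - (i : ℝ) := by
          have h1 : ((j - i).toNat : ℤ) = j - i := Int.toNat_of_nonneg (by omega)
          exact_mod_cast congrArg (Int.cast : ℤ → ℝ) h1
        rw [hc] at hnB
        rw [hdR]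
        exact hnB
      · subst heq
        simp
  -- build the intercept c
  set g : ℤ → ℝ := fun i => (Fsum y i : ℝ) - (i : ℝ) * γ with hg
  have hpair : ∀ i j : ℤ, g j ≤ g i + 1 := by
    intro i j
    rcases le_total i j with h | h
    · have := (hBF i j h).2
      simp only [hg]
      nlinarith
    · have := (hBF j i h).1
      simp only [hg]
      nlinarith
  have hne : (Set.range g).Nonempty := ⟨g 0, 0, rfl⟩
  have hbdd : BddAbove (Set.range g) := ⟨g 0 + 1, by rintro _ ⟨j, rfl⟩; exact hpair 0 j⟩
  have hbddb : BddBelow (Set.range g) := ⟨g 0 - 1, by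
    rintro _ ⟨j, rfl⟩
    have := hpair j 0
    linarith⟩
  obtain ⟨c, H1a, H1b, Hmono⟩ :
      ∃ c : ℝ, (∀ i : ℤ, (i : ℝ) * γ + c - 1 ≤ Fsum y i) ∧
        (∀ i : ℤ, (Fsum y i : ℝ) ≤ (i : ℝ) * γ + c) ∧
        ((∀ i j : ℤ, i ≤ j → (Fsum y j : ℝ) - Fsum y i < ((j : ℝ) - (i : ℝ)) * γ + 1)
          ∨ (∀ i j : ℤ, i ≤ j → ((j : ℝ) - (i : ℝ)) * γ - 1 < (Fsum y j : ℝ) - Fsum y i)) := by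
    rcases hstrict with hs | hs
    · refine ⟨sSup (Set.range g), ?_, ?_, Or.inl hs⟩
      · intro i
        have hcle : sSup (Set.range g) ≤ g i + 1 := by
          apply csSup_le hne
          rintro _ ⟨j, rfl⟩
          exact hpair i j
        simp only [hg] at hcle
        linarith
      · intro i
        have hle : g i ≤ sSup (Set.range g) := le_csSup hbdd ⟨i, rfl⟩
        simp only [hg] at hle
        linarith
    · refine ⟨sInf (Set.range g) + 1, ?_, ?_, Or.inr hs⟩
      · intro i
        have hle : sInf (Set.range g) ≤ g i := csInf_le hbddb ⟨i, rfl⟩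
        simp only [hg] at hle
        linarith
      · intro i
        have hge : g i - 1 ≤ sInf (Set.range g) := by
          apply le_csInf hne
          rintro _ ⟨j, rfl⟩
          have := hpair j i
          linarith
        simp only [hg] at hge
        linarith
  by_cases hrat : ∃ r : ℚ, γ = (r : ℝ)
  · obtain ⟨r, hr⟩ := hrat
    rcases rational_case γ r hr y (Fsum y) c hyF H1a H1b Hmono with hmem' | hex
    · exact Or.inl hmem'
    · exact Or.inr ⟨⟨r, hr⟩, hex.1, hex.2⟩
  · exact Or.inl (irrational_mem γ hrat y (Fsum y) c hyF H1a H1b)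

end Stmt7


/-- if `y⁽ⁿ⁾ ∈ Y_{γ⁽ⁿ⁾}` converge to `y`, then the slopes converge to some `γ`,
and either `y ∈ Y_γ`, or `γ` is rational and `y` is an aperiodic concatenation of two
periodic semi-infinite words. -/
theorem stmt_7 (γseq : ℕ → ℝ) (yseq : ℕ → (ℤ → ℤ)) (y : ℤ → ℤ)
    (hmem : ∀ n : ℕ, yseq n ∈ sturmSystem (γseq n))
    (hconv : Filter.Tendsto yseq Filter.atTop (nhds y)) :
    ∃ γ : ℝ, Filter.Tendsto γseq Filter.atTop (nhds γ) ∧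
      (y ∈ sturmSystem γ ∨
        ((∃ r : ℚ, γ = (r : ℝ)) ∧
         (¬ ∃ p : ℤ, 1 ≤ p ∧ ∀ i : ℤ, y (i + p) = y i) ∧
         (∃ N : ℤ, 0 ≤ N ∧ ∃ p q : ℤ, 1 ≤ p ∧ 1 ≤ q ∧
            (∀ i : ℤ, N ≤ i → y (i + p) = y i) ∧
            (∀ i : ℤ, i ≤ -N → y (i - q) = y i)))) := by
  obtain ⟨γ, hγ, hB, hQ⟩ := Stmt7.limit_slope γseq yseq y hmem hconv
  exact ⟨γ, hγ, Stmt7.main_dichotomy γ y hB hQ⟩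
end

section
/- Let ℓ ≥ 1 be an integer and let γ, γ' ∈ ℝ satisfy γ' − γ ≥ 2/ℓ. Then no word (y_0, …, y_{ℓ−1}) ∈ ℤ^ℓ is simultaneously a Sturmian word of slope γ and a Sturmian word of slope γ'. -/
lemma sturmian_sum (γ : ℝ) {n : ℕ} (y : Fin n → ℤ) (a : ℝ) (ha0 : 0 ≤ a) (ha1 : a < 1)
    (hy : ∀ i : Fin n, y i = ⌊((i : ℕ) + 1 : ℝ) * γ + a⌋ - ⌊((i : ℕ) : ℝ) * γ + a⌋) :
    ∑ i : Fin n, y i = ⌊(n : ℝ) * γ + a⌋ := by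
  have : ∑ i : Fin n, y i =
      ∑ i ∈ Finset.range n, ((fun k : ℕ => ⌊(k : ℝ) * γ + a⌋) (i + 1)
        - (fun k : ℕ => ⌊(k : ℝ) * γ + a⌋) i) := by
    rw [Finset.sum_range fun i => _]
    refine Finset.sum_congr rfl fun i _ => ?_
    simp [hy i]
  rw [this, Finset.sum_range_sub (fun k : ℕ => ⌊(k : ℝ) * γ + a⌋)]
  simp [Int.floor_eq_zero_iff, Set.mem_Ico, ha0, ha1]

/-- if `γ' - γ ≥ 2/ℓ` then no word of length `ℓ` is simultaneously a Sturmian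
word of slope `γ` and of slope `γ'`. -/
theorem stmt_8 (ℓ : ℕ) (hℓ : 1 ≤ ℓ) (γ γ' : ℝ) (h : 2 / (ℓ : ℝ) ≤ γ' - γ)
    (y : Fin ℓ → ℤ) :
    ¬ (IsSturmianWord γ y ∧ IsSturmianWord γ' y) := by
  rintro ⟨⟨a, ha0, ha1, hy⟩, ⟨b, hb0, hb1, hy'⟩⟩
  have hℓpos : (0 : ℝ) < ℓ := by exact_mod_cast hℓ
  have hsum : ⌊(ℓ : ℝ) * γ + a⌋ = ⌊(ℓ : ℝ) * γ' + b⌋ := by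
    rw [← sturmian_sum γ y a ha0 ha1 hy, ← sturmian_sum γ' y b hb0 hb1 hy']
  have h2 : (2 : ℝ) ≤ (ℓ : ℝ) * (γ' - γ) := by
    have := (div_le_iff₀ hℓpos).mp h
    linarith
  have hlt : (ℓ : ℝ) * γ + a + 1 ≤ (ℓ : ℝ) * γ' + b := by nlinarith
  have : ⌊(ℓ : ℝ) * γ + a⌋ + 1 ≤ ⌊(ℓ : ℝ) * γ' + b⌋ := by
    calc ⌊(ℓ : ℝ) * γ + a⌋ + 1 = ⌊(ℓ : ℝ) * γ + a + 1⌋ := (Int.floor_add_one _).symm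
    _ ≤ _ := Int.floor_le_floor hlt
  omega
end

section
/- Let α > 0 and let [b,c] ⊆ [0,∞) be a closed interval. Let f : (α,∞) → ℝ be a convex function such that for every t ∈ (α,∞) and every subgradient v of f at t, the intercept f(t) − tv lies in [b,c]. Then f is Lipschitz on (α,∞). -/
/-- a convex function on `(α,∞)` whose support-line intercepts all lie in
`[b,c] ⊆ [0,∞)` is Lipschitz on `(α,∞)`. -/
theorem stmt_9 (α : ℝ) (hα : 0 < α) (b c : ℝ) (hb : 0 ≤ b) (hbc : b ≤ c)
    (f : ℝ → ℝ) (hconv : ConvexOn ℝ (Set.Ioi α) f)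
    (hint : ∀ t ∈ Set.Ioi α, ∀ v : ℝ,
      (∀ s ∈ Set.Ioi α, f t + v * (s - t) ≤ f s) →
      f t - t * v ∈ Set.Icc b c) :
    ∃ K : NNReal, LipschitzOnWith K f (Set.Ioi α) := by
  classical
  set g : ℝ → ℝ := fun t => sInf ((fun s => (f s - f t) / (s - t)) '' Set.Ioi t) with hg
  -- left slopes are lower bounds of the right slope set
  have hlow : ∀ t ∈ Set.Ioi α, ∀ r ∈ Set.Ioi α, r < t →
      (f t - f r) / (t - r) ∈ lowerBounds ((fun s => (f s - f t) / (s - t)) '' Set.Ioi t) := by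
    rintro t ht r hr hrt x ⟨u, hu, rfl⟩
    exact hconv.slope_mono_adjacent hr (show α < u from lt_trans (Set.mem_Ioi.1 ht) (Set.mem_Ioi.1 hu)) hrt hu
  have hne : ∀ t : ℝ, ((fun s => (f s - f t) / (s - t)) '' Set.Ioi t).Nonempty :=
    fun t => ⟨_, ⟨t + 1, by simp, rfl⟩⟩
  have hbdd : ∀ t ∈ Set.Ioi α, BddBelow ((fun s => (f s - f t) / (s - t)) '' Set.Ioi t) := by
    intro t ht
    exact ⟨_, hlow t ht ((α + t) / 2) (by simp only [Set.mem_Ioi] at *; linarith)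
      (by simp only [Set.mem_Ioi] at ht; linarith)⟩
  -- g t ≤ each right slope
  have hle : ∀ t ∈ Set.Ioi α, ∀ s, t < s → g t ≤ (f s - f t) / (s - t) := by
    intro t ht s hs
    exact csInf_le (hbdd t ht) ⟨s, hs, rfl⟩
  -- g t is a subgradient
  have hsub : ∀ t ∈ Set.Ioi α, ∀ s ∈ Set.Ioi α, f t + g t * (s - t) ≤ f s := by
    intro t ht s hs
    rcases lt_trichotomy s t with h | h | h
    · have hlb := hlow t ht s hs h
      have h1 : (f t - f s) / (t - s) ≤ g t := le_csInf (hne t) hlb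
      have h2 : g t * (s - t) ≤ ((f t - f s) / (t - s)) * (s - t) := by
        apply mul_le_mul_of_nonpos_right h1 (by linarith)
      have h3 : ((f t - f s) / (t - s)) * (s - t) = f s - f t := by
        have h4 : t - s ≠ 0 := by intro h'; linarith [sub_eq_zero.1 h']
        rw [show s - t = -(t - s) by ring, mul_neg, div_mul_cancel₀ _ h4]
        ring
      linarith [h2, h3.le]
    · simp [h]
    · have h1 := hle t ht s h
      rw [le_div_iff₀ (by linarith)] at h1
      linarith
  -- intercepts in [b,c]
  have hI : ∀ t ∈ Set.Ioi α, f t - t * g t ∈ Set.Icc b c := fun t ht =>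
    hint t ht (g t) (hsub t ht)
  -- monotonicity of g
  have hmono : ∀ t ∈ Set.Ioi α, ∀ s, t < s → g t ≤ g s := by
    intro t ht s hs
    have h1 : g t ≤ (f s - f t) / (s - t) := hle t ht s hs
    have h2 : (f s - f t) / (s - t) ≤ g s := by
      apply le_csInf (hne s)
      rintro x ⟨u, hu, rfl⟩
      have : (f s - f t) / (s - t) ≤ (f u - f s) / (u - s) :=
        hconv.slope_mono_adjacent ht (lt_trans (lt_trans ht hs) hu) hs hu
      exact this
    linarith
  -- gap bound
  have hgap : ∀ t ∈ Set.Ioi α, ∀ s ∈ Set.Ioi α, t < s → g s - g t ≤ (c - b) / α := by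
    intro t ht s hs hts
    simp only [Set.mem_Ioi] at ht hs
    have h1 : f s + g s * (t - s) ≤ f t := hsub s (by exact hs) t (by exact ht)
    have hIt := hI t ht
    have hIs := hI s hs
    simp only [Set.mem_Icc] at hIt hIs
    have key : t * (g s - g t) ≤ c - b := by nlinarith
    have hmono' : 0 ≤ g s - g t := by linarith [hmono t ht s hts]
    rw [le_div_iff₀ hα]
    nlinarith
  set t0 : ℝ := α + 1 with ht0
  have ht0m : t0 ∈ Set.Ioi α := by simp [ht0]
  have hq : 0 ≤ (c - b) / α := div_nonneg (by linarith) hα.le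
  have hbound : ∀ t ∈ Set.Ioi α, |g t| ≤ |g t0| + (c - b) / α := by
    intro t ht
    rcases lt_trichotomy t t0 with h | h | h
    · have h1 := hmono t ht t0 h
      have h2 := hgap t ht t0 ht0m h
      rw [abs_le]
      constructor
      · have := neg_abs_le (g t0); linarith
      · have := le_abs_self (g t0); linarith
    · rw [h]; linarith
    · have h1 := hmono t0 ht0m t h
      have h2 := hgap t0 ht0m t ht h
      rw [abs_le]
      constructor
      · have := neg_abs_le (g t0); linarith
      · have := le_abs_self (g t0); linarith
  set M : ℝ := |g t0| + (c - b) / α with hM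
  have hM0 : 0 ≤ M := by positivity
  refine ⟨Real.toNNReal M, LipschitzOnWith.of_dist_le_mul ?_⟩
  intro x hx y hy
  rw [Real.dist_eq, Real.dist_eq, Real.coe_toNNReal _ hM0]
  -- wlog x < y
  have main : ∀ x ∈ Set.Ioi α, ∀ y ∈ Set.Ioi α, x < y → |f x - f y| ≤ M * |x - y| := by
    intro x hx y hy hxy
    have h1 : f x + g x * (y - x) ≤ f y := hsub x hx y hy
    have h2 : f y + g y * (x - y) ≤ f x := hsub y hy x hx
    have hgx := hbound x hx
    have hgy := hbound y hy
    have hax := abs_le.1 hgx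
    have hay := abs_le.1 hgy
    rw [abs_sub_comm x y, abs_of_pos (by linarith : (0:ℝ) < y - x), abs_le]
    constructor <;> nlinarith [hax.1, hax.2, hay.1, hay.2]
  rcases lt_trichotomy x y with h | h | h
  · exact main x hx y hy h
  · simp [h]
  · rw [abs_sub_comm (f x), abs_sub_comm x]
    exact main y hy x hx h
end

section
/- Let α > 0 and let (z_j)_{j≥1} be a sequence of real numbers in (α,∞). Define g : [0,∞) → ℝ by g(s) = Σ_{j : z_j ≤ s} α/(2^j z_j²) and f(t) = 3 + ∫_0^t g(s) ds. Then for every t ∈ (α,∞), f(t) − t·g(t) ≥ 1. -/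
open scoped Interval
open MeasureTheory Set
open scoped ENNReal NNReal

/-- `g(s) = Σ_{j ≥ 1, z_j ≤ s} α/(2^j z_j²)`. -/
noncomputable def gfun (α : ℝ) (z : ℕ → ℝ) (s : ℝ) : ℝ :=
  ∑' j : ℕ, if 1 ≤ j ∧ z j ≤ s then α / (2 ^ j * (z j) ^ 2) else 0

/-- `f(t) = 3 + ∫_0^t g(s) ds`. -/
noncomputable def ffun (α : ℝ) (z : ℕ → ℝ) (t : ℝ) : ℝ :=
  3 + ∫ s in (0 : ℝ)..t, gfun α z s

/-- for all `t ∈ (α,∞)`, `f(t) − t·g(t) ≥ 1`. -/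
theorem stmt_11 (α : ℝ) (hα : 0 < α) (z : ℕ → ℝ) (hz : ∀ j : ℕ, 1 ≤ j → α < z j)
    (t : ℝ) (ht : α < t) :
    1 ≤ ffun α z t - t * gfun α z t := by
  have ht0 : (0:ℝ) < t := hα.trans ht
  set c : ℕ → ℝ := fun j => α / (2 ^ j * (z j) ^ 2) with hc
  set d : ℕ → ℝ := fun j => if 1 ≤ j then c j else 0 with hd
  have hd_nonneg : ∀ j, 0 ≤ d j := by
    intro j
    simp only [hd, hc]
    split_ifs with h
    · have := hz j h
      positivity
    · exact le_rfl
  have hd_le : ∀ j, d j ≤ (1/2)^j / α := by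
    intro j
    simp only [hd, hc]
    split_ifs with h
    · have hzj := hz j h
      have h2 : (0:ℝ) < 2 ^ j := by positivity
      have hpow : (1/2:ℝ)^j * 2^j = 1 := by
        rw [one_div, inv_pow, inv_mul_cancel₀ (by positivity)]
      have hzj0 : (0:ℝ) < z j := hα.trans hzj
      rw [div_le_div_iff₀ (mul_pos h2 (by positivity)) hα]
      have hrw : (1/2:ℝ)^j * (2 ^ j * z j ^ 2) = z j ^ 2 := by
        rw [← mul_assoc, hpow, one_mul]
      rw [hrw]
      nlinarith
    · positivity
  have hgeo : Summable (fun j : ℕ => (1/2:ℝ)^j / α) :=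
    (summable_geometric_of_lt_one (by norm_num) (by norm_num)).div_const α
  have hd_sum : Summable d := Summable.of_nonneg_of_le hd_nonneg hd_le hgeo
  -- the indicator form of the summand
  set F : ℕ → ℝ → ℝ := fun j => (Ici (z j)).indicator (fun _ => d j) with hF
  have hFs : ∀ s, gfun α z s = ∑' j, F j s := by
    intro s
    unfold gfun
    congr 1; funext j
    simp only [hF, hd, hc, indicator_apply, mem_Ici]
    split_ifs with h1 h2 h3 <;> tauto
  -- each F j is a.e. strongly measurable
  have hFmeas : ∀ j, AEStronglyMeasurable (F j) (volume.restrict (Ioc (0:ℝ) t)) :=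
    fun j => ((measurable_const.indicator measurableSet_Ici)).aestronglyMeasurable
  -- lintegral bound
  have hlint : ∑' j, ∫⁻ s in Ioc (0:ℝ) t, ‖F j s‖₊ ≠ ⊤ := by
    have hb : ∀ j, (∫⁻ s in Ioc (0:ℝ) t, ‖F j s‖₊) ≤ (‖d j‖₊ : ℝ≥0∞) * ENNReal.ofReal t := by
      intro j
      calc (∫⁻ s in Ioc (0:ℝ) t, ‖F j s‖₊)
          ≤ ∫⁻ _ in Ioc (0:ℝ) t, (‖d j‖₊ : ℝ≥0∞) := by
            apply lintegral_mono
            intro s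
            simp only [hF, indicator_apply]
            split_ifs <;> simp
        _ = (‖d j‖₊ : ℝ≥0∞) * volume (Ioc (0:ℝ) t) := by
            rw [lintegral_const, Measure.restrict_apply_univ]
        _ = (‖d j‖₊ : ℝ≥0∞) * ENNReal.ofReal t := by
            rw [Real.volume_Ioc]; norm_num
    apply ne_top_of_le_ne_top _ (Summable.tsum_le_tsum hb (by exact ENNReal.summable) (by exact ENNReal.summable))
    rw [ENNReal.tsum_mul_right]
    apply ENNReal.mul_ne_top _ (by simp)
    rw [ENNReal.tsum_coe_ne_top_iff_summable, ← NNReal.summable_coe]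
    simpa [coe_nnnorm, Real.norm_eq_abs, abs_of_nonneg (hd_nonneg _)] using hd_sum
  -- swap integral and sum
  have hswap : (∫ s in (0:ℝ)..t, gfun α z s) = ∑' j, ∫ s in Ioc (0:ℝ) t, F j s := by
    rw [intervalIntegral.integral_of_le ht0.le]
    rw [show (fun s => gfun α z s) = fun s => ∑' j, F j s from funext hFs]
    exact integral_tsum hFmeas hlint
  -- compute each integral
  set G : ℕ → ℝ := fun j => if 1 ≤ j ∧ z j ≤ t then c j else 0 with hG
  set e : ℕ → ℝ := fun j => if 1 ≤ j ∧ z j ≤ t then α / (2^j * z j) else 0 with he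
  have hI : ∀ j, (∫ s in Ioc (0:ℝ) t, F j s) = t * G j - e j := by
    intro j
    have : (∫ s in Ioc (0:ℝ) t, F j s)
        = (volume.restrict (Ioc (0:ℝ) t) (Ici (z j))).toReal • d j := by
      simp only [hF]
      exact integral_indicator_const (d j) measurableSet_Ici
    rw [this, Measure.restrict_apply measurableSet_Ici]
    by_cases h1 : 1 ≤ j
    · have hzj := hz j h1
      by_cases h2 : z j ≤ t
      · have hset : Ici (z j) ∩ Ioc (0:ℝ) t = Icc (z j) t := by
          ext x
          simp only [mem_inter_iff, mem_Ici, mem_Ioc, mem_Icc]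
          constructor
          · rintro ⟨h, _, h'⟩; exact ⟨h, h'⟩
          · rintro ⟨h, h'⟩; exact ⟨h, (hα.trans hzj).trans_le h, h'⟩
        rw [hset, Real.volume_Icc, ENNReal.toReal_ofReal (by linarith)]
        simp only [hG, he, hd, hc, if_pos (And.intro h1 h2), if_pos h1]
        have hz0 : z j ≠ 0 := ne_of_gt (hα.trans hzj)
        simp only [smul_eq_mul]
        field_simp
      · have hset : Ici (z j) ∩ Ioc (0:ℝ) t = ∅ := by
          ext x
          simp only [mem_inter_iff, mem_Ici, mem_Ioc, mem_empty_iff_false, iff_false]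
          rintro ⟨h, _, h'⟩
          exact h2 (h.trans h')
        rw [hset]
        simp only [hG, he, measure_empty, ENNReal.toReal_zero, zero_smul]
        rw [if_neg (by tauto), if_neg (by tauto)]
        ring
    · simp only [hd, if_neg h1, smul_zero]
      simp only [hG, he]
      rw [if_neg (by tauto), if_neg (by tauto)]
      ring
  -- summabilities
  have hG_sum : Summable G := by
    apply Summable.of_nonneg_of_le _ _ hgeo
    · intro j; simp only [hG, hc]; split_ifs with h
      · have h0 : (0:ℝ) < z j := hα.trans (hz j h.1); positivity
      · exact le_rfl
    · intro j; simp only [hG, hc]; split_ifs with h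
      · have := hd_le j; simp only [hd, hc, if_pos h.1] at this; exact this
      · positivity
  have he_le : ∀ j, e j ≤ (1/2:ℝ)^j := by
    intro j
    simp only [he]
    split_ifs with h
    · have hzj := hz j h.1
      have h0 : (0:ℝ) < z j := hα.trans hzj
      have h2 : (0:ℝ) < 2 ^ j := by positivity
      have hpow : (1/2:ℝ)^j * 2^j = 1 := by
        rw [one_div, inv_pow, inv_mul_cancel₀ (by positivity)]
      rw [div_le_iff₀ (mul_pos h2 h0)]
      have hrw : (1/2:ℝ)^j * (2 ^ j * z j) = z j := by
        rw [← mul_assoc, hpow, one_mul]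
      rw [hrw]
      exact hzj.le
    · positivity
  have he_nonneg : ∀ j, 0 ≤ e j := by
    intro j; simp only [he]; split_ifs with h
    · have h0 : (0:ℝ) < z j := hα.trans (hz j h.1); positivity
    · exact le_rfl
  have he_sum : Summable e :=
    Summable.of_nonneg_of_le he_nonneg he_le (summable_geometric_of_lt_one (by norm_num) (by norm_num))
  have htsum_e : ∑' j, e j ≤ 2 := by
    have h2 : ∑' j : ℕ, (1/2:ℝ)^j = 2 := by
      rw [tsum_geometric_of_lt_one (by norm_num) (by norm_num)]
      norm_num
    calc ∑' j, e j ≤ ∑' j : ℕ, (1/2:ℝ)^j :=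
          Summable.tsum_le_tsum he_le he_sum (summable_geometric_of_lt_one (by norm_num) (by norm_num))
      _ = 2 := h2
  -- put it together
  have hgt : gfun α z t = ∑' j, G j := rfl
  have hdiff : ffun α z t - t * gfun α z t = 3 - ∑' j, e j := by
    unfold ffun
    rw [hswap, hgt, show (∑' j, ∫ s in Ioc (0:ℝ) t, F j s) = ∑' j, (t * G j - e j) from
      tsum_congr hI]
    rw [Summable.tsum_sub ((hG_sum.mul_left t)) he_sum, tsum_mul_left]
    ring
  rw [hdiff]
  linarith
end

section
/- Let α > 0 and let (z_j)_{j≥1} be a sequence of real numbers in (α,∞). Define g : [0,∞) → ℝ by g(s) = Σ_{j : z_j ≤ s} α/(2^j z_j²) and f(t) = 3 + ∫_0^t g(s) ds. Then f is convex on (α,∞), and f is differentiable at a point t ∈ (α,∞) if and only if t ∉ {z_j : j ≥ 1}. -/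
open Set Filter MeasureTheory intervalIntegral
open scoped Topology

namespace Stmt12Aux

/-- the `j`-th term of the series defining `g`. -/
noncomputable def term (α : ℝ) (z : ℕ → ℝ) (j : ℕ) (s : ℝ) : ℝ :=
  if 1 ≤ j ∧ z j ≤ s then α / (2 ^ j * (z j) ^ 2) else 0

lemma gfun_eq (α : ℝ) (z : ℕ → ℝ) (s : ℝ) : gfun α z s = ∑' j, term α z j s := rfl

variable {α : ℝ} {z : ℕ → ℝ}

lemma term_nonneg (hα : 0 < α) (j : ℕ) (s : ℝ) : 0 ≤ term α z j s := by
  unfold term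
  split
  · have h1 : (0:ℝ) ≤ 2 ^ j * (z j) ^ 2 := by positivity
    exact div_nonneg hα.le h1
  · exact le_refl 0

lemma term_le (hα : 0 < α) (hz : ∀ j : ℕ, 1 ≤ j → α < z j) (j : ℕ) (s : ℝ) :
    term α z j s ≤ α⁻¹ * (1 / 2 : ℝ) ^ j := by
  have hpos : (0:ℝ) < α⁻¹ * (1 / 2 : ℝ) ^ j := by positivity
  unfold term
  split
  · rename_i h
    have hzj : α < z j := hz j h.1
    have h2 : (0:ℝ) < 2 ^ j * α ^ 2 := by positivity
    have h3 : 2 ^ j * α ^ 2 ≤ 2 ^ j * (z j) ^ 2 := by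
      have : α ^ 2 ≤ (z j) ^ 2 := by nlinarith
      nlinarith [pow_pos (show (0:ℝ) < 2 by norm_num) j]
    calc α / (2 ^ j * (z j) ^ 2) ≤ α / (2 ^ j * α ^ 2) :=
          div_le_div_of_nonneg_left hα.le h2 h3
      _ = α⁻¹ * (1 / 2 : ℝ) ^ j := by
          rw [div_pow, one_pow]
          field_simp
      _ ≤ _ := le_rfl
  · exact hpos.le

lemma summable_u (hα : 0 < α) : Summable (fun j : ℕ => α⁻¹ * (1 / 2 : ℝ) ^ j) :=
  (summable_geometric_of_lt_one (by norm_num) (by norm_num)).mul_left _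

lemma term_summable (hα : 0 < α) (hz : ∀ j : ℕ, 1 ≤ j → α < z j) (s : ℝ) :
    Summable (fun j => term α z j s) :=
  Summable.of_nonneg_of_le (term_nonneg hα · s) (term_le hα hz · s) (summable_u hα)

lemma term_mono (hα : 0 < α) (j : ℕ) {s s' : ℝ} (h : s ≤ s') :
    term α z j s ≤ term α z j s' := by
  by_cases hc : 1 ≤ j ∧ z j ≤ s
  · have h1 : term α z j s = α / (2 ^ j * (z j) ^ 2) := if_pos hc
    have h2 : term α z j s' = α / (2 ^ j * (z j) ^ 2) := if_pos ⟨hc.1, hc.2.trans h⟩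
    rw [h1, h2]
  · have h1 : term α z j s = 0 := if_neg hc
    rw [h1]
    exact term_nonneg hα j s'

lemma gmono (hα : 0 < α) (hz : ∀ j : ℕ, 1 ≤ j → α < z j) : Monotone (gfun α z) := by
  intro s s' h
  rw [gfun_eq, gfun_eq]
  exact Summable.tsum_le_tsum (fun j => term_mono hα j h) (term_summable hα hz s)
    (term_summable hα hz s')

lemma g_intble (hα : 0 < α) (hz : ∀ j : ℕ, 1 ≤ j → α < z j) (a b : ℝ) :
    IntervalIntegrable (gfun α z) volume a b :=
  (gmono hα hz).intervalIntegrable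

lemma fdiff (hα : 0 < α) (hz : ∀ j : ℕ, 1 ≤ j → α < z j) (t s : ℝ) :
    ffun α z s - ffun α z t = ∫ u in t..s, gfun α z u := by
  unfold ffun
  have := integral_interval_sub_left (g_intble hα hz 0 s) (g_intble hα hz 0 t)
  rw [← this]
  ring

lemma integral_le (hα : 0 < α) (hz : ∀ j : ℕ, 1 ≤ j → α < z j) {x y : ℝ} (h : x ≤ y) :
    (∫ u in x..y, gfun α z u) ≤ (y - x) * gfun α z y := by
  have h1 : (∫ u in x..y, gfun α z u) ≤ ∫ _u in x..y, gfun α z y := by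
    apply integral_mono_on h (g_intble hα hz x y) intervalIntegrable_const
    intro u hu
    exact gmono hα hz hu.2
  simpa [smul_eq_mul] using h1

lemma le_integral (hα : 0 < α) (hz : ∀ j : ℕ, 1 ≤ j → α < z j) {x y : ℝ} (h : x ≤ y) :
    (y - x) * gfun α z x ≤ ∫ u in x..y, gfun α z u := by
  have h1 : (∫ _u in x..y, gfun α z x) ≤ ∫ u in x..y, gfun α z u := by
    apply integral_mono_on h intervalIntegrable_const (g_intble hα hz x y)
    intro u hu
    exact gmono hα hz hu.1
  simpa [smul_eq_mul] using h1

/-- the jump inequality: for `u < z j₀`, `g u + c_{j₀} ≤ g (z j₀)`. -/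
lemma gjump (hα : 0 < α) (hz : ∀ j : ℕ, 1 ≤ j → α < z j) {j0 : ℕ} (hj0 : 1 ≤ j0)
    {u : ℝ} (hu : u < z j0) :
    gfun α z u + α / (2 ^ j0 * (z j0) ^ 2) ≤ gfun α z (z j0) := by
  set t := z j0 with ht
  have hdsum : Summable (fun j => term α z j t - term α z j u) :=
    (term_summable hα hz t).sub (term_summable hα hz u)
  have hkey : α / (2 ^ j0 * (z j0) ^ 2) ≤ ∑' j, (term α z j t - term α z j u) := by
    have h0 : term α z j0 t - term α z j0 u = α / (2 ^ j0 * (z j0) ^ 2) := by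
      have ha : term α z j0 t = α / (2 ^ j0 * (z j0) ^ 2) := if_pos ⟨hj0, le_refl t⟩
      have hb : term α z j0 u = 0 := if_neg (by rintro ⟨-, h⟩; exact absurd h (not_le.2 hu))
      rw [ha, hb, sub_zero]
    calc α / (2 ^ j0 * (z j0) ^ 2) = term α z j0 t - term α z j0 u := h0.symm
      _ ≤ ∑' j, (term α z j t - term α z j u) :=
        Summable.le_tsum hdsum j0 fun j _ => sub_nonneg.2 (term_mono hα j hu.le)
  have hsub : ∑' j, (term α z j t - term α z j u) = gfun α z t - gfun α z u := by
    rw [Summable.tsum_sub (term_summable hα hz t) (term_summable hα hz u), gfun_eq, gfun_eq]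
  rw [hsub] at hkey
  linarith

/-- `g` is continuous at points that are not in `{z j : j ≥ 1}`. -/
lemma gcont (hα : 0 < α) (hz : ∀ j : ℕ, 1 ≤ j → α < z j) {t : ℝ}
    (ht : ¬ ∃ j : ℕ, 1 ≤ j ∧ z j = t) : ContinuousAt (gfun α z) t := by
  push_neg at ht
  rw [Metric.continuousAt_iff]
  intro ε hε
  -- choose N with small tail
  have htail : Tendsto (fun N : ℕ => ∑' k, α⁻¹ * (1 / 2 : ℝ) ^ (k + N)) atTop (𝓝 0) :=
    tendsto_sum_nat_add (fun j : ℕ => α⁻¹ * (1 / 2 : ℝ) ^ j)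
  obtain ⟨N, hN⟩ := (htail.eventually (eventually_lt_nhds (show (0:ℝ) < ε/3 by linarith))).exists
  set F : ℝ → ℝ := fun s => ∑ j ∈ Finset.range N, term α z j s with hF
  -- uniform bound on the tail
  have hbound : ∀ s : ℝ, |gfun α z s - F s| ≤ ∑' k, α⁻¹ * (1 / 2 : ℝ) ^ (k + N) := by
    intro s
    have hsplit := Summable.sum_add_tsum_nat_add N (term_summable hα hz s)
    have h1 : gfun α z s - F s = ∑' k, term α z (k + N) s := by
      rw [gfun_eq, ← hsplit, hF]; ring
    rw [h1, abs_of_nonneg (tsum_nonneg fun k => term_nonneg hα _ s)]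
    exact Summable.tsum_le_tsum (fun k => term_le hα hz (k + N) s)
      ((term_summable hα hz s).comp_injective (add_left_injective N))
      ((summable_u hα).comp_injective (add_left_injective N))
  -- F is continuous at t
  have hFcont : ContinuousAt F t := by
    apply tendsto_finset_sum
    intro j _
    show ContinuousAt (fun s => term α z j s) t
    by_cases hj : 1 ≤ j
    · rcases lt_or_gt_of_ne (ht j hj) with hlt | hgt
      · -- z j < t : term is eventually constant
        apply ContinuousAt.congr continuousAt_const
        filter_upwards [Ioi_mem_nhds hlt] with s hs
        exact (if_pos ⟨hj, le_of_lt hs⟩ : term α z j s = _).symm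
      · apply ContinuousAt.congr continuousAt_const
        filter_upwards [Iio_mem_nhds hgt] with s hs
        exact (if_neg (by rintro ⟨-, h⟩; exact absurd h (not_le.2 hs)) :
          term α z j s = 0).symm
    · apply ContinuousAt.congr continuousAt_const
      filter_upwards with s
      exact (if_neg (fun h => hj h.1) : term α z j s = 0).symm
  rw [Metric.continuousAt_iff] at hFcont
  obtain ⟨δ, hδ, hδ'⟩ := hFcont (ε/3) (by linarith)
  refine ⟨δ, hδ, fun {s} hs => ?_⟩
  have h1 := hbound s
  have h2 := hbound t
  have h3 := hδ' hs
  rw [Real.dist_eq] at h3 ⊢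
  calc |gfun α z s - gfun α z t|
      ≤ |gfun α z s - F s| + |F s - F t| + |F t - gfun α z t| := by
        have := abs_sub_abs_le_abs_sub (gfun α z s - F s) (gfun α z t - F t)
        have habc : gfun α z s - gfun α z t =
            (gfun α z s - F s) + (F s - F t) + (F t - gfun α z t) := by ring
        rw [habc]
        exact (abs_add_three _ _ _)
    _ < ε/3 + ε/3 + ε/3 := by
        have h2' : |F t - gfun α z t| ≤ ∑' k, α⁻¹ * (1 / 2 : ℝ) ^ (k + N) := by
          rw [abs_sub_comm]; exact h2
        have := hN
        gcongr <;> linarith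
    _ = ε := by ring

lemma hasDerivAt_of_cont (hα : 0 < α) (hz : ∀ j : ℕ, 1 ≤ j → α < z j) {t : ℝ}
    (ht : ¬ ∃ j : ℕ, 1 ≤ j ∧ z j = t) :
    HasDerivAt (ffun α z) (gfun α z t) t := by
  have hmeas : StronglyMeasurableAtFilter (gfun α z) (𝓝 t) :=
    ((gmono hα hz).measurable.stronglyMeasurable).stronglyMeasurableAtFilter
  have h1 : HasDerivAt (fun u => ∫ s in (0:ℝ)..u, gfun α z s) (gfun α z t) t :=
    integral_hasDerivAt_right (g_intble hα hz 0 t) hmeas (gcont hα hz ht)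
  have : ffun α z = fun u => 3 + ∫ s in (0:ℝ)..u, gfun α z s := rfl
  rw [this]
  exact h1.const_add 3

lemma not_diff (hα : 0 < α) (hz : ∀ j : ℕ, 1 ≤ j → α < z j) {t : ℝ} (htα : α < t)
    {j0 : ℕ} (hj0 : 1 ≤ j0) (hzj0 : z j0 = t)
    (hd : DifferentiableAt ℝ (ffun α z) t) : False := by
  set c : ℝ := α / (2 ^ j0 * (z j0) ^ 2) with hc
  have hcpos : 0 < c := by
    have : 0 < z j0 := lt_trans hα (hz j0 hj0)
    positivity
  set L : ℝ := deriv (ffun α z) t with hL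
  have hD : HasDerivAt (ffun α z) L t := hd.hasDerivAt
  have hslope : Tendsto (slope (ffun α z) t) (𝓝[≠] t) (𝓝 L) :=
    hasDerivAt_iff_tendsto_slope.1 hD
  -- right slope ≥ g t
  have hright : Tendsto (slope (ffun α z) t) (𝓝[>] t) (𝓝 L) :=
    hslope.mono_left (nhdsWithin_mono t fun s hs => ne_of_gt hs)
  have hgtL : gfun α z t ≤ L := by
    refine ge_of_tendsto hright ?_
    filter_upwards [self_mem_nhdsWithin] with s hs
    have hst : t < s := hs
    rw [slope_def_field]
    rw [le_div_iff₀ (by linarith : (0:ℝ) < s - t)]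
    have h1 := le_integral hα hz (le_of_lt hst) (α := α) (z := z)
    rw [← fdiff hα hz t s] at h1
    linarith [h1]
  -- left slope ≤ g t - c
  have hleft : Tendsto (slope (ffun α z) t) (𝓝[<] t) (𝓝 L) :=
    hslope.mono_left (nhdsWithin_mono t fun s hs => ne_of_lt hs)
  have hLle : L ≤ gfun α z t - c := by
    refine le_of_tendsto hleft ?_
    filter_upwards [self_mem_nhdsWithin] with s hs
    have hst : s < t := hs
    -- ∫_s^t g ≤ (t-s) (g t - c) since g u ≤ g t - c for u < t
    have hae : (fun u => gfun α z u) ≤ᵐ[volume.restrict (Icc s t)]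
        fun _ => gfun α z t - c := by
      have hne : ∀ᵐ u ∂(volume.restrict (Icc s t)), u ≠ t := by
        refine ae_iff.2 ?_
        have : {u : ℝ | ¬ u ≠ t} = {t} := by ext u; simp
        rw [this]
        exact le_antisymm ((Measure.restrict_le_self) _ |>.trans_eq (by simp))
          (zero_le)
      have hmem : ∀ᵐ u ∂(volume.restrict (Icc s t)), u ∈ Icc s t :=
        ae_restrict_mem measurableSet_Icc
      filter_upwards [hne, hmem] with u hu hu'
      have hut : u < t := lt_of_le_of_ne hu'.2 hu
      have h5 := gjump hα hz hj0 (hzj0 ▸ hut)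
      have h6 : gfun α z (z j0) = gfun α z t := by rw [hzj0]
      rw [h6] at h5
      linarith
    have h2 : (∫ u in s..t, gfun α z u) ≤ ∫ _u in s..t, (gfun α z t - c) :=
      integral_mono_ae_restrict hst.le (g_intble hα hz s t) intervalIntegrable_const hae
    rw [intervalIntegral.integral_const, smul_eq_mul] at h2
    have h3 : ffun α z t - ffun α z s = ∫ u in s..t, gfun α z u := fdiff hα hz s t
    rw [slope_def_field]
    have h4 : (ffun α z s - ffun α z t) / (s - t) = (ffun α z t - ffun α z s) / (t - s) := by
      rw [← neg_sub (ffun α z t), ← neg_sub t s, neg_div_neg_eq]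
    rw [h4, div_le_iff₀ (by linarith : (0:ℝ) < t - s)]
    linarith
  linarith

end Stmt12Aux

/-- `f` is convex on `(α,∞)`, and `f` is differentiable at `t ∈ (α,∞)`
exactly when `t` is not one of the `z_j`. -/
theorem stmt_12 (α : ℝ) (hα : 0 < α) (z : ℕ → ℝ) (hz : ∀ j : ℕ, 1 ≤ j → α < z j) :
    ConvexOn ℝ (Set.Ioi α) (ffun α z) ∧
    ∀ t ∈ Set.Ioi α,
      (DifferentiableAt ℝ (ffun α z) t ↔ ¬ ∃ j : ℕ, 1 ≤ j ∧ z j = t) := by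
  open Stmt12Aux in
  constructor
  · refine convexOn_of_slope_mono_adjacent (convex_Ioi α) ?_
    intro a b c _ _ hab hbc
    have h1 : ffun α z b - ffun α z a ≤ (b - a) * gfun α z b := by
      rw [fdiff hα hz a b]
      exact integral_le hα hz hab.le
    have h2 : (c - b) * gfun α z b ≤ ffun α z c - ffun α z b := by
      rw [fdiff hα hz b c]
      exact le_integral hα hz hbc.le
    rw [div_le_div_iff₀ (by linarith) (by linarith)]
    nlinarith
  · intro t ht
    constructor
    · intro hd hex
      obtain ⟨j0, hj0, hzj0⟩ := hex
      exact not_diff hα hz ht hj0 hzj0 hd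
    · intro hnot
      exact (hasDerivAt_of_cont hα hz hnot).differentiableAt
end

section
/- Let α > 0, let [b,c] ⊆ [0,∞) be a closed interval, and let f : (α,∞) → ℝ be a convex function such that for every t ∈ (α,∞) and every subgradient v of f at t, the intercept f(t) − tv lies in [b,c]. For γ ∈ [b,c] define s(γ) = sup{v ∈ ℝ : γ + tv ≤ f(t) for all t ∈ (α,∞)}. Then for every γ ∈ [b,c] this supremum is over a nonempty set bounded above (so s(γ) ∈ ℝ), the function s is non-increasing on [b,c], and |s(γ) − s(γ')| ≤ |γ − γ'|/α for all γ, γ' ∈ [b,c]. -/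
/-- with `s(γ) = sup{v : γ + tv ≤ f(t) for all t ∈ (α,∞)}`, the defining set
is nonempty and bounded above for each `γ ∈ [b,c]`, and `s` is non-increasing and Lipschitz
with constant `1/α` on `[b,c]`. -/
theorem stmt_13 (α : ℝ) (hα : 0 < α) (b c : ℝ) (hb : 0 ≤ b) (hbc : b ≤ c)
    (f : ℝ → ℝ) (hconv : ConvexOn ℝ (Set.Ioi α) f)
    (hint : ∀ t ∈ Set.Ioi α, ∀ v : ℝ,
      (∀ u ∈ Set.Ioi α, f t + v * (u - t) ≤ f u) →
      f t - t * v ∈ Set.Icc b c) :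
    (∀ γ ∈ Set.Icc b c,
      ({v : ℝ | ∀ t ∈ Set.Ioi α, γ + t * v ≤ f t}).Nonempty ∧
      BddAbove {v : ℝ | ∀ t ∈ Set.Ioi α, γ + t * v ≤ f t}) ∧
    (∀ γ ∈ Set.Icc b c, ∀ γ' ∈ Set.Icc b c, γ ≤ γ' →
      sSup {v : ℝ | ∀ t ∈ Set.Ioi α, γ' + t * v ≤ f t} ≤
        sSup {v : ℝ | ∀ t ∈ Set.Ioi α, γ + t * v ≤ f t}) ∧
    (∀ γ ∈ Set.Icc b c, ∀ γ' ∈ Set.Icc b c,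
      |sSup {v : ℝ | ∀ t ∈ Set.Ioi α, γ + t * v ≤ f t} -
        sSup {v : ℝ | ∀ t ∈ Set.Ioi α, γ' + t * v ≤ f t}| ≤ |γ - γ'| / α) := by
  set t₀ : ℝ := α + 1 with ht₀def
  have ht₀ : α < t₀ := by simp [ht₀def]
  have ht₀pos : 0 < t₀ := by linarith
  -- left slopes at t₀
  set L : Set ℝ := (fun u => (f t₀ - f u) / (t₀ - u)) '' Set.Ioo α t₀ with hL
  have hLne : L.Nonempty := ⟨_, ⟨α + 1/2, ⟨by linarith, by linarith⟩, rfl⟩⟩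
  have hub : ∀ x ∈ L, x ≤ (f (t₀ + 1) - f t₀) / (t₀ + 1 - t₀) := by
    rintro x ⟨u, ⟨hu1, hu2⟩, rfl⟩
    exact hconv.slope_mono_adjacent (Set.mem_Ioi.mpr hu1)
      (Set.mem_Ioi.mpr (by linarith)) hu2 (by linarith)
  have hLbdd : BddAbove L := ⟨_, hub⟩
  set v₀ : ℝ := sSup L with hv₀
  have hleft : ∀ u, α < u → u < t₀ → (f t₀ - f u) / (t₀ - u) ≤ v₀ :=
    fun u h1 h2 => le_csSup hLbdd ⟨u, ⟨h1, h2⟩, rfl⟩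
  have hright : ∀ w, t₀ < w → v₀ ≤ (f w - f t₀) / (w - t₀) := by
    intro w hw
    refine csSup_le hLne ?_
    rintro x ⟨u, ⟨hu1, hu2⟩, rfl⟩
    exact hconv.slope_mono_adjacent (Set.mem_Ioi.mpr hu1)
      (Set.mem_Ioi.mpr (by linarith)) hu2 hw
  have hsub : ∀ u ∈ Set.Ioi α, f t₀ + v₀ * (u - t₀) ≤ f u := by
    intro u hu
    rcases lt_trichotomy u t₀ with h | h | h
    · have h1 := hleft u hu h
      have h2 : (0:ℝ) < t₀ - u := by linarith
      rw [div_le_iff₀ h2] at h1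
      nlinarith
    · simp [h]
    · have h1 := hright u h
      have h2 : (0:ℝ) < u - t₀ := by linarith
      rw [le_div_iff₀ h2] at h1
      nlinarith
  have hβ := hint t₀ (Set.mem_Ioi.mpr ht₀) v₀ hsub
  set β : ℝ := f t₀ - t₀ * v₀ with hβdef
  have hline : ∀ t ∈ Set.Ioi α, β + t * v₀ ≤ f t := by
    intro t ht
    have := hsub t ht
    nlinarith
  -- Nonemptiness
  have hne : ∀ γ ∈ Set.Icc b c,
      ({v : ℝ | ∀ t ∈ Set.Ioi α, γ + t * v ≤ f t}).Nonempty := by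
    intro γ hγ
    refine ⟨v₀ - (c - b) / α, ?_⟩
    intro t ht
    have ht' : α < t := ht
    have hline' := hline t ht
    have key : c - b ≤ t * ((c - b) / α) := by
      rw [mul_div_assoc', le_div_iff₀ hα]
      nlinarith [hγ.2, hbc]
    have h1 : γ - β ≤ c - b := by
      have := hγ.2; have := hβ.1; linarith
    nlinarith
  -- Boundedness
  have hbdd : ∀ γ : ℝ, BddAbove {v : ℝ | ∀ t ∈ Set.Ioi α, γ + t * v ≤ f t} := by
    intro γ
    refine ⟨(f t₀ - γ) / t₀, ?_⟩
    intro v hv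
    have := hv t₀ (Set.mem_Ioi.mpr ht₀)
    rw [le_div_iff₀ ht₀pos]
    linarith
  -- Monotonicity
  have hmono : ∀ γ ∈ Set.Icc b c, ∀ γ' ∈ Set.Icc b c, γ ≤ γ' →
      sSup {v : ℝ | ∀ t ∈ Set.Ioi α, γ' + t * v ≤ f t} ≤
        sSup {v : ℝ | ∀ t ∈ Set.Ioi α, γ + t * v ≤ f t} := by
    intro γ hγ γ' hγ' hle
    refine csSup_le_csSup (hbdd γ) (hne γ' hγ') ?_
    intro v hv t ht
    have := hv t ht
    have ht' : α < t := ht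
    nlinarith
  -- shift bound
  have hshift : ∀ γ ∈ Set.Icc b c, ∀ γ' ∈ Set.Icc b c, γ ≤ γ' →
      sSup {v : ℝ | ∀ t ∈ Set.Ioi α, γ + t * v ≤ f t} ≤
        sSup {v : ℝ | ∀ t ∈ Set.Ioi α, γ' + t * v ≤ f t} + (γ' - γ) / α := by
    intro γ hγ γ' hγ' hle
    refine csSup_le (hne γ hγ) ?_
    intro v hv
    have hmem : v - (γ' - γ) / α ∈ {v : ℝ | ∀ t ∈ Set.Ioi α, γ' + t * v ≤ f t} := by
      intro t ht
      have hvt := hv t ht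
      have ht' : α < t := ht
      have key : γ' - γ ≤ t * ((γ' - γ) / α) := by
        rw [mul_div_assoc', le_div_iff₀ hα]
        nlinarith
      nlinarith
    have := le_csSup (hbdd γ') hmem
    linarith
  refine ⟨fun γ hγ => ⟨hne γ hγ, hbdd γ⟩, hmono, ?_⟩
  intro γ hγ γ' hγ'
  rcases le_total γ γ' with h | h
  · have h1 := hmono γ hγ γ' hγ' h
    have h2 := hshift γ hγ γ' hγ' h
    rw [abs_sub_comm γ γ', abs_of_nonneg (by linarith : (0:ℝ) ≤ γ' - γ)]
    rw [abs_le]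
    constructor
    · have : (0:ℝ) ≤ (γ' - γ) / α := div_nonneg (by linarith) hα.le
      linarith
    · linarith
  · have h1 := hmono γ' hγ' γ hγ h
    have h2 := hshift γ' hγ' γ hγ h
    rw [abs_of_nonneg (by linarith : (0:ℝ) ≤ γ - γ'), abs_le]
    constructor
    · have : (0:ℝ) ≤ (γ - γ') / α := div_nonneg (by linarith) hα.le
      linarith
    · linarith
end

section
/- Let α > 0, let [b,c] ⊆ [0,∞) be a closed interval, and let f : (α,∞) → ℝ be a convex function such that for every t ∈ (α,∞) and every subgradient v of f at t, the intercept f(t) − tv lies in [b,c]. For γ ∈ [b,c] define s(γ) = sup{v ∈ ℝ : γ + tv ≤ f(t) for all t ∈ (α,∞)}. Then for every t ∈ (α,∞), f(t) = sup over γ ∈ [b,c] of (γ + s(γ)·t). -/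
/-- with `s(γ) = sup{v : γ + tv ≤ f(t) for all t ∈ (α,∞)}`, one has
`f(t) = sup_{γ ∈ [b,c]} (γ + s(γ)·t)` for every `t ∈ (α,∞)`. -/
theorem stmt_14 (α : ℝ) (hα : 0 < α) (b c : ℝ) (hb : 0 ≤ b) (hbc : b ≤ c)
    (f : ℝ → ℝ) (hconv : ConvexOn ℝ (Set.Ioi α) f)
    (hint : ∀ t ∈ Set.Ioi α, ∀ v : ℝ,
      (∀ u ∈ Set.Ioi α, f t + v * (u - t) ≤ f u) →
      f t - t * v ∈ Set.Icc b c)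
    (t : ℝ) (ht : t ∈ Set.Ioi α) :
    f t = sSup ((fun γ : ℝ =>
      γ + sSup {v : ℝ | ∀ u ∈ Set.Ioi α, γ + u * v ≤ f u} * t) '' Set.Icc b c) := by
  have htα : α < t := ht
  have ht0 : 0 < t := hα.trans htα
  -- the set of right slopes at t
  set B : Set ℝ := (fun u => (f u - f t) / (u - t)) '' Set.Ioi t with hB
  have hBne : B.Nonempty := ⟨(f (t+1) - f t) / (t+1-t), ⟨t+1, by simp, rfl⟩⟩
  set x₀ : ℝ := (α + t) / 2 with hx₀
  have hx₀1 : α < x₀ := by rw [hx₀]; linarith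
  have hx₀2 : x₀ < t := by rw [hx₀]; linarith
  have hlb : ∀ v ∈ B, (f t - f x₀) / (t - x₀) ≤ v := by
    rintro v ⟨w, hw, rfl⟩
    exact hconv.slope_mono_adjacent (Set.mem_Ioi.mpr hx₀1)
      (Set.mem_Ioi.mpr (htα.trans hw)) hx₀2 hw
  have hBbd : BddBelow B := ⟨_, hlb⟩
  set v₀ : ℝ := sInf B with hv₀
  -- v₀ is a subgradient of f at t
  have hsub : ∀ u ∈ Set.Ioi α, f t + v₀ * (u - t) ≤ f u := by
    intro u hu
    rcases lt_trichotomy u t with h | h | h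
    · -- u < t
      have hs : (f t - f u) / (t - u) ≤ v₀ := by
        apply le_csInf hBne
        rintro w ⟨z, hz, rfl⟩
        exact hconv.slope_mono_adjacent hu (Set.mem_Ioi.mpr (htα.trans hz)) h hz
      have h1 : f t - f u ≤ v₀ * (t - u) := (div_le_iff₀ (by linarith)).mp hs
      have h2 : v₀ * (u - t) = -(v₀ * (t - u)) := by ring
      linarith
    · simp [h]
    · -- t < u
      have hs : v₀ ≤ (f u - f t) / (u - t) := csInf_le hBbd ⟨u, h, rfl⟩
      have h1 : v₀ * (u - t) ≤ f u - f t := (le_div_iff₀ (by linarith)).mp hs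
      linarith
  set γ₀ : ℝ := f t - t * v₀ with hγ₀def
  have hγ₀ : γ₀ ∈ Set.Icc b c := hint t ht v₀ hsub
  -- support line: f u ≥ γ₀ + u * v₀
  have hsupp : ∀ u ∈ Set.Ioi α, γ₀ + u * v₀ ≤ f u := by
    intro u hu
    have := hsub u hu
    have he : γ₀ + u * v₀ = f t + v₀ * (u - t) := by rw [hγ₀def]; ring
    linarith
  -- each S(γ), γ ∈ [b,c], is nonempty
  have hSne : ∀ γ ∈ Set.Icc b c, {v : ℝ | ∀ u ∈ Set.Ioi α, γ + u * v ≤ f u}.Nonempty := by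
    intro γ _
    refine ⟨v₀ - max 0 (γ - γ₀) / α, fun u hu => ?_⟩
    have hu' : α < u := hu
    have hm0 : 0 ≤ max 0 (γ - γ₀) := le_max_left _ _
    have hm1 : γ - γ₀ ≤ max 0 (γ - γ₀) := le_max_right _ _
    have key : max 0 (γ - γ₀) ≤ u * (max 0 (γ - γ₀) / α) := by
      rw [mul_div_assoc']
      rw [le_div_iff₀ hα]
      nlinarith
    have := hsupp u hu
    nlinarith
  -- each S(γ) is bounded above by (f t - γ)/t
  have hSub : ∀ γ : ℝ, ∀ v ∈ {v : ℝ | ∀ u ∈ Set.Ioi α, γ + u * v ≤ f u},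
      v ≤ (f t - γ) / t := by
    intro γ v hv
    have := hv t ht
    rw [le_div_iff₀ ht0]
    linarith [mul_comm t v]
  -- hence γ + s(γ)·t ≤ f t for γ ∈ [b,c]
  have hub : ∀ γ ∈ Set.Icc b c,
      γ + sSup {v : ℝ | ∀ u ∈ Set.Ioi α, γ + u * v ≤ f u} * t ≤ f t := by
    intro γ hγ
    have h1 : sSup {v : ℝ | ∀ u ∈ Set.Ioi α, γ + u * v ≤ f u} ≤ (f t - γ) / t :=
      csSup_le (hSne γ hγ) (hSub γ)
    have h2 : sSup {v : ℝ | ∀ u ∈ Set.Ioi α, γ + u * v ≤ f u} * t ≤ f t - γ :=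
      (le_div_iff₀ ht0).mp h1
    linarith
  -- the value at γ₀ equals f t
  have hmem : v₀ ∈ {v : ℝ | ∀ u ∈ Set.Ioi α, γ₀ + u * v ≤ f u} := fun u hu => hsupp u hu
  have hge : f t ≤ γ₀ + sSup {v : ℝ | ∀ u ∈ Set.Ioi α, γ₀ + u * v ≤ f u} * t := by
    have h1 : v₀ ≤ sSup {v : ℝ | ∀ u ∈ Set.Ioi α, γ₀ + u * v ≤ f u} :=
      le_csSup ⟨(f t - γ₀) / t, hSub γ₀⟩ hmem
    have h2 : v₀ * t ≤ sSup {v : ℝ | ∀ u ∈ Set.Ioi α, γ₀ + u * v ≤ f u} * t :=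
      mul_le_mul_of_nonneg_right h1 ht0.le
    have : γ₀ + v₀ * t = f t := by rw [hγ₀def]; ring
    linarith
  have heq : γ₀ + sSup {v : ℝ | ∀ u ∈ Set.Ioi α, γ₀ + u * v ≤ f u} * t = f t :=
    le_antisymm (hub γ₀ hγ₀) hge
  -- conclude
  apply le_antisymm
  · apply le_csSup
    · exact ⟨f t, by rintro _ ⟨γ, hγ, rfl⟩; exact hub γ hγ⟩
    · exact ⟨γ₀, hγ₀, heq⟩
  · exact csSup_le ⟨_, ⟨γ₀, hγ₀, rfl⟩⟩ (by rintro _ ⟨γ, hγ, rfl⟩; exact hub γ hγ)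
end
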